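/- arXiv:2306.14533 — 10 statements merged into one kernel-verified Lean document; each statement's English description precedes it below -/
import Mathlib

section
/- Let M be a compact metric space, λ a finite Borel measure on M, and p ∈ (1, ∞) with Hölder conjugate p* (1/p + 1/p* = 1). Let f, a, b : M → ℝ be continuous with f(x) > 0 for all x. For positive continuous functions u, v define D(u, v) = p∫_M v dλ + p*∫_M u dλ − p·p*·∫_M u^{1/p} v^{1/p*} dλ. Then the map (s, t) ↦ D(f + s·a, f + t·b) is twice continuously differentiable on a neighborhood of (0,0), and −∂_s ∂_t D(f + s·a, f + t·b)|_{s=t=0} = ∫_M (a·b / f) dλ. -/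
open MeasureTheory


section curve
variable {M : Type*} [TopologicalSpace M] [CompactSpace M]

/-- Truncated power curve into `C(M,ℝ)`. -/
noncomputable def phiC (c d : C(M, ℝ)) {h : ℝ} (hh : 0 < h) (r s : ℝ) : C(M, ℝ) :=
  ⟨fun x => (max h (c x + s * d x)) ^ r, by
    refine Continuous.rpow_const
      (continuous_const.max (c.continuous.add (continuous_const.mul d.continuous)))
      fun x => Or.inl ?_
    exact ne_of_gt (lt_of_lt_of_le hh (le_max_left _ _))⟩

theorem phiC_apply {c d : C(M, ℝ)} {h : ℝ} (hh : 0 < h) (r s : ℝ) (x : M)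
    (hx : h ≤ c x + s * d x) :
    phiC c d hh r s x = (c x + s * d x) ^ r := by
  simp only [phiC, ContinuousMap.coe_mk]
  rw [max_eq_right hx]

theorem phiC_hasDerivAt (c d : C(M, ℝ)) {m ε h : ℝ} (hm : 0 < m) (hh : 0 < h) (hhm : h ≤ m) (hε : 0 < ε) (R : ℝ)
    (hlow : ∀ (x : M) (s : ℝ), |s| ≤ ε → m ≤ c x + s * d x)
    (hhigh : ∀ (x : M) (s : ℝ), |s| ≤ ε → c x + s * d x ≤ R)
    (r : ℝ) {s : ℝ} (hs : |s| < ε) :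
    HasDerivAt (phiC c d hh r)
      (r • (d * phiC c d hh (r - 1) s)) s := by
  have hsle : |s| ≤ ε := hs.le
  have hsI : s ∈ Set.Icc (-ε) ε := by
    rcases abs_le.mp hsle with ⟨h1, h2⟩; exact ⟨h1, h2⟩
  set P : ℝ → ℝ := fun e => max (m ^ e) (R ^ e) with hP
  have hPnn : ∀ e, 0 ≤ P e := fun e =>
    le_trans (Real.rpow_nonneg hm.le _) (le_max_left _ _)
  have hPle : ∀ z e : ℝ, m ≤ z → z ≤ R → z ^ e ≤ P e := by
    intro z e h1 h2
    rcases le_or_gt 0 e with he | he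
    · exact le_max_of_le_right (Real.rpow_le_rpow (hm.le.trans h1) h2 he)
    · exact le_max_of_le_left (Real.rpow_le_rpow_of_nonpos hm h1 he.le)
  have hPabs : ∀ z e : ℝ, m ≤ z → z ≤ R → |z ^ e| ≤ P e := by
    intro z e h1 h2
    rw [abs_of_nonneg (Real.rpow_nonneg (hm.le.trans h1) _)]
    exact hPle z e h1 h2
  set K : ℝ := |r| * |r - 1| * P (r - 2) * ‖d‖ ^ 2 with hKdef
  have hKnn : 0 ≤ K := by
    have := hPnn (r - 2); positivity
  -- pointwise estimate
  have key : ∀ s' : ℝ, |s'| ≤ ε → ∀ x : M,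
      |(c x + s' * d x) ^ r - (c x + s * d x) ^ r
        - (s' - s) * (r * (c x + s * d x) ^ (r - 1) * d x)| ≤ K * (s' - s) ^ 2 := by
    intro s' hs' x
    set y := c x with hy
    set dd := d x with hdd
    have hddle : |dd| ≤ ‖d‖ := by
      have := d.norm_coe_le_norm x
      simpa [Real.norm_eq_abs] using this
    set g : ℝ → ℝ := fun t => (y + t * dd) ^ r with hg
    set g' : ℝ → ℝ := fun t => r * (y + t * dd) ^ (r - 1) * dd with hg'
    have hbase : ∀ t ∈ Set.Icc (-ε) ε, m ≤ y + t * dd ∧ y + t * dd ≤ R := by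
      intro t ht
      have habs : |t| ≤ ε := abs_le.mpr ⟨ht.1, ht.2⟩
      exact ⟨hlow x t habs, hhigh x t habs⟩
    have haff : ∀ t : ℝ, HasDerivAt (fun t : ℝ => y + t * dd) dd t := by
      intro t; simpa using (hasDerivAt_mul_const dd).const_add y
    have hder : ∀ t ∈ Set.Icc (-ε) ε, HasDerivAt g (g' t) t := by
      intro t ht
      have hne : y + t * dd ≠ 0 := ne_of_gt (lt_of_lt_of_le hm (hbase t ht).1)
      have := (haff t).rpow_const (p := r) (Or.inl hne)
      simpa [hg, hg', mul_comm, mul_assoc, mul_left_comm] using this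
    have hder' : ∀ t ∈ Set.Icc (-ε) ε,
        HasDerivAt g' (r * ((r - 1) * (y + t * dd) ^ (r - 2) * dd) * dd) t := by
      intro t ht
      have hne : y + t * dd ≠ 0 := ne_of_gt (lt_of_lt_of_le hm (hbase t ht).1)
      have hA := (haff t).rpow_const (p := r - 1) (Or.inl hne)
      have h2 := (hA.const_mul r).mul_const dd
      have e : r * ((r - 1) * (y + t * dd) ^ (r - 2) * dd) * dd
          = r * (dd * (r - 1) * (y + t * dd) ^ (r - 1 - 1)) * dd := by
        rw [show r - 1 - 1 = r - 2 by ring]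
        ring
      rw [e]; exact h2
    have hbound2 : ∀ t ∈ Set.Icc (-ε) ε,
        |r * ((r - 1) * (y + t * dd) ^ (r - 2) * dd) * dd| ≤ K := by
      intro t ht
      have h1 : |(y + t * dd) ^ (r - 2)| ≤ P (r - 2) :=
        hPabs _ _ (hbase t ht).1 (hbase t ht).2
      calc |r * ((r - 1) * (y + t * dd) ^ (r - 2) * dd) * dd|
          = |r| * (|r - 1| * |(y + t * dd) ^ (r - 2)| * |dd|) * |dd| := by
            simp only [abs_mul]
        _ ≤ |r| * (|r - 1| * P (r - 2) * ‖d‖) * ‖d‖ := by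
            gcongr
        _ = K := by rw [hKdef]; ring
    have hlip : ∀ t ∈ Set.Icc (-ε) ε, |g' t - g' s| ≤ K * |t - s| := by
      intro t ht
      have := (convex_Icc (-ε) ε).norm_image_sub_le_of_norm_hasDerivWithin_le
        (f' := fun t => r * ((r - 1) * (y + t * dd) ^ (r - 2) * dd) * dd)
        (fun u hu => (hder' u hu).hasDerivWithinAt)
        (fun u hu => by rw [Real.norm_eq_abs]; exact hbound2 u hu) hsI ht
      simpa only [Real.norm_eq_abs] using this
    have hs'I : s' ∈ Set.Icc (-ε) ε := by
      rcases abs_le.mp hs' with ⟨h1, h2⟩; exact ⟨h1, h2⟩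
    have huIcc : Set.uIcc s s' ⊆ Set.Icc (-ε) ε := Set.uIcc_subset_Icc hsI hs'I
    have habst : ∀ t ∈ Set.uIcc s s', |t - s| ≤ |s' - s| := by
      intro t ht
      rcases le_total s s' with h | h
      · rw [Set.uIcc_of_le h] at ht
        rw [abs_of_nonneg (by linarith [ht.1]), abs_of_nonneg (by linarith)]
        linarith [ht.2]
      · rw [Set.uIcc_of_ge h] at ht
        rw [abs_of_nonpos (by linarith [ht.2]), abs_of_nonpos (by linarith)]
        linarith [ht.1]
    set G : ℝ → ℝ := fun t => g t - t * g' s with hG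
    have hGder : ∀ t ∈ Set.uIcc s s',
        HasDerivWithinAt G (g' t - g' s) (Set.uIcc s s') t := by
      intro t ht
      exact ((hder t (huIcc ht)).sub (hasDerivAt_mul_const (g' s))).hasDerivWithinAt
    have hGbound : ∀ t ∈ Set.uIcc s s', ‖g' t - g' s‖ ≤ K * |s' - s| := by
      intro t ht
      rw [Real.norm_eq_abs]
      calc |g' t - g' s| ≤ K * |t - s| := hlip t (huIcc ht)
        _ ≤ K * |s' - s| := mul_le_mul_of_nonneg_left (habst t ht) hKnn
    have hmain := (convex_uIcc s s').norm_image_sub_le_of_norm_hasDerivWithin_le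
      hGder hGbound Set.left_mem_uIcc Set.right_mem_uIcc
    have hGe : G s' - G s = g s' - g s - (s' - s) * g' s := by
      simp only [hG]; ring
    rw [Real.norm_eq_abs, Real.norm_eq_abs, hGe] at hmain
    calc |g s' - g s - (s' - s) * g' s| ≤ K * |s' - s| * |s' - s| := hmain
      _ = K * (s' - s) ^ 2 := by rw [mul_assoc, ← abs_mul, abs_mul_self]; ring
  -- sup-norm estimate
  have normbd : ∀ s' : ℝ, |s'| ≤ ε →
      ‖phiC c d hh r s' - phiC c d hh r s
        - (s' - s) • (r • (d * phiC c d hh (r - 1) s))‖ ≤ K * (s' - s) ^ 2 := by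
    intro s' hs'
    rw [ContinuousMap.norm_le _ (by positivity)]
    intro x
    have hx := key s' hs' x
    have e1 : phiC c d hh r s' x = (c x + s' * d x) ^ r :=
      phiC_apply _ _ _ _ (le_trans hhm (hlow x s' hs'))
    have e2 : phiC c d hh r s x = (c x + s * d x) ^ r :=
      phiC_apply _ _ _ _ (le_trans hhm (hlow x s hsle))
    have e3 : phiC c d hh (r - 1) s x = (c x + s * d x) ^ (r - 1) :=
      phiC_apply _ _ _ _ (le_trans hhm (hlow x s hsle))
    simp only [ContinuousMap.sub_apply, ContinuousMap.smul_apply, ContinuousMap.mul_apply,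
      smul_eq_mul, e1, e2, e3, Real.norm_eq_abs]
    calc |(c x + s' * d x) ^ r - (c x + s * d x) ^ r
          - (s' - s) * (r * (d x * (c x + s * d x) ^ (r - 1)))|
        = |(c x + s' * d x) ^ r - (c x + s * d x) ^ r
          - (s' - s) * (r * (c x + s * d x) ^ (r - 1) * d x)| := by ring_nf
      _ ≤ K * (s' - s) ^ 2 := hx
  -- conclude HasDerivAt
  rw [hasDerivAt_iff_isLittleO]
  rw [Asymptotics.isLittleO_iff]
  intro C hC
  have hδ : 0 < min (ε - |s|) (C / (K + 1)) := by
    have : 0 < ε - |s| := by linarith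
    positivity
  filter_upwards [Metric.ball_mem_nhds s hδ] with s' hs'
  rw [Metric.mem_ball, Real.dist_eq] at hs'
  have h1 : |s' - s| < ε - |s| := lt_of_lt_of_le hs' (min_le_left _ _)
  have h2 : |s' - s| ≤ C / (K + 1) := (lt_of_lt_of_le hs' (min_le_right _ _)).le
  have h3 : |s'| ≤ ε := by
    have := abs_sub_abs_le_abs_sub s' s
    linarith
  have h4 := normbd s' h3
  rw [Real.norm_eq_abs]
  calc ‖phiC c d hh r s' - phiC c d hh r s
        - (s' - s) • (r • (d * phiC c d hh (r - 1) s))‖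
      ≤ K * (s' - s) ^ 2 := h4
    _ ≤ C * |s' - s| := by
        have hsq : (s' - s) ^ 2 = |s' - s| * |s' - s| := by
          rw [← abs_mul, abs_mul_self]; ring
        rw [hsq, ← mul_assoc]
        have h5 : |s' - s| * (K + 1) ≤ C := (le_div_iff₀ (by positivity)).mp h2
        have hKC : K * |s' - s| ≤ C := by nlinarith [abs_nonneg (s' - s)]
        exact mul_le_mul_of_nonneg_right hKC (abs_nonneg _)


theorem phiC_contDiffOn (c d : C(M, ℝ)) {m ε h : ℝ} (hm : 0 < m) (hh : 0 < h) (hhm : h ≤ m) (hε : 0 < ε) (R : ℝ)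
    (hlow : ∀ (x : M) (s : ℝ), |s| ≤ ε → m ≤ c x + s * d x)
    (hhigh : ∀ (x : M) (s : ℝ), |s| ≤ ε → c x + s * d x ≤ R)
    (n : ℕ) (r : ℝ) :
    ContDiffOn ℝ n (phiC c d hh r) (Metric.ball (0 : ℝ) ε) := by
  have hmem : ∀ s : ℝ, s ∈ Metric.ball (0 : ℝ) ε → |s| < ε := by
    intro s hs
    simpa [Real.dist_eq] using Metric.mem_ball.mp hs
  induction n generalizing r with
  | zero =>
    rw [Nat.cast_zero, contDiffOn_zero]
    intro s hs
    exact ((phiC_hasDerivAt c d hm hh hhm hε R hlow hhigh r (hmem s hs)).continuousAt).continuousWithinAt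
  | succ n ih =>
    rw [show ((n + 1 : ℕ) : WithTop ℕ∞) = (n : ℕ) + 1 by norm_cast,
      contDiffOn_succ_iff_deriv_of_isOpen Metric.isOpen_ball]
    refine ⟨fun s hs => (phiC_hasDerivAt c d hm hh hhm hε R hlow hhigh r
      (hmem s hs)).differentiableAt.differentiableWithinAt, ?_, ?_⟩
    · intro h; exact absurd h (by simp)
    · have hc : ContDiffOn ℝ n
          (fun s => (r • ContinuousLinearMap.mul ℝ C(M, ℝ) d) (phiC c d hh (r - 1) s))
          (Metric.ball (0 : ℝ) ε) :=
        (r • ContinuousLinearMap.mul ℝ C(M, ℝ) d).contDiff.comp_contDiffOn (ih (r - 1))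
      refine hc.congr ?_
      intro s hs
      rw [(phiC_hasDerivAt c d hm hh hhm hε R hlow hhigh r (hmem s hs)).deriv]
      simp [ContinuousLinearMap.smul_apply, ContinuousLinearMap.mul_apply']



end curve

section integral
open MeasureTheory
variable {M : Type*} [MetricSpace M] [CompactSpace M] [MeasurableSpace M] [BorelSpace M]

theorem cont_integrable (lam : Measure M) [IsFiniteMeasure lam] {g : M → ℝ} (hg : Continuous g) :
    Integrable g lam :=
  hg.integrable_of_hasCompactSupport (HasCompactSupport.of_compactSpace g)

/-- Integration as a continuous linear functional on `C(M,ℝ)`. -/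
noncomputable def intCLM (lam : Measure M) [IsFiniteMeasure lam] : C(M, ℝ) →L[ℝ] ℝ :=
  LinearMap.mkContinuous
    { toFun := fun u => ∫ x, u x ∂lam
      map_add' := fun u v =>
        integral_add (cont_integrable lam u.continuous) (cont_integrable lam v.continuous)
      map_smul' := fun c u => by
        simpa using integral_smul c (fun x => u x) }
    (lam Set.univ).toReal (fun u => by
      rw [mul_comm]
      exact norm_integral_le_of_norm_le_const
        (Filter.Eventually.of_forall fun x => u.norm_coe_le_norm x))

theorem intCLM_apply (lam : Measure M) [IsFiniteMeasure lam] (u : C(M, ℝ)) :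
    intCLM lam u = ∫ x, u x ∂lam := rfl

end integral

/-- The negative mixed second derivative of the α-divergence
`D(u,v) = p∫v + q∫u − p·q·∫ u^{1/p} v^{1/q} dλ` along the diagonal at a positive
continuous density `f` equals the Fisher–Rao metric `∫ a·b/f dλ`. -/
theorem stmt_1 {M : Type*} [MetricSpace M] [CompactSpace M] [MeasurableSpace M] [BorelSpace M]
    (lam : Measure M) [IsFiniteMeasure lam]
    (p q : ℝ) (hp : 1 < p) (hpq : 1 / p + 1 / q = 1)
    (f a b : M → ℝ) (hf : Continuous f) (ha : Continuous a) (hb : Continuous b)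
    (hfpos : ∀ x, 0 < f x) :
    (∃ U ∈ nhds ((0 : ℝ), (0 : ℝ)), ContDiffOn ℝ 2
        (fun st : ℝ × ℝ =>
          p * ∫ x, (f x + st.2 * b x) ∂lam + q * ∫ x, (f x + st.1 * a x) ∂lam
            - p * q * ∫ x, (f x + st.1 * a x) ^ (1 / p) * (f x + st.2 * b x) ^ (1 / q) ∂lam)
        U) ∧
    - deriv (fun s => deriv (fun t =>
          p * ∫ x, (f x + t * b x) ∂lam + q * ∫ x, (f x + s * a x) ∂lam
            - p * q * ∫ x, (f x + s * a x) ^ (1 / p) * (f x + t * b x) ^ (1 / q) ∂lam) 0) 0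
      = ∫ x, a x * b x / f x ∂lam := by
  classical
  have hp0 : (0 : ℝ) < p := by linarith
  have h1q : (0 : ℝ) < 1 / q := by
    have h1 : 1 / p < 1 := by rw [div_lt_one hp0]; exact hp
    linarith
  have hq0 : (0 : ℝ) < q := one_div_pos.mp h1q
  set fc : C(M, ℝ) := ⟨f, hf⟩ with hfcdef
  set ac : C(M, ℝ) := ⟨a, ha⟩ with hacdef
  set bc : C(M, ℝ) := ⟨b, hb⟩ with hbcdef
  obtain ⟨m, hm, hmf⟩ : ∃ m : ℝ, 0 < m ∧ ∀ x, m ≤ f x := by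
    rcases isEmpty_or_nonempty M with hM | hM
    · exact ⟨1, one_pos, fun x => (IsEmpty.false x).elim⟩
    · haveI := hM
      obtain ⟨x₀, hx₀⟩ := hf.exists_forall_le (by rw [Filter.cocompact_eq_bot]; exact Filter.tendsto_bot)
      exact ⟨f x₀, hfpos x₀, fun x => hx₀ x⟩
  have hm2 : (0 : ℝ) < m / 2 := half_pos hm
  set Dn : ℝ := ‖ac‖ + ‖bc‖ + 1 with hDndef
  have hDn0 : 0 < Dn := by positivity
  set ε : ℝ := m / (2 * Dn) with hεdef
  have hε : 0 < ε := by positivity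
  set R : ℝ := ‖fc‖ + m with hRdef
  have hgen : ∀ dc : C(M, ℝ), ‖dc‖ ≤ Dn →
      (∀ (x : M) (s : ℝ), |s| ≤ ε → m / 2 ≤ f x + s * dc x) ∧
      (∀ (x : M) (s : ℝ), |s| ≤ ε → f x + s * dc x ≤ R) := by
    intro dc hdc
    have habs : ∀ (x : M) (s : ℝ), |s| ≤ ε → |s * dc x| ≤ m / 2 := by
      intro x s hs
      calc |s * dc x| = |s| * |dc x| := abs_mul _ _
        _ ≤ ε * Dn := by
            refine mul_le_mul hs (le_trans ?_ hdc) (abs_nonneg _) hε.le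
            simpa [Real.norm_eq_abs] using dc.norm_coe_le_norm x
        _ = m / 2 := by rw [hεdef]; field_simp
    constructor <;> intro x s hs <;> rcases abs_le.mp (habs x s hs) with ⟨h1, h2⟩
    · linarith [hmf x]
    · have hfx : f x ≤ ‖fc‖ := le_trans (le_abs_self _)
        (by have := fc.norm_coe_le_norm x; rw [Real.norm_eq_abs] at this; exact this)
      rw [hRdef]; linarith
  have hacn : ‖ac‖ ≤ Dn := by rw [hDndef]; linarith [norm_nonneg bc]
  have hbcn : ‖bc‖ ≤ Dn := by rw [hDndef]; linarith [norm_nonneg ac]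
  have hlowA := (hgen ac hacn).1
  have hhighA := (hgen ac hacn).2
  have hlowB := (hgen bc hbcn).1
  have hhighB := (hgen bc hbcn).2
  have h0ε : |(0 : ℝ)| < ε := by simpa using hε
  -- evaluation of the truncated power curves
  have hPA : ∀ (r s : ℝ), |s| ≤ ε → ∀ x : M,
      phiC fc ac hm2 r s x = (f x + s * a x) ^ r := by
    intro r s hs x
    exact phiC_apply hm2 r s x (le_trans (by linarith) (hlowA x s hs))
  have hPB : ∀ (r s : ℝ), |s| ≤ ε → ∀ x : M,
      phiC fc bc hm2 r s x = (f x + s * b x) ^ r := by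
    intro r s hs x
    exact phiC_apply hm2 r s x (le_trans (by linarith) (hlowB x s hs))
  -- integrals
  have intf := cont_integrable lam hf
  have hsplit : ∀ (g : M → ℝ), Continuous g → ∀ t : ℝ,
      ∫ x, (f x + t * g x) ∂lam = (∫ x, f x ∂lam) + t * ∫ x, g x ∂lam := by
    intro g hg t
    rw [integral_add intf ((cont_integrable lam hg).const_mul t), integral_const_mul]
  have hprod : ∀ s t : ℝ, |s| ≤ ε → |t| ≤ ε →
      ∫ x, (f x + s * a x) ^ (1 / p) * (f x + t * b x) ^ (1 / q) ∂lam
        = intCLM lam (phiC fc ac hm2 (1 / p) s * phiC fc bc hm2 (1 / q) t) := by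
    intro s t hs ht
    rw [intCLM_apply]
    refine integral_congr_ae (Filter.Eventually.of_forall fun x => ?_)
    rw [ContinuousMap.mul_apply, hPA (1 / p) s hs x, hPB (1 / q) t ht x]
  set Cf : ℝ := ∫ x, f x ∂lam with hCf
  set Ca : ℝ := ∫ x, a x ∂lam with hCa
  set Cb : ℝ := ∫ x, b x ∂lam with hCb
  constructor
  · -- C² part
    refine ⟨Metric.ball 0 ε ×ˢ Metric.ball 0 ε,
      prod_mem_nhds (Metric.ball_mem_nhds _ hε) (Metric.ball_mem_nhds _ hε), ?_⟩
    have h2A : ContDiffOn ℝ 2 (phiC fc ac hm2 (1 / p)) (Metric.ball (0 : ℝ) ε) := by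
      exact_mod_cast phiC_contDiffOn fc ac hm2 hm2 le_rfl hε R hlowA hhighA 2 (1 / p)
    have h2B : ContDiffOn ℝ 2 (phiC fc bc hm2 (1 / q)) (Metric.ball (0 : ℝ) ε) := by
      exact_mod_cast phiC_contDiffOn fc bc hm2 hm2 le_rfl hε R hlowB hhighB 2 (1 / q)
    have hcomp1 : ContDiffOn ℝ 2 (fun st : ℝ × ℝ => phiC fc ac hm2 (1 / p) st.1)
        (Metric.ball 0 ε ×ˢ Metric.ball 0 ε) :=
      h2A.comp contDiff_fst.contDiffOn (fun st hst => hst.1)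
    have hcomp2 : ContDiffOn ℝ 2 (fun st : ℝ × ℝ => phiC fc bc hm2 (1 / q) st.2)
        (Metric.ball 0 ε ×ˢ Metric.ball 0 ε) :=
      h2B.comp contDiff_snd.contDiffOn (fun st hst => hst.2)
    have hI : ContDiffOn ℝ 2 (fun st : ℝ × ℝ =>
        p * q * intCLM lam (phiC fc ac hm2 (1 / p) st.1 * phiC fc bc hm2 (1 / q) st.2))
        (Metric.ball 0 ε ×ˢ Metric.ball 0 ε) :=
      contDiffOn_const.mul ((intCLM lam).contDiff.comp_contDiffOn (hcomp1.mul hcomp2))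
    have hpoly : ContDiff ℝ 2 (fun st : ℝ × ℝ => p * (Cf + st.2 * Cb) + q * (Cf + st.1 * Ca)) :=
      (contDiff_const.mul (contDiff_const.add (contDiff_snd.mul contDiff_const))).add
        (contDiff_const.mul (contDiff_const.add (contDiff_fst.mul contDiff_const)))
    refine (hpoly.contDiffOn.sub hI).congr ?_
    intro st hst
    have hs1 : |st.1| ≤ ε := by
      simpa [Real.dist_eq] using (Metric.mem_ball.mp hst.1).le
    have hs2 : |st.2| ≤ ε := by
      simpa [Real.dist_eq] using (Metric.mem_ball.mp hst.2).le
    rw [hsplit b hb st.2, hsplit a ha st.1, hprod st.1 st.2 hs1 hs2]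
  · -- mixed derivative part
    set W : C(M, ℝ) := (1 / q) • (bc * phiC fc bc hm2 (1 / q - 1) 0) with hWdef
    set V : C(M, ℝ) := (1 / p) • (ac * phiC fc ac hm2 (1 / p - 1) 0) with hVdef
    set L2 : C(M, ℝ) →L[ℝ] ℝ :=
      (p * q) • ((intCLM lam).comp (ContinuousLinearMap.mul ℝ C(M, ℝ) W)) with hL2def
    have hL2ap : ∀ u : C(M, ℝ), L2 u = p * q * intCLM lam (W * u) := by
      intro u
      simp [hL2def, ContinuousLinearMap.mul_apply', smul_eq_mul]
    have hΨ0 : HasDerivAt (phiC fc bc hm2 (1 / q))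
        ((1 / q) • (bc * phiC fc bc hm2 (1 / q - 1) 0)) 0 :=
      phiC_hasDerivAt fc bc hm2 hm2 le_rfl hε R hlowB hhighB (1 / q) h0ε
    have hΦ0 : HasDerivAt (phiC fc ac hm2 (1 / p))
        ((1 / p) • (ac * phiC fc ac hm2 (1 / p - 1) 0)) 0 :=
      phiC_hasDerivAt fc ac hm2 hm2 le_rfl hε R hlowA hhighA (1 / p) h0ε
    have inner_eq : ∀ s : ℝ, |s| < ε →
        deriv (fun t =>
          p * ∫ x, (f x + t * b x) ∂lam + q * ∫ x, (f x + s * a x) ∂lam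
            - p * q * ∫ x, (f x + s * a x) ^ (1 / p) * (f x + t * b x) ^ (1 / q) ∂lam) 0
          = p * Cb - p * q * intCLM lam (phiC fc ac hm2 (1 / p) s * W) := by
      intro s hs
      set L : C(M, ℝ) →L[ℝ] ℝ :=
        (p * q) • ((intCLM lam).comp
          (ContinuousLinearMap.mul ℝ C(M, ℝ) (phiC fc ac hm2 (1 / p) s))) with hLdef
      have hLap : ∀ u : C(M, ℝ),
          L u = p * q * intCLM lam (phiC fc ac hm2 (1 / p) s * u) := by
        intro u
        simp [hLdef, ContinuousLinearMap.mul_apply', smul_eq_mul]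
      have heq : (fun t =>
            p * ∫ x, (f x + t * b x) ∂lam + q * ∫ x, (f x + s * a x) ∂lam
              - p * q * ∫ x, (f x + s * a x) ^ (1 / p) * (f x + t * b x) ^ (1 / q) ∂lam)
          =ᶠ[nhds (0 : ℝ)] (fun t =>
            p * (Cf + t * Cb) + q * ∫ x, (f x + s * a x) ∂lam
              - L (phiC fc bc hm2 (1 / q) t)) := by
        filter_upwards [Metric.ball_mem_nhds (0 : ℝ) hε] with t ht
        have ht' : |t| ≤ ε := by simpa [Real.dist_eq] using (Metric.mem_ball.mp ht).le
        rw [hsplit b hb t, hprod s t hs.le ht', hLap]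
      rw [heq.deriv_eq]
      have hlin : HasDerivAt (fun t : ℝ =>
          p * (Cf + t * Cb) + q * ∫ x, (f x + s * a x) ∂lam) (p * Cb) 0 := by
        have h1 : HasDerivAt (fun t : ℝ => p * (Cf + t * Cb)) (p * Cb) 0 :=
          ((hasDerivAt_mul_const Cb).const_add Cf).const_mul p
        simpa using h1.add_const (q * ∫ x, (f x + s * a x) ∂lam)
      have hcompose : HasDerivAt (fun t => L (phiC fc bc hm2 (1 / q) t)) (L W) 0 :=
        L.hasFDerivAt.comp_hasDerivAt 0 hΨ0
      rw [HasDerivAt.deriv (f := fun t => p * (Cf + t * Cb) + q * ∫ x, (f x + s * a x) ∂lam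
        - L (phiC fc bc hm2 (1 / q) t)) (hlin.sub hcompose), hLap]
    have houter : (fun s => deriv (fun t =>
          p * ∫ x, (f x + t * b x) ∂lam + q * ∫ x, (f x + s * a x) ∂lam
            - p * q * ∫ x, (f x + s * a x) ^ (1 / p) * (f x + t * b x) ^ (1 / q) ∂lam) 0)
        =ᶠ[nhds (0 : ℝ)] (fun s => p * Cb - L2 (phiC fc ac hm2 (1 / p) s)) := by
      filter_upwards [Metric.ball_mem_nhds (0 : ℝ) hε] with s hs
      have hs' : |s| < ε := by simpa [Real.dist_eq] using Metric.mem_ball.mp hs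
      rw [inner_eq s hs', hL2ap, mul_comm W (phiC fc ac hm2 (1 / p) s)]
    have houterDeriv : HasDerivAt (fun s => p * Cb - L2 (phiC fc ac hm2 (1 / p) s))
        (0 - L2 V) 0 :=
      (hasDerivAt_const 0 (p * Cb)).sub (L2.hasFDerivAt.comp_hasDerivAt 0 hΦ0)
    rw [houter.deriv_eq, houterDeriv.deriv]
    rw [zero_sub, neg_neg, hL2ap, intCLM_apply, ← integral_const_mul]
    refine integral_congr_ae (Filter.Eventually.of_forall fun x => ?_)
    have hWx : W x = 1 / q * (b x * f x ^ (1 / q - 1)) := by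
      rw [hWdef]
      simp only [ContinuousMap.smul_apply, ContinuousMap.mul_apply, smul_eq_mul]
      rw [hPB (1 / q - 1) 0 h0ε.le x, show bc x = b x from rfl]
      norm_num
    have hVx : V x = 1 / p * (a x * f x ^ (1 / p - 1)) := by
      rw [hVdef]
      simp only [ContinuousMap.smul_apply, ContinuousMap.mul_apply, smul_eq_mul]
      rw [hPA (1 / p - 1) 0 h0ε.le x, show ac x = a x from rfl]
      norm_num
    show p * q * (W * V) x = a x * b x / f x
    rw [ContinuousMap.mul_apply, hWx, hVx]
    have hfe : f x ^ (1 / q - 1) * f x ^ (1 / p - 1) = (f x)⁻¹ := by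
      rw [← Real.rpow_add (hfpos x), show 1 / q - 1 + (1 / p - 1) = -1 by linarith,
        Real.rpow_neg_one]
    calc p * q * (1 / q * (b x * f x ^ (1 / q - 1)) * (1 / p * (a x * f x ^ (1 / p - 1))))
        = (p * (1 / p)) * (q * (1 / q)) * (a x * b x)
            * (f x ^ (1 / q - 1) * f x ^ (1 / p - 1)) := by ring
      _ = a x * b x * (f x)⁻¹ := by
          rw [hfe, mul_one_div, div_self hp0.ne', mul_one_div, div_self hq0.ne']; ring
      _ = a x * b x / f x := (div_eq_mul_inv _ _).symm
end

section
/- Let M be a compact metric space, λ a finite Borel measure on M, and p ∈ (1, ∞). Let f : [0,1] × M → (0, ∞) be continuous with continuous partial derivative ∂_t f. Then the curve c(t) := f(t, ·)^{1/p}, regarded as a curve in the Banach space L^p(λ), is continuously differentiable with derivative c′(t) = (1/p)·∂_t f(t, ·)·f(t, ·)^{1/p − 1}, and for every t ∈ [0,1] one has ‖c′(t)‖_{L^p(λ)} = (1/p)·F_p(f(t,·), ∂_t f(t,·)), where F_p(f, a) := (∫_M |a(x)/f(x)|^p f(x) dλ(x))^{1/p}. -/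
open MeasureTheory

/-- The `L^p`-Fisher–Rao metric `F_p(f, a) = (∫ |a/f|^p f dλ)^{1/p}`. -/
noncomputable def Fp {M : Type*} [MeasurableSpace M] (lam : Measure M) (p : ℝ)
    (f a : M → ℝ) : ℝ :=
  (∫ x, |a x / f x| ^ p * f x ∂lam) ^ (1 / p)

/-- The `p`-root transform is an isometric embedding (infinitesimal form): for a `C¹` path
of positive densities `t ↦ f(t,·)`, the curve `c(t) = f(t,·)^{1/p}` in `L^p(λ)` is
continuously differentiable with derivative `c′(t) = (1/p)·∂_t f·f^{1/p−1}`, and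
`‖c′(t)‖_{L^p} = (1/p)·F_p(f(t,·), ∂_t f(t,·))`. -/
theorem stmt_3 {M : Type*} [MetricSpace M] [CompactSpace M] [MeasurableSpace M] [BorelSpace M]
    (lam : Measure M) [IsFiniteMeasure lam]
    (p : ℝ) (hp : 1 < p) [Fact (1 ≤ ENNReal.ofReal p)]
    (f f' : ℝ → M → ℝ)
    (hf_cont : ContinuousOn (fun q : ℝ × M => f q.1 q.2) (Set.Icc 0 1 ×ˢ Set.univ))
    (hf_pos : ∀ t ∈ Set.Icc (0 : ℝ) 1, ∀ x, 0 < f t x)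
    (hf'_cont : ContinuousOn (fun q : ℝ × M => f' q.1 q.2) (Set.Icc 0 1 ×ˢ Set.univ))
    (hf_deriv : ∀ x, ∀ t ∈ Set.Icc (0 : ℝ) 1,
      HasDerivWithinAt (fun s => f s x) (f' t x) (Set.Icc 0 1) t) :
    ∃ c c' : ℝ → Lp ℝ (ENNReal.ofReal p) lam,
      (∀ t ∈ Set.Icc (0 : ℝ) 1, ⇑(c t) =ᵐ[lam] fun x => f t x ^ (1 / p)) ∧
      (∀ t ∈ Set.Icc (0 : ℝ) 1,
        ⇑(c' t) =ᵐ[lam] fun x => (1 / p) * f' t x * f t x ^ (1 / p - 1)) ∧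
      (∀ t ∈ Set.Icc (0 : ℝ) 1, HasDerivWithinAt c (c' t) (Set.Icc 0 1) t) ∧
      ContinuousOn c' (Set.Icc 0 1) ∧
      (∀ t ∈ Set.Icc (0 : ℝ) 1, ‖c' t‖ = (1 / p) * Fp lam p (f t) (f' t)) := by
  have hp0 : (0:ℝ) < p := lt_trans one_pos hp
  set I := Set.Icc (0:ℝ) 1 with hI
  set τ : ℝ → ℝ := fun t => (Set.projIcc (0:ℝ) 1 zero_le_one t : ℝ) with hτdef
  have hτ : ∀ t, τ t ∈ I := fun t => (Set.projIcc (0:ℝ) 1 zero_le_one t).2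
  have hτeq : ∀ t ∈ I, τ t = t := by
    intro t ht
    simp [hτdef, Set.projIcc_of_mem zero_le_one ht]
  -- continuity of slices
  have hslice : ∀ t ∈ I, Continuous fun x : M => f t x := by
    intro t ht
    rw [← continuousOn_univ]
    exact hf_cont.comp ((continuous_const.prodMk continuous_id).continuousOn)
      (fun x _ => ⟨ht, trivial⟩)
  have hslice' : ∀ t ∈ I, Continuous fun x : M => f' t x := by
    intro t ht
    rw [← continuousOn_univ]
    exact hf'_cont.comp ((continuous_const.prodMk continuous_id).continuousOn)
      (fun x _ => ⟨ht, trivial⟩)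
  set G : ℝ × M → ℝ := fun q => (1/p) * f' q.1 q.2 * f q.1 q.2 ^ (1/p - 1) with hG
  -- uniform continuity of G on the compact set
  have hGc : ContinuousOn G (I ×ˢ (Set.univ : Set M)) := by
    rw [hG]
    exact (continuousOn_const.mul hf'_cont).mul
      (hf_cont.rpow_const fun q hq => Or.inl (hf_pos q.1 hq.1 q.2).ne')
  have hK : IsCompact (I ×ˢ (Set.univ : Set M)) := isCompact_Icc.prod isCompact_univ
  have hunif : ∀ ε > 0, ∃ δ > 0, ∀ s ∈ I, ∀ t ∈ I, |s - t| < δ →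
      ∀ x, |G (s, x) - G (t, x)| < ε := by
    intro ε hε
    obtain ⟨δ, hδ, H⟩ := Metric.uniformContinuousOn_iff.1
      (hK.uniformContinuousOn_of_continuous hGc) ε hε
    refine ⟨δ, hδ, fun s hs t ht hst x => ?_⟩
    have hd : dist ((s, x) : ℝ × M) (t, x) < δ := by
      rw [Prod.dist_eq]
      simpa [Real.dist_eq, dist_self] using max_lt hst hδ
    have := H (s, x) ⟨hs, trivial⟩ (t, x) ⟨ht, trivial⟩ hd
    rwa [Real.dist_eq] at this
  -- pointwise derivative
  have hgd : ∀ x, ∀ t ∈ I, HasDerivWithinAt (fun s => f s x ^ (1/p)) (G (t, x)) I t := by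
    intro x t ht
    have h1 : HasDerivAt (fun u : ℝ => u ^ (1/p)) ((1/p) * f t x ^ (1/p - 1)) (f t x) :=
      Real.hasDerivAt_rpow_const (Or.inl (hf_pos t ht x).ne')
    have h2 : HasDerivWithinAt (fun s => f s x ^ (1/p))
        (((1/p) * f t x ^ (1/p - 1)) * f' t x) I t := by
      simpa [Function.comp_def] using h1.comp_hasDerivWithinAt t (hf_deriv x t ht)
    convert h2 using 1
    simp only [hG]
    ring
  -- MVT uniform estimate
  have hkey : ∀ ε > 0, ∃ δ > 0, ∀ t ∈ I, ∀ s ∈ I, |s - t| < δ →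
      ∀ x, |f s x ^ (1/p) - f t x ^ (1/p) - (s - t) * G (t, x)| ≤ ε * |s - t| := by
    intro ε hε
    obtain ⟨δ, hδ, H⟩ := hunif ε hε
    refine ⟨δ, hδ, fun t ht s hs hst x => ?_⟩
    have hsub : Set.uIcc t s ⊆ I := Set.uIcc_subset_Icc ht hs
    have hder : ∀ u ∈ Set.uIcc t s,
        HasDerivWithinAt (fun v => f v x ^ (1/p) - v * G (t, x))
          (G (u, x) - G (t, x)) (Set.uIcc t s) u := by
      intro u hu
      have := ((hgd x u (hsub hu)).mono hsub).sub
        ((hasDerivWithinAt_id u (Set.uIcc t s)).mul_const (G (t, x)))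
      simpa [Pi.sub_def] using this
    have hbound : ∀ u ∈ Set.uIcc t s, ‖G (u, x) - G (t, x)‖ ≤ ε := by
      intro u hu
      have hu' : |u - t| ≤ |s - t| := by
        rcases Set.mem_uIcc.1 hu with ⟨h1, h2⟩ | ⟨h1, h2⟩
        · rw [abs_of_nonneg (by linarith : (0:ℝ) ≤ u - t),
            abs_of_nonneg (by linarith : (0:ℝ) ≤ s - t)]
          linarith
        · rw [abs_of_nonpos (by linarith : u - t ≤ 0),
            abs_of_nonpos (by linarith : s - t ≤ 0)]
          linarith
      rw [Real.norm_eq_abs]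
      exact le_of_lt (H u (hsub hu) t ht (lt_of_le_of_lt hu' hst) x)
    have hm := Convex.norm_image_sub_le_of_norm_hasDerivWithin_le hder hbound
      (convex_uIcc t s) Set.left_mem_uIcc Set.right_mem_uIcc
    have heq : f s x ^ (1/p) - s * G (t, x) - (f t x ^ (1/p) - t * G (t, x))
        = f s x ^ (1/p) - f t x ^ (1/p) - (s - t) * G (t, x) := by ring
    rw [Real.norm_eq_abs, Real.norm_eq_abs, heq] at hm
    exact hm
  -- the curves in C(M, ℝ)
  have hFc : ∀ t : ℝ, Continuous fun x : M => f (τ t) x ^ (1/p) := fun t =>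
    (hslice _ (hτ t)).rpow_const fun x => Or.inl (hf_pos _ (hτ t) x).ne'
  have hF'c : ∀ t : ℝ, Continuous fun x : M => G (τ t, x) := by
    intro t
    rw [hG]
    exact (continuous_const.mul (hslice' _ (hτ t))).mul
      ((hslice _ (hτ t)).rpow_const fun x => Or.inl (hf_pos _ (hτ t) x).ne')
  set F : ℝ → C(M, ℝ) := fun t => ⟨fun x => f (τ t) x ^ (1/p), hFc t⟩ with hF
  set F' : ℝ → C(M, ℝ) := fun t => ⟨fun x => G (τ t, x), hF'c t⟩ with hF'
  have hFx : ∀ t ∈ I, ∀ x, F t x = f t x ^ (1/p) := by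
    intro t ht x; simp [hF, hτeq t ht]
  have hF'x : ∀ t ∈ I, ∀ x, F' t x = G (t, x) := by
    intro t ht x; simp [hF', hτeq t ht]
  -- differentiability of F in sup norm
  have hFderiv : ∀ t ∈ I, HasDerivWithinAt F (F' t) I t := by
    intro t ht
    rw [hasDerivWithinAt_iff_isLittleO, Asymptotics.isLittleO_iff]
    intro ε hε
    obtain ⟨δ, hδ, H⟩ := hkey ε hε
    have h1 : ∀ᶠ s in nhdsWithin t I, dist s t < δ :=
      Filter.eventually_of_mem (mem_nhdsWithin_of_mem_nhds (Metric.ball_mem_nhds t hδ))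
        (fun s hs => Metric.mem_ball.1 hs)
    filter_upwards [h1, eventually_mem_nhdsWithin] with s hsd hsI
    refine (ContinuousMap.norm_le _ (by positivity)).2 fun x => ?_
    have h2 : (F s - F t - (s - t) • F' t) x
        = f s x ^ (1/p) - f t x ^ (1/p) - (s - t) * G (t, x) := by
      simp [ContinuousMap.sub_apply, ContinuousMap.smul_apply, smul_eq_mul,
        hFx s hsI, hFx t ht, hF'x t ht]
    rw [h2, Real.norm_eq_abs, Real.norm_eq_abs]
    exact H t ht s hsI (by rwa [Real.dist_eq] at hsd) x
  -- continuity of F' on I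
  have hF'cont : ContinuousOn F' I := by
    rw [Metric.continuousOn_iff]
    intro t ht ε hε
    obtain ⟨δ, hδ, H⟩ := hunif (ε/2) (half_pos hε)
    refine ⟨δ, hδ, fun s hs hst => ?_⟩
    rw [dist_eq_norm]
    have hle : ‖F' s - F' t‖ ≤ ε/2 := by
      refine (ContinuousMap.norm_le _ (by positivity)).2 fun x => ?_
      have h2 : (F' s - F' t) x = G (s, x) - G (t, x) := by
        simp [ContinuousMap.sub_apply, hF'x s hs, hF'x t ht]
      rw [h2, Real.norm_eq_abs]
      exact le_of_lt (H s hs t ht (by rwa [Real.dist_eq] at hst) x)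
    linarith
  -- push into L^p
  set T : C(M, ℝ) →L[ℝ] Lp ℝ (ENNReal.ofReal p) lam :=
    ContinuousMap.toLp (ENNReal.ofReal p) lam ℝ with hT
  have hae' : ∀ t ∈ I, ⇑(T (F' t)) =ᵐ[lam] fun x => (1/p) * f' t x * f t x ^ (1/p - 1) := by
    intro t ht
    refine (ContinuousMap.coeFn_toLp lam (F' t)).trans (ae_of_all _ fun x => ?_)
    rw [hF'x t ht, hG]
  refine ⟨fun t => T (F t), fun t => T (F' t), ?_, ?_, ?_, ?_, ?_⟩
  · intro t ht
    refine (ContinuousMap.coeFn_toLp lam (F t)).trans (ae_of_all _ fun x => ?_)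
    rw [hFx t ht]
  · exact hae'
  · intro t ht
    exact T.hasFDerivAt.comp_hasDerivWithinAt t (hFderiv t ht)
  · exact T.continuous.comp_continuousOn hF'cont
  · intro t ht
    have hae := hae' t ht
    have hP0 : (ENNReal.ofReal p) ≠ 0 := by
      rw [Ne, ENNReal.ofReal_eq_zero]; exact not_le.2 hp0
    have hPt : (ENNReal.ofReal p) ≠ ⊤ := ENNReal.ofReal_ne_top
    have hPreal : (ENNReal.ofReal p).toReal = p := ENNReal.toReal_ofReal hp0.le
    have hmem : MemLp (fun x => (1/p) * f' t x * f t x ^ (1/p - 1))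
        (ENNReal.ofReal p) lam := (Lp.memLp (T (F' t))).ae_eq hae
    rw [Lp.norm_def, eLpNorm_congr_ae hae,
      hmem.eLpNorm_eq_integral_rpow_norm hP0 hPt,
      ENNReal.toReal_ofReal (Real.rpow_nonneg
        (integral_nonneg fun x => Real.rpow_nonneg (norm_nonneg _) _) _), hPreal]
    have hpt : (fun x => ‖(1/p) * f' t x * f t x ^ (1/p - 1)‖ ^ p)
        = fun x => (1/p) ^ p * (|f' t x / f t x| ^ p * f t x) := by
      funext x
      have hfx := hf_pos t ht x
      rw [Real.norm_eq_abs, abs_mul, abs_mul,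
        abs_of_pos (by positivity : (0:ℝ) < 1/p),
        abs_of_pos (Real.rpow_pos_of_pos hfx _),
        Real.mul_rpow (by positivity) (Real.rpow_pos_of_pos hfx _).le,
        Real.mul_rpow (by positivity) (abs_nonneg _),
        ← Real.rpow_mul hfx.le,
        abs_div, abs_of_pos hfx, Real.div_rpow (abs_nonneg _) hfx.le,
        show (1/p - 1) * p = 1 - p by field_simp,
        Real.rpow_sub hfx, Real.rpow_one]
      ring
    rw [hpt, integral_const_mul,
      Real.mul_rpow (Real.rpow_nonneg (by positivity) _)
        (integral_nonneg fun x =>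
          mul_nonneg (Real.rpow_nonneg (abs_nonneg _) _) (hf_pos t ht x).le),
      ← Real.rpow_mul (by positivity : (0:ℝ) ≤ 1/p),
      mul_inv_cancel₀ hp0.ne', Real.rpow_one]
    simp only [Fp, one_div]
end

section
/- Let M be a compact metric space, λ a finite Borel measure on M, and p ∈ (1, ∞). Let f : [0,1] × M → (0, ∞) be continuous with continuous partial derivative ∂_t f. Then ∫_0^1 F_p(f(t,·), ∂_t f(t,·)) dt ≥ p·‖f(1,·)^{1/p} − f(0,·)^{1/p}‖_{L^p(λ)}, where F_p(f, a) := (∫_M |a(x)/f(x)|^p f(x) dλ(x))^{1/p}. -/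
open MeasureTheory Set

/-- Lower bound for the `F_p`-length of a path of positive densities:
`∫₀¹ F_p(f(t,·), ∂_t f(t,·)) dt ≥ p·‖f(1,·)^{1/p} − f(0,·)^{1/p}‖_{L^p(λ)}`. -/
theorem stmt_4 {M : Type*} [MetricSpace M] [CompactSpace M] [MeasurableSpace M] [BorelSpace M]
    (lam : Measure M) [IsFiniteMeasure lam]
    (p : ℝ) (hp : 1 < p)
    (f f' : ℝ → M → ℝ)
    (hf_cont : ContinuousOn (fun q : ℝ × M => f q.1 q.2) (Set.Icc 0 1 ×ˢ Set.univ))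
    (hf_pos : ∀ t ∈ Set.Icc (0 : ℝ) 1, ∀ x, 0 < f t x)
    (hf'_cont : ContinuousOn (fun q : ℝ × M => f' q.1 q.2) (Set.Icc 0 1 ×ˢ Set.univ))
    (hf_deriv : ∀ x, ∀ t ∈ Set.Icc (0 : ℝ) 1,
      HasDerivWithinAt (fun s => f s x) (f' t x) (Set.Icc 0 1) t) :
    p * (∫ x, |f 1 x ^ (1 / p) - f 0 x ^ (1 / p)| ^ p ∂lam) ^ (1 / p)
      ≤ ∫ t in (0 : ℝ)..1, Fp lam p (f t) (f' t) := by
  have hp0 : (0:ℝ) < p := lt_trans one_pos hp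
  have hp0' : p ≠ 0 := ne_of_gt hp0
  have hp1 : (0:ℝ) < p - 1 := by linarith
  -- Clamp function
  set τ : ℝ → ℝ := fun t => max 0 (min 1 t) with hτdef
  have hτcont : Continuous τ := continuous_const.max (continuous_const.min continuous_id)
  have hτmem : ∀ t, τ t ∈ Icc (0:ℝ) 1 :=
    fun t => ⟨le_max_left _ _, max_le zero_le_one (min_le_left _ _)⟩
  have hτeq : ∀ t ∈ Icc (0:ℝ) 1, τ t = t := by
    intro t ht
    simp [hτdef, min_eq_right ht.2, max_eq_right ht.1]
  have hτidem : ∀ t, τ (τ t) = τ t := fun t => hτeq _ (hτmem t)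
  -- Clamped functions
  have hFc : Continuous (fun z : ℝ × M => f (τ z.1) z.2) := by
    have := hf_cont.comp_continuous
      (f := fun z : ℝ × M => (τ z.1, z.2))
      ((hτcont.comp continuous_fst).prodMk continuous_snd)
      (fun z => ⟨hτmem _, mem_univ _⟩)
    simpa [Function.comp_def] using this
  have hF'c : Continuous (fun z : ℝ × M => f' (τ z.1) z.2) := by
    have := hf'_cont.comp_continuous
      (f := fun z : ℝ × M => (τ z.1, z.2))
      ((hτcont.comp continuous_fst).prodMk continuous_snd)
      (fun z => ⟨hτmem _, mem_univ _⟩)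
    simpa [Function.comp_def] using this
  have hFpos : ∀ z : ℝ × M, 0 < f (τ z.1) z.2 := fun z => hf_pos _ (hτmem _) _
  -- the derivative of f^{1/p}, clamped
  set D : ℝ × M → ℝ := fun z => (1/p) * f (τ z.1) z.2 ^ (1/p - 1) * f' (τ z.1) z.2 with hDdef
  have hDc : Continuous D :=
    (continuous_const.mul (hFc.rpow_const (fun z => Or.inl (hFpos z).ne'))).mul hF'c
  obtain ⟨CD₀, hCD₀⟩ := (isCompact_Icc.prod isCompact_univ).exists_bound_of_continuousOn
    (f := D) hDc.continuousOn
  set CD := max CD₀ 0 with hCDdef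
  have hCDnn : 0 ≤ CD := le_max_right _ _
  have hCD : ∀ z : ℝ × M, |D z| ≤ CD := by
    intro z
    have h1 : D z = D (τ z.1, z.2) := by simp [hDdef, hτidem]
    rw [h1]
    calc |D (τ z.1, z.2)| ≤ CD₀ := by
          simpa [Real.norm_eq_abs] using hCD₀ (τ z.1, z.2) ⟨hτmem _, mem_univ _⟩
      _ ≤ CD := le_max_left _ _
  -- endpoint functions
  have hτ0 : τ 0 = 0 := hτeq 0 ⟨le_refl _, zero_le_one⟩
  have hτ1 : τ 1 = 1 := hτeq 1 ⟨zero_le_one, le_refl _⟩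
  have hf1c : Continuous (fun x => f 1 x) := by
    have := hFc.comp (Continuous.prodMk_right (1:ℝ))
    simpa [Function.comp_def, hτ1] using this
  have hf0c : Continuous (fun x => f 0 x) := by
    have := hFc.comp (Continuous.prodMk_right (0:ℝ))
    simpa [Function.comp_def, hτ0] using this
  set h : M → ℝ := fun x => |f 1 x ^ (1/p) - f 0 x ^ (1/p)| with hhdef
  have hhnn : ∀ x, 0 ≤ h x := fun x => abs_nonneg _
  have hhc : Continuous h := by
    apply Continuous.abs
    exact (hf1c.rpow_const fun x => Or.inl (hf_pos 1 ⟨zero_le_one, le_refl _⟩ x).ne').sub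
      (hf0c.rpow_const fun x => Or.inl (hf_pos 0 ⟨le_refl _, zero_le_one⟩ x).ne')
  obtain ⟨Ch₀, hCh₀⟩ := isCompact_univ.exists_bound_of_continuousOn (f := h) hhc.continuousOn
  set Ch := max Ch₀ 0 with hChdef
  have hChnn : 0 ≤ Ch := le_max_right _ _
  have hCh : ∀ x, h x ≤ Ch := fun x =>
    le_trans (le_trans (le_abs_self _) (by simpa [Real.norm_eq_abs] using hCh₀ x (mem_univ x)))
      (le_max_left _ _)
  -- FTC pointwise
  have key : ∀ x, f 1 x ^ (1/p) - f 0 x ^ (1/p) = ∫ t in (0:ℝ)..1, D (t, x) := by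
    intro x
    have hcont : ContinuousOn (fun s => f s x ^ (1/p)) (Icc 0 1) := by
      apply ContinuousOn.rpow_const
      · intro t ht; exact (hf_deriv x t ht).continuousWithinAt
      · intro t ht; exact Or.inl (hf_pos t ht x).ne'
    have hderiv : ∀ t ∈ Ioo (0:ℝ) 1,
        HasDerivWithinAt (fun s => f s x ^ (1/p)) (D (t,x)) (Ioi t) t := by
      intro t ht
      have h1 : HasDerivAt (fun s => f s x) (f' t x) t :=
        (hf_deriv x t (Ioo_subset_Icc_self ht)).hasDerivAt (Icc_mem_nhds ht.1 ht.2)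
      have h2 := h1.rpow_const (p := 1/p)
        (Or.inl (hf_pos t (Ioo_subset_Icc_self ht) x).ne')
      have h3 : D (t, x) = f' t x * (1/p) * f t x ^ (1/p - 1) := by
        simp only [hDdef]
        rw [hτeq t (Ioo_subset_Icc_self ht)]; ring
      rw [h3]
      exact h2.hasDerivWithinAt
    have hint : IntervalIntegrable (fun t => D (t,x)) volume 0 1 :=
      (hDc.comp (continuous_id.prodMk continuous_const)).intervalIntegrable 0 1
    exact (intervalIntegral.integral_eq_sub_of_hasDeriv_right_of_le zero_le_one
      hcont hderiv hint).symm
  -- the time measure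
  set ν : Measure ℝ := volume.restrict (Ioc (0:ℝ) 1) with hνdef
  haveI hνfin : IsFiniteMeasure ν := by
    constructor
    rw [hνdef, Measure.restrict_apply_univ, Real.volume_Ioc]
    exact ENNReal.ofReal_lt_top
  have habs : ∀ x, h x ≤ ∫ t, |D (t, x)| ∂ν := by
    intro x
    have h1 : h x ≤ ∫ t in (0:ℝ)..1, |D (t, x)| := by
      rw [hhdef]
      simp only []
      rw [key x]
      exact intervalIntegral.abs_integral_le_integral_abs zero_le_one
    rwa [intervalIntegral.integral_of_le zero_le_one] at h1
  -- conjugate exponent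
  set q : ℝ := p / (p - 1) with hqdef
  have hpq : p.HolderConjugate q := Real.HolderConjugate.conjExponent hp
  have hpq_mul : (p - 1) * q = p := by
    rw [hqdef]; field_simp
  have hinv : 1 / p + 1 / q = 1 := by
    have := hpq.inv_add_inv_eq_one
    simpa [one_div] using this
  -- the product integrand
  set Φ : ℝ × M → ℝ := fun z => |D z| * h z.2 ^ (p - 1) with hΦdef
  have hΦc : Continuous Φ :=
    hDc.abs.mul ((hhc.comp continuous_snd).rpow_const fun z => Or.inr hp1.le)
  have hΦnn : ∀ z, 0 ≤ Φ z := fun z =>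
    mul_nonneg (abs_nonneg _) (Real.rpow_nonneg (hhnn _) _)
  have hΦbd : ∀ z, ‖Φ z‖ ≤ CD * Ch ^ (p - 1) := by
    intro z
    rw [Real.norm_eq_abs, abs_of_nonneg (hΦnn z)]
    exact mul_le_mul (hCD z) (Real.rpow_le_rpow (hhnn _) (hCh _) hp1.le)
      (Real.rpow_nonneg (hhnn _) _) hCDnn
  have hΦint : Integrable Φ (ν.prod lam) :=
    (integrable_const _).mono' hΦc.aestronglyMeasurable (ae_of_all _ hΦbd)
  -- B
  set B : ℝ := ∫ x, h x ^ p ∂lam with hBdef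
  have hBnn : 0 ≤ B := integral_nonneg fun x => Real.rpow_nonneg (hhnn _) _
  -- Np
  set Np : ℝ → ℝ := fun t => (∫ x, |D (t, x)| ^ p ∂lam) ^ (1/p) with hNpdef
  have hNpinner_c : Continuous (fun t => ∫ x, |D (t, x)| ^ p ∂lam) := by
    apply continuous_of_dominated (bound := fun _ => CD ^ p)
    · intro t
      exact ((hDc.comp (Continuous.prodMk_right t)).abs.rpow_const
        (fun x => Or.inr hp0.le)).aestronglyMeasurable
    · intro t
      refine ae_of_all _ fun x => ?_
      rw [Real.norm_eq_abs, abs_of_nonneg (Real.rpow_nonneg (abs_nonneg _) _)]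
      exact Real.rpow_le_rpow (abs_nonneg _) (hCD _) hp0.le
    · exact integrable_const _
    · refine ae_of_all _ fun x => ?_
      exact (hDc.comp (continuous_id.prodMk continuous_const)).abs.rpow_const
        fun t => Or.inr hp0.le
  have hNpinner_nn : ∀ t, 0 ≤ ∫ x, |D (t, x)| ^ p ∂lam :=
    fun t => integral_nonneg fun x => Real.rpow_nonneg (abs_nonneg _) _
  have hNpc : Continuous Np :=
    hNpinner_c.rpow_const fun t => Or.inr (by positivity)
  have hNpnn : ∀ t, 0 ≤ Np t := fun t => Real.rpow_nonneg (hNpinner_nn t) _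
  -- Hölder
  have holder : ∀ t, ∫ x, Φ (t, x) ∂lam ≤ Np t * B ^ (1/q) := by
    intro t
    have hDmem : MemLp (fun x => |D (t, x)|) (ENNReal.ofReal p) lam :=
      MemLp.of_bound (hDc.comp (Continuous.prodMk_right t)).abs.aestronglyMeasurable CD
        (ae_of_all _ fun x => by
          rw [Real.norm_eq_abs, abs_abs]; exact hCD _)
    have hhmem : MemLp (fun x => h x ^ (p - 1)) (ENNReal.ofReal q) lam :=
      MemLp.of_bound (hhc.rpow_const fun x => Or.inr hp1.le).aestronglyMeasurable
        (Ch ^ (p - 1))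
        (ae_of_all _ fun x => by
          rw [Real.norm_eq_abs, abs_of_nonneg (Real.rpow_nonneg (hhnn _) _)]
          exact Real.rpow_le_rpow (hhnn _) (hCh _) hp1.le)
    have H := integral_mul_le_Lp_mul_Lq_of_nonneg hpq
      (ae_of_all _ fun x => abs_nonneg (D (t, x)))
      (ae_of_all _ fun x => Real.rpow_nonneg (hhnn x) _) hDmem hhmem
    have hrw : ∀ x, (h x ^ (p - 1)) ^ q = h x ^ p := by
      intro x
      rw [← Real.rpow_mul (hhnn x), hpq_mul]
    calc ∫ x, Φ (t, x) ∂lam = ∫ x, |D (t, x)| * h x ^ (p - 1) ∂lam := rfl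
      _ ≤ (∫ x, |D (t, x)| ^ p ∂lam) ^ (1/p) * (∫ x, (h x ^ (p - 1)) ^ q ∂lam) ^ (1/q) := H
      _ = Np t * B ^ (1/q) := by
          rw [hNpdef, hBdef]
          congr 2
          exact integral_congr_ae (ae_of_all _ hrw)
  -- main chain
  have step1 : B ≤ (∫ t, Np t ∂ν) * B ^ (1/q) := by
    have hB1 : ∀ x, h x ^ p = h x * h x ^ (p - 1) := by
      intro x
      have := Real.rpow_add' (hhnn x) (show (1:ℝ) + (p - 1) ≠ 0 by
        intro hc; apply hp0'; linarith)
      rw [show (1:ℝ) + (p - 1) = p by ring] at this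
      rw [this, Real.rpow_one]
    have hmono : ∀ x, h x * h x ^ (p - 1) ≤ (∫ t, |D (t, x)| ∂ν) * h x ^ (p - 1) :=
      fun x => mul_le_mul_of_nonneg_right (habs x) (Real.rpow_nonneg (hhnn x) _)
    have hrhs_eq : ∀ x, (∫ t, |D (t, x)| ∂ν) * h x ^ (p - 1) = ∫ t, Φ (t, x) ∂ν := by
      intro x
      rw [← integral_mul_const]
    have hrhs_int : Integrable (fun x => ∫ t, Φ (t, x) ∂ν) lam :=
      hΦint.integral_prod_right
    have step_a : B ≤ ∫ x, (∫ t, Φ (t, x) ∂ν) ∂lam := by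
      rw [hBdef]
      refine integral_mono_of_nonneg (ae_of_all _ fun x => Real.rpow_nonneg (hhnn x) _)
        hrhs_int (ae_of_all _ fun x => ?_)
      show h x ^ p ≤ ∫ t, Φ (t, x) ∂ν
      rw [hB1 x, ← hrhs_eq x]
      exact hmono x
    have step_b : ∫ x, (∫ t, Φ (t, x) ∂ν) ∂lam = ∫ t, (∫ x, Φ (t, x) ∂lam) ∂ν :=
      (integral_integral_swap (f := fun t x => Φ (t, x)) hΦint).symm
    have step_c : ∫ t, (∫ x, Φ (t, x) ∂lam) ∂ν ≤ ∫ t, Np t * B ^ (1/q) ∂ν := by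
      refine integral_mono_of_nonneg
        (ae_of_all _ fun t => integral_nonneg fun x => hΦnn _)
        ((hNpc.mul continuous_const).integrableOn_Ioc)
        (ae_of_all _ fun t => holder t)
    have step_d : ∫ t, Np t * B ^ (1/q) ∂ν = (∫ t, Np t ∂ν) * B ^ (1/q) :=
      integral_mul_const _ _
    linarith [step_a, step_c, step_b ▸ step_a]
  -- identify Fp with p * Np on Icc
  have hFpN : ∀ t ∈ Icc (0:ℝ) 1, Fp lam p (f t) (f' t) = p * Np t := by
    intro t ht
    have hint_eq : ∀ x, |f' t x / f t x| ^ p * f t x = p ^ p * |D (t, x)| ^ p := by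
      intro x
      have hfx := hf_pos t ht x
      have hfxp : (0:ℝ) < f t x ^ p := Real.rpow_pos_of_pos hfx _
      have hDval : D (t, x) = (1/p) * f t x ^ (1/p - 1) * f' t x := by
        simp only [hDdef]; rw [hτeq t ht]
      have habsD : |D (t, x)| = (1/p) * f t x ^ (1/p - 1) * |f' t x| := by
        rw [hDval, abs_mul, abs_mul, abs_of_pos (by positivity : (0:ℝ) < 1/p),
          abs_of_pos (Real.rpow_pos_of_pos hfx _)]
      have h1 : (f t x ^ (1/p - 1)) ^ p = f t x ^ (1 - p) := by
        rw [← Real.rpow_mul hfx.le]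
        congr 1
        field_simp
      have h2 : f t x ^ (1 - p) = f t x / f t x ^ p := by
        rw [Real.rpow_sub hfx, Real.rpow_one]
      have h4 : p ^ p * (1/p) ^ p = 1 := by
        rw [← Real.mul_rpow hp0.le (by positivity), mul_one_div_cancel hp0', Real.one_rpow]
      calc |f' t x / f t x| ^ p * f t x
          = |f' t x| ^ p / f t x ^ p * f t x := by
            rw [abs_div, abs_of_pos hfx, Real.div_rpow (abs_nonneg _) hfx.le]
        _ = f t x ^ (1 - p) * |f' t x| ^ p := by
            rw [h2]; field_simp
        _ = p ^ p * |D (t, x)| ^ p := by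
            rw [habsD, Real.mul_rpow (by positivity) (abs_nonneg _),
              Real.mul_rpow (by positivity) (Real.rpow_nonneg hfx.le _), h1]
            have hre : p ^ p * ((1/p) ^ p * f t x ^ (1 - p) * |f' t x| ^ p)
                = (p ^ p * (1/p) ^ p) * (f t x ^ (1 - p) * |f' t x| ^ p) := by ring
            rw [hre, h4, one_mul]
    have hJeq : ∫ x, |f' t x / f t x| ^ p * f t x ∂lam
        = ∫ x, p ^ p * |D (t, x)| ^ p ∂lam :=
      integral_congr_ae (ae_of_all _ hint_eq)
    have hpp : (p ^ p : ℝ) ^ (1/p) = p := by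
      rw [← Real.rpow_mul hp0.le, mul_one_div_cancel hp0', Real.rpow_one]
    show (∫ x, |f' t x / f t x| ^ p * f t x ∂lam) ^ (1/p) = p * Np t
    rw [hJeq, integral_const_mul, Real.mul_rpow (by positivity) (hNpinner_nn t), hpp]
  -- identify the RHS of the goal
  have hRHS : ∫ t in (0:ℝ)..1, Fp lam p (f t) (f' t) = p * ∫ t, Np t ∂ν := by
    rw [intervalIntegral.integral_of_le zero_le_one]
    have heq : ∀ t ∈ Ioc (0:ℝ) 1, Fp lam p (f t) (f' t) = p * Np t :=
      fun t ht => hFpN t (Ioc_subset_Icc_self ht)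
    rw [setIntegral_congr_fun measurableSet_Ioc heq]
    exact integral_const_mul _ _
  -- conclude
  rw [hRHS]
  rcases eq_or_lt_of_le hBnn with hB0 | hBpos
  · rw [← hB0, Real.zero_rpow (by positivity : (1:ℝ)/p ≠ 0), mul_zero]
    exact mul_nonneg hp0.le (integral_nonneg hNpnn)
  · have hBq : 0 < B ^ (1/q) := Real.rpow_pos_of_pos hBpos _
    have hfrac : B ^ (1/p) * B ^ (1/q) = B := by
      rw [← Real.rpow_add hBpos, hinv, Real.rpow_one]
    have hmain : B ^ (1/p) ≤ ∫ t, Np t ∂ν := by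
      have h2 : B ^ (1/p) * B ^ (1/q) ≤ (∫ t, Np t ∂ν) * B ^ (1/q) := by
        rw [hfrac]; exact step1
      exact le_of_mul_le_mul_right h2 hBq
    exact mul_le_mul_of_nonneg_left hmain hp0.le
end

section
/- Let M be a compact metric space, λ a finite Borel measure on M, and p ∈ (1, ∞). Let f₀, f₁ : M → (0, ∞) be continuous. Call a path admissible if it is a continuous map f : [0,1] × M → (0, ∞) with continuous partial derivative ∂_t f and f(0,·) = f₀, f(1,·) = f₁, and define its length L(f) = ∫_0^1 F_p(f(t,·), ∂_t f(t,·)) dt, where F_p(f, a) := (∫_M |a(x)/f(x)|^p f(x) dλ(x))^{1/p}. Then the infimum of L over all admissible paths equals p·‖f₁^{1/p} − f₀^{1/p}‖_{L^p(λ)}, and it is attained by the path f(t, x) = ((1−t)·f₀(x)^{1/p} + t·f₁(x)^{1/p})^p, which moreover has constant speed: F_p(f(t,·), ∂_t f(t,·)) = p·‖f₁^{1/p} − f₀^{1/p}‖_{L^p(λ)} for every t ∈ [0,1]. -/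
open MeasureTheory

/-- An admissible path of positive densities from `f₀` to `f₁`: a continuous map
`f : [0,1] × M → (0,∞)` with continuous time derivative `f'` and the given endpoints. -/
def Admissible {M : Type*} [TopologicalSpace M]
    (f f' : ℝ → M → ℝ) (f₀ f₁ : M → ℝ) : Prop :=
  ContinuousOn (fun q : ℝ × M => f q.1 q.2) (Set.Icc 0 1 ×ˢ Set.univ) ∧
  (∀ t ∈ Set.Icc (0 : ℝ) 1, ∀ x, 0 < f t x) ∧
  ContinuousOn (fun q : ℝ × M => f' q.1 q.2) (Set.Icc 0 1 ×ˢ Set.univ) ∧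
  (∀ x, ∀ t ∈ Set.Icc (0 : ℝ) 1,
    HasDerivWithinAt (fun s => f s x) (f' t x) (Set.Icc 0 1) t) ∧
  f 0 = f₀ ∧ f 1 = f₁

section FRaux
open Set
set_option linter.unusedSectionVars false

lemma keyPt {p : ℝ} (hp : 1 < p) {g : ℝ} (hg : 0 < g) (d : ℝ) :
    |p * g ^ (p - 1) * d / g ^ p| ^ p * g ^ p = p ^ p * |d| ^ p := by
  have hp0 : (0:ℝ) < p := by linarith
  have hgp : (0:ℝ) < g ^ p := Real.rpow_pos_of_pos hg p
  have h1 : p * g ^ (p - 1) * d / g ^ p = p * d / g := by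
    rw [Real.rpow_sub hg, Real.rpow_one]
    field_simp
  rw [h1, abs_div, abs_mul, abs_of_pos hp0, abs_of_pos hg,
    Real.div_rpow (by positivity) hg.le, Real.mul_rpow hp0.le (abs_nonneg d),
    div_mul_cancel₀ _ hgp.ne']

lemma keyPt2 {p : ℝ} (hp : 1 < p) {f : ℝ} (hf : 0 < f) (d : ℝ) :
    |d / f| ^ p * f = p ^ p * |1 / p * f ^ (1 / p - 1) * d| ^ p := by
  have hp0 : (0:ℝ) < p := by linarith
  have hfp : (0:ℝ) < f ^ p := Real.rpow_pos_of_pos hf p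
  have h2 : |1 / p * f ^ (1 / p - 1) * d| = 1 / p * f ^ (1 / p - 1) * |d| := by
    rw [abs_mul, abs_mul, abs_of_pos (by positivity : (0:ℝ) < 1/p),
      abs_of_pos (Real.rpow_pos_of_pos hf _)]
  rw [h2, Real.mul_rpow (by positivity) (abs_nonneg d),
    Real.mul_rpow (by positivity) (Real.rpow_nonneg hf.le _),
    ← mul_assoc, ← mul_assoc, ← Real.mul_rpow hp0.le (by positivity),
    mul_one_div_cancel hp0.ne', Real.one_rpow, one_mul,
    ← Real.rpow_mul hf.le]
  have he : (1 / p - 1) * p = 1 - p := by field_simp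
  rw [he, Real.rpow_sub hf, Real.rpow_one, abs_div, abs_of_pos hf,
    Real.div_rpow (abs_nonneg d) hf.le]
  field_simp

lemma rpow_factor {p : ℝ} (hp : 1 < p) {I : ℝ} (hI : 0 ≤ I) :
    (p ^ p * I) ^ (1 / p) = p * I ^ (1 / p) := by
  have hp0 : (0:ℝ) < p := by linarith
  rw [Real.mul_rpow (Real.rpow_nonneg hp0.le p) hI, ← Real.rpow_mul hp0.le,
    mul_one_div_cancel hp0.ne', Real.rpow_one]

variable {M : Type*} [MetricSpace M] [CompactSpace M] [MeasurableSpace M] [BorelSpace M]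
    (lam : Measure M) [IsFiniteMeasure lam] (p : ℝ) (hp : 1 < p)
    (f₀ f₁ : M → ℝ) (h₀c : Continuous f₀) (h₁c : Continuous f₁)
    (h₀ : ∀ x, 0 < f₀ x) (h₁ : ∀ x, 0 < f₁ x)

include h₀ h₁ in
lemma gpos : ∀ t ∈ Set.Icc (0:ℝ) 1, ∀ x,
    0 < (1 - t) * f₀ x ^ (1 / p) + t * f₁ x ^ (1 / p) := by
  intro t ht x
  rcases lt_or_eq_of_le ht.1 with h | h
  · exact add_pos_of_nonneg_of_pos
      (mul_nonneg (by linarith [ht.2]) (Real.rpow_nonneg (h₀ x).le _))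
      (mul_pos h (Real.rpow_pos_of_pos (h₁ x) _))
  · rw [← h]; simpa using Real.rpow_pos_of_pos (h₀ x) (1/p)

include hp h₀ h₁ in
lemma part2 : ∀ t ∈ Set.Icc (0 : ℝ) 1,
    Fp lam p (fun x => ((1 - t) * f₀ x ^ (1 / p) + t * f₁ x ^ (1 / p)) ^ p)
      (fun x => p * ((1 - t) * f₀ x ^ (1 / p) + t * f₁ x ^ (1 / p)) ^ (p - 1)
        * (f₁ x ^ (1 / p) - f₀ x ^ (1 / p)))
      = p * (∫ x, |f₁ x ^ (1 / p) - f₀ x ^ (1 / p)| ^ p ∂lam) ^ (1 / p) := by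
  intro t ht
  have hI : (0:ℝ) ≤ ∫ x, |f₁ x ^ (1 / p) - f₀ x ^ (1 / p)| ^ p ∂lam :=
    integral_nonneg fun x => by positivity
  rw [Fp, ← rpow_factor hp hI]
  congr 1
  rw [← integral_const_mul]
  refine integral_congr_ae (Filter.Eventually.of_forall fun x => ?_)
  exact keyPt hp (gpos p f₀ f₁ h₀ h₁ t ht x) _

include hp h₀ h₁ in
lemma part3 :
    (∫ t in (0 : ℝ)..1,
        Fp lam p (fun x => ((1 - t) * f₀ x ^ (1 / p) + t * f₁ x ^ (1 / p)) ^ p)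
          (fun x => p * ((1 - t) * f₀ x ^ (1 / p) + t * f₁ x ^ (1 / p)) ^ (p - 1)
            * (f₁ x ^ (1 / p) - f₀ x ^ (1 / p))))
      = p * (∫ x, |f₁ x ^ (1 / p) - f₀ x ^ (1 / p)| ^ p ∂lam) ^ (1 / p) := by
  rw [intervalIntegral.integral_congr (g := fun _ =>
      p * (∫ x, |f₁ x ^ (1 / p) - f₀ x ^ (1 / p)| ^ p ∂lam) ^ (1 / p))
    (fun t ht => part2 lam p hp f₀ f₁ h₀ h₁ t (by rwa [Set.uIcc_of_le zero_le_one] at ht))]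
  simp
include hp h₀c h₁c h₀ h₁ in
lemma part1 : Admissible (fun t x => ((1 - t) * f₀ x ^ (1 / p) + t * f₁ x ^ (1 / p)) ^ p)
      (fun t x => p * ((1 - t) * f₀ x ^ (1 / p) + t * f₁ x ^ (1 / p)) ^ (p - 1)
        * (f₁ x ^ (1 / p) - f₀ x ^ (1 / p))) f₀ f₁ := by
  have hp0 : (0:ℝ) < p := by linarith
  have hgc : Continuous (fun q : ℝ × M =>
      (1 - q.1) * f₀ q.2 ^ (1 / p) + q.1 * f₁ q.2 ^ (1 / p)) := by
    apply Continuous.add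
    · exact (continuous_const.sub continuous_fst).mul
        ((h₀c.comp continuous_snd).rpow_const fun q => Or.inl (h₀ q.2).ne')
    · exact continuous_fst.mul
        ((h₁c.comp continuous_snd).rpow_const fun q => Or.inl (h₁ q.2).ne')
  refine ⟨?_, ?_, ?_, ?_, ?_, ?_⟩
  · exact (hgc.rpow_const fun q => Or.inr hp0.le).continuousOn
  · exact fun t ht x => Real.rpow_pos_of_pos (gpos p f₀ f₁ h₀ h₁ t ht x) p
  · refine Continuous.continuousOn ?_
    exact (continuous_const.mul (hgc.rpow_const fun q => Or.inr (by linarith))).mul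
      (((h₁c.comp continuous_snd).rpow_const fun q => Or.inl (h₁ q.2).ne').sub
        ((h₀c.comp continuous_snd).rpow_const fun q => Or.inl (h₀ q.2).ne'))
  · intro x t ht
    have hb : HasDerivAt (fun s : ℝ => (1 - s) * f₀ x ^ (1 / p) + s * f₁ x ^ (1 / p))
        (f₁ x ^ (1 / p) - f₀ x ^ (1 / p)) t := by
      have heq : (fun s : ℝ => (1 - s) * f₀ x ^ (1 / p) + s * f₁ x ^ (1 / p))
          = fun s : ℝ => f₀ x ^ (1 / p) + s * (f₁ x ^ (1 / p) - f₀ x ^ (1 / p)) := by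
        funext s; ring
      rw [heq]
      simpa using ((hasDerivAt_id t).mul_const
        (f₁ x ^ (1 / p) - f₀ x ^ (1 / p))).const_add (f₀ x ^ (1 / p))
    have h2 := hb.rpow_const (p := p) (Or.inr hp.le)
    have h3 : f₁ x ^ (1 / p) - f₀ x ^ (1 / p) = 1 * (f₁ x ^ (1 / p) - f₀ x ^ (1 / p)) := by ring
    refine HasDerivAt.hasDerivWithinAt (h2.congr_deriv (by ring))
  · funext x
    show ((1 - (0:ℝ)) * f₀ x ^ (1 / p) + 0 * f₁ x ^ (1 / p)) ^ p = f₀ x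
    have : ((1:ℝ) - 0) * f₀ x ^ (1 / p) + 0 * f₁ x ^ (1 / p) = f₀ x ^ (1 / p) := by ring
    rw [this, ← Real.rpow_mul (h₀ x).le, one_div_mul_cancel hp0.ne', Real.rpow_one]
  · funext x
    show ((1 - (1:ℝ)) * f₀ x ^ (1 / p) + 1 * f₁ x ^ (1 / p)) ^ p = f₁ x
    have : ((1:ℝ) - 1) * f₀ x ^ (1 / p) + 1 * f₁ x ^ (1 / p) = f₁ x ^ (1 / p) := by ring
    rw [this, ← Real.rpow_mul (h₁ x).le, one_div_mul_cancel hp0.ne', Real.rpow_one]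

include hp in
lemma normT (u : C(M, ℝ)) [Fact (1 ≤ ENNReal.ofReal p)] :
    ‖ContinuousMap.toLp (ENNReal.ofReal p) lam ℝ u‖
      = (∫ x, |u x| ^ p ∂lam) ^ (1 / p) := by
  have hp0 : (0:ℝ) < p := by linarith
  have hne0 : ENNReal.ofReal p ≠ 0 := by simp [ENNReal.ofReal_eq_zero]; linarith
  have hnetop : ENNReal.ofReal p ≠ ⊤ := ENNReal.ofReal_ne_top
  set T := ContinuousMap.toLp (E := ℝ) (ENNReal.ofReal p) lam ℝ
  have hae : ⇑(T u) =ᵐ[lam] ⇑u := ContinuousMap.coeFn_toLp (𝕜 := ℝ) lam u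
  have hmem : MemLp (⇑u) (ENNReal.ofReal p) lam := by
    refine ⟨u.continuous.aestronglyMeasurable, ?_⟩
    rw [← eLpNorm_congr_ae hae]
    exact Lp.eLpNorm_lt_top (T u)
  rw [Lp.norm_def, eLpNorm_congr_ae hae,
    hmem.eLpNorm_eq_integral_rpow_norm hne0 hnetop,
    ENNReal.toReal_ofReal (Real.rpow_nonneg (integral_nonneg fun x => by positivity) _)]
  simp only [ENNReal.toReal_ofReal hp0.le, Real.norm_eq_abs, one_div]

include hp in
lemma part4 (f₀ f₁ : M → ℝ) (h₀ : ∀ x, 0 < f₀ x) (h₁ : ∀ x, 0 < f₁ x)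
    (f f' : ℝ → M → ℝ) (hf : Admissible f f' f₀ f₁) :
    p * (∫ x, |f₁ x ^ (1 / p) - f₀ x ^ (1 / p)| ^ p ∂lam) ^ (1 / p)
      ≤ ∫ t in (0 : ℝ)..1, Fp lam p (f t) (f' t) := by
  classical
  obtain ⟨hc, hpos, hc', hd, he0, he1⟩ := hf
  have hp0 : (0:ℝ) < p := by linarith
  haveI : Fact (1 ≤ ENNReal.ofReal p) := ⟨by
    rw [← ENNReal.ofReal_one]; exact ENNReal.ofReal_le_ofReal hp.le⟩
  -- clamping
  set c : ℝ → ℝ := fun t => min (max t 0) 1 with hc_def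
  have hcmem : ∀ t, c t ∈ Icc (0:ℝ) 1 :=
    fun t => ⟨le_min (le_max_right t 0) zero_le_one, min_le_right _ _⟩
  have hceq : ∀ t ∈ Icc (0:ℝ) 1, c t = t := fun t ht => by
    simp only [hc_def, max_eq_left ht.1, min_eq_left ht.2]
  have hcont_c : Continuous c := (continuous_id.max continuous_const).min continuous_const
  have hmap : Continuous fun q : ℝ × M => ((c q.1, q.2) : ℝ × M) :=
    (hcont_c.comp continuous_fst).prodMk continuous_snd
  have hmapmem : ∀ q : ℝ × M, ((c q.1, q.2) : ℝ × M) ∈ Icc (0:ℝ) 1 ×ˢ (univ : Set M) :=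
    fun q => ⟨hcmem q.1, mem_univ _⟩
  have hFc : Continuous (fun q : ℝ × M => f (c q.1) q.2) :=
    hc.comp_continuous hmap hmapmem
  have hF'c : Continuous (fun q : ℝ × M => f' (c q.1) q.2) :=
    hc'.comp_continuous hmap hmapmem
  have hposc : ∀ t x, 0 < f (c t) x := fun t x => hpos _ (hcmem t) x
  -- the derivative of the p-th root path
  set h' : ℝ → M → ℝ := fun t x => 1 / p * f (c t) x ^ (1 / p - 1) * f' (c t) x with hh'_def
  have hh'c : Continuous (fun q : ℝ × M => h' q.1 q.2) := by
    exact (continuous_const.mul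
      (hFc.rpow_const fun q => Or.inl (hposc q.1 q.2).ne')).mul hF'c
  set K : C(ℝ × M, ℝ) := ⟨fun q => h' q.1 q.2, hh'c⟩ with hK_def
  set Kc := K.curry with hKc_def
  have hKcx : ∀ t x, Kc t x = h' t x := fun t x => rfl
  set T := ContinuousMap.toLp (E := ℝ) (ENNReal.ofReal p) lam ℝ with hT_def
  have hKccont : Continuous fun t => Kc t := Kc.continuous
  have hKint : IntervalIntegrable (fun t => Kc t) MeasureTheory.volume 0 1 :=
    hKccont.intervalIntegrable 0 1
  have hGint : IntervalIntegrable (fun t => T (Kc t)) MeasureTheory.volume 0 1 :=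
    (T.continuous.comp hKccont).intervalIntegrable 0 1
  set V : C(M, ℝ) := ∫ t in (0:ℝ)..1, Kc t with hV_def
  -- evaluate V
  have hVx : ∀ x, V x = f₁ x ^ (1 / p) - f₀ x ^ (1 / p) := by
    intro x
    have he : V x = ∫ t in (0:ℝ)..1, h' t x := by
      have := (ContinuousMap.evalCLM ℝ x).intervalIntegral_comp_comm hKint
      simpa [hV_def, hKcx] using this.symm
    rw [he]
    have hft : ∀ t ∈ Icc (0:ℝ) 1, ContinuousWithinAt (fun s => f s x ^ (1/p)) (Icc 0 1) t :=
      fun t ht => ((hd x t ht).continuousWithinAt).rpow_const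
        (Or.inl (hpos t ht x).ne')
    have hmain := intervalIntegral.integral_eq_sub_of_hasDeriv_right_of_le
      (f := fun s => f s x ^ (1/p)) (f' := fun t => h' t x) zero_le_one
      (fun t ht => hft t ht)
      (fun t ht => by
        have h1 : HasDerivAt (fun s => f s x) (f' t x) t :=
          (hd x t (Ioo_subset_Icc_self ht)).hasDerivAt
            (Icc_mem_nhds ht.1 ht.2)
        have h2 := h1.rpow_const (p := 1/p) (Or.inl (hpos t (Ioo_subset_Icc_self ht) x).ne')
        have h3 : h' t x = f' t x * (1/p) * f t x ^ (1/p - 1) := by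
          rw [hh'_def]; dsimp only; rw [hceq t (Ioo_subset_Icc_self ht)]; ring
        show HasDerivWithinAt (fun s => f s x ^ (1/p)) (h' t x) (Ioi t) t
        rw [h3]
        exact h2.hasDerivWithinAt)
      (by
        have : Continuous fun t => h' t x :=
          hh'c.comp (continuous_id.prodMk continuous_const)
        exact this.intervalIntegrable 0 1)
    rw [hmain]
    show f 1 x ^ (1/p) - f 0 x ^ (1/p) = _
    rw [he0, he1]
  -- identify T V with the Bochner integral
  have hTV : T V = ∫ t in (0:ℝ)..1, T (Kc t) :=
    (T.intervalIntegral_comp_comm hKint).symm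
  -- norms
  have hnormV : ‖T V‖ = (∫ x, |f₁ x ^ (1 / p) - f₀ x ^ (1 / p)| ^ p ∂lam) ^ (1 / p) := by
    rw [normT lam p hp]
    congr 1
    refine integral_congr_ae (Filter.Eventually.of_forall fun x => ?_)
    show |V x| ^ p = |f₁ x ^ (1 / p) - f₀ x ^ (1 / p)| ^ p
    rw [hVx x]
  -- speed identity on [0,1]
  have hspeed : ∀ t ∈ Icc (0:ℝ) 1, Fp lam p (f t) (f' t) = p * ‖T (Kc t)‖ := by
    intro t ht
    rw [normT lam p hp, Fp]
    have hI : (0:ℝ) ≤ ∫ x, |Kc t x| ^ p ∂lam := integral_nonneg fun x => by positivity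
    rw [← rpow_factor hp hI]
    congr 1
    rw [← integral_const_mul]
    refine integral_congr_ae (Filter.Eventually.of_forall fun x => ?_)
    show |f' t x / f t x| ^ p * f t x
      = p ^ p * |1 / p * f (c t) x ^ (1 / p - 1) * f' (c t) x| ^ p
    rw [hceq t ht]
    exact keyPt2 hp (hpos t ht x) (f' t x)
  -- final chain
  calc p * (∫ x, |f₁ x ^ (1 / p) - f₀ x ^ (1 / p)| ^ p ∂lam) ^ (1 / p)
      = p * ‖T V‖ := by rw [hnormV]
    _ ≤ p * ∫ t in (0:ℝ)..1, ‖T (Kc t)‖ := by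
        refine mul_le_mul_of_nonneg_left ?_ hp0.le
        rw [hTV]
        exact intervalIntegral.norm_integral_le_integral_norm zero_le_one
    _ = ∫ t in (0:ℝ)..1, p * ‖T (Kc t)‖ := by
        rw [intervalIntegral.integral_const_mul]
    _ = ∫ t in (0:ℝ)..1, Fp lam p (f t) (f' t) := by
        refine intervalIntegral.integral_congr fun t ht => ?_
        rw [uIcc_of_le zero_le_one] at ht
        exact (hspeed t ht).symm

end FRaux

/-- Geodesic convexity and the explicit geodesic distance of the `L^p`-Fisher–Rao metric
on positive densities: the infimal length over admissible paths from `f₀` to `f₁` equals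
`p·‖f₁^{1/p} − f₀^{1/p}‖_{L^p(λ)}`, attained by the constant-speed path
`f(t,x) = ((1−t)·f₀(x)^{1/p} + t·f₁(x)^{1/p})^p`. -/
theorem stmt_5 {M : Type*} [MetricSpace M] [CompactSpace M] [MeasurableSpace M] [BorelSpace M]
    (lam : Measure M) [IsFiniteMeasure lam] (p : ℝ) (hp : 1 < p)
    (f₀ f₁ : M → ℝ) (h₀c : Continuous f₀) (h₁c : Continuous f₁)
    (h₀ : ∀ x, 0 < f₀ x) (h₁ : ∀ x, 0 < f₁ x) :
    Admissible (fun t x => ((1 - t) * f₀ x ^ (1 / p) + t * f₁ x ^ (1 / p)) ^ p)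
      (fun t x => p * ((1 - t) * f₀ x ^ (1 / p) + t * f₁ x ^ (1 / p)) ^ (p - 1)
        * (f₁ x ^ (1 / p) - f₀ x ^ (1 / p))) f₀ f₁ ∧
    (∀ t ∈ Set.Icc (0 : ℝ) 1,
      Fp lam p (fun x => ((1 - t) * f₀ x ^ (1 / p) + t * f₁ x ^ (1 / p)) ^ p)
        (fun x => p * ((1 - t) * f₀ x ^ (1 / p) + t * f₁ x ^ (1 / p)) ^ (p - 1)
          * (f₁ x ^ (1 / p) - f₀ x ^ (1 / p)))
        = p * (∫ x, |f₁ x ^ (1 / p) - f₀ x ^ (1 / p)| ^ p ∂lam) ^ (1 / p)) ∧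
    (∫ t in (0 : ℝ)..1,
        Fp lam p (fun x => ((1 - t) * f₀ x ^ (1 / p) + t * f₁ x ^ (1 / p)) ^ p)
          (fun x => p * ((1 - t) * f₀ x ^ (1 / p) + t * f₁ x ^ (1 / p)) ^ (p - 1)
            * (f₁ x ^ (1 / p) - f₀ x ^ (1 / p))))
      = p * (∫ x, |f₁ x ^ (1 / p) - f₀ x ^ (1 / p)| ^ p ∂lam) ^ (1 / p) ∧
    (∀ f f' : ℝ → M → ℝ, Admissible f f' f₀ f₁ →
      p * (∫ x, |f₁ x ^ (1 / p) - f₀ x ^ (1 / p)| ^ p ∂lam) ^ (1 / p)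
        ≤ ∫ t in (0 : ℝ)..1, Fp lam p (f t) (f' t)) := by
  exact ⟨part1 p hp f₀ f₁ h₀c h₁c h₀ h₁,
    part2 lam p hp f₀ f₁ h₀ h₁,
    part3 lam p hp f₀ f₁ h₀ h₁,
    fun f f' hf => part4 lam p hp f₀ f₁ h₀ h₁ f f' hf⟩
end

section
/- Let p ∈ (1, ∞) with Hölder conjugate p* (1/p + 1/p* = 1), let u₀ > 0 and v ∈ ℝ. Set T = ∞ if v ≥ 0 and T = p·u₀/(−v) if v < 0. Then the function g(t) = (u₀^{1/p} + (t/p)·v·u₀^{1/p − 1})^p is positive on [0, T), satisfies g″ = (g′)²/(p*·g) with g(0) = u₀ and g′(0) = v, and it is the unique such solution: any positive twice-differentiable solution of this initial value problem on a subinterval [0, T′) coincides with g there and necessarily T′ ≤ T. If v < 0 then g(t) → 0 as t → T, so the solution exists globally (T = ∞) if and only if v ≥ 0. -/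
open Set Filter Real

/-- The explicit solution `g(t) = (u₀^{1/p} + (t/p)·v·u₀^{1/p−1})^p` of the pointwise
geodesic equation of the `L^p`-Fisher–Rao metric. -/
noncomputable def gsol (p u₀ v : ℝ) : ℝ → ℝ :=
  fun t => (u₀ ^ (1 / p) + (t / p) * v * u₀ ^ (1 / p - 1)) ^ p

namespace Stmt7Aux

noncomputable def A (p u₀ : ℝ) : ℝ := u₀ ^ (1/p)
noncomputable def B (p u₀ v : ℝ) : ℝ := v * u₀ ^ (1/p - 1) / p
noncomputable def L (p u₀ v : ℝ) : ℝ → ℝ := fun t => A p u₀ + t * B p u₀ v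

variable {p q u₀ v : ℝ}

lemma gsol_eq : gsol p u₀ v = fun t => L p u₀ v t ^ p := by
  funext t
  show (u₀ ^ (1 / p) + (t / p) * v * u₀ ^ (1 / p - 1)) ^ p = _
  unfold L A B
  congr 1
  ring

lemma A_pos (hu : 0 < u₀) : 0 < A p u₀ := Real.rpow_pos_of_pos hu _

lemma L_zero : L p u₀ v 0 = A p u₀ := by simp [L]

lemma mul_self_eq_A (hu : 0 < u₀) : u₀ * u₀ ^ (1/p - 1) = A p u₀ := by
  unfold A
  nth_rewrite 1 [← Real.rpow_one u₀]
  rw [← Real.rpow_add hu]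
  norm_num

lemma hasDerivAt_L (t : ℝ) : HasDerivAt (L p u₀ v) (B p u₀ v) t := by
  have := ((hasDerivAt_id t).mul_const (B p u₀ v)).const_add (A p u₀)
  rw [one_mul] at this
  exact this

lemma continuous_L : Continuous (L p u₀ v) := by
  unfold L; continuity

lemma TB (hp : 1 < p) (hu : 0 < u₀) (hv : v < 0) :
    (p * u₀ / (-v)) * B p u₀ v = -A p u₀ := by
  have hvne : v ≠ 0 := ne_of_lt hv
  have hpne : p ≠ 0 := by positivity
  rw [← mul_self_eq_A (p := p) hu]
  unfold B
  field_simp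

lemma L_pos (hp : 1 < p) (hu : 0 < u₀) {t : ℝ} (ht : 0 ≤ t)
    (htv : v < 0 → t < p * u₀ / (-v)) : 0 < L p u₀ v t := by
  have hpne : (0:ℝ) < p := by linarith
  have hA := A_pos (p := p) hu
  rcases le_or_gt 0 v with hv | hv
  · have hb : 0 ≤ B p u₀ v :=
      div_nonneg (mul_nonneg hv (Real.rpow_pos_of_pos hu _).le) hpne.le
    have := mul_nonneg ht hb
    unfold L; linarith
  · have hb : B p u₀ v < 0 :=
      div_neg_of_neg_of_pos (mul_neg_of_neg_of_pos hv (Real.rpow_pos_of_pos hu _)) hpne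
    have h1 : (p * u₀ / (-v)) * B p u₀ v < t * B p u₀ v :=
      mul_lt_mul_of_neg_right (htv hv) hb
    have h2 := TB hp hu hv
    unfold L; linarith

lemma hasDerivAt_gsol (hp : 1 < p) {t : ℝ} (ht : 0 < L p u₀ v t) :
    HasDerivAt (gsol p u₀ v) (B p u₀ v * p * L p u₀ v t ^ (p - 1)) t := by
  rw [gsol_eq]
  exact (hasDerivAt_L t).rpow_const (Or.inl (ne_of_gt ht))

lemma A_pow (hp : 1 < p) (hu : 0 < u₀) : A p u₀ ^ p = u₀ := by
  unfold A
  rw [← Real.rpow_mul hu.le, one_div, inv_mul_cancel₀ (by positivity : p ≠ 0), Real.rpow_one]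

lemma BpA (hp : 1 < p) (hu : 0 < u₀) : B p u₀ v * p * A p u₀ ^ (p - 1) = v := by
  have hpne : p ≠ 0 := by positivity
  have h1 : A p u₀ ^ (p - 1) = u₀ ^ (1 - 1/p) := by
    unfold A
    rw [← Real.rpow_mul hu.le]
    congr 1
    field_simp
  have h2 : u₀ ^ (1/p - 1) * u₀ ^ (1 - 1/p) = 1 := by
    rw [← Real.rpow_add hu]
    norm_num
  rw [h1]
  unfold B
  rw [div_mul_cancel₀ _ hpne, mul_assoc, h2, mul_one]

lemma q_ne (hp : 1 < p) (hpq : 1 / p + 1 / q = 1) : q ≠ 0 := by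
  intro h
  rw [h] at hpq
  norm_num at hpq
  exact absurd hpq (by linarith)

lemma q_mul (hp : 1 < p) (hpq : 1 / p + 1 / q = 1) : q * (p - 1) = p := by
  have hqne := q_ne hp hpq
  have hpne : p ≠ 0 := by positivity
  field_simp at hpq
  linarith

lemma q_pos (hp : 1 < p) (hpq : 1 / p + 1 / q = 1) : 0 < q := by
  have := q_mul hp hpq
  nlinarith

lemma ode_alg (hp : 1 < p) (hpq : 1 / p + 1 / q = 1) {x b : ℝ} (hx : 0 < x) :
    b * p * (b * (p - 1) * x ^ (p - 1 - 1)) = (b * p * x ^ (p - 1)) ^ 2 / (q * x ^ p) := by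
  have hqm := q_mul hp hpq
  have hq0 := q_pos hp hpq
  have hxp : (0:ℝ) < x ^ p := Real.rpow_pos_of_pos hx _
  have hX : (x ^ (p - 1)) ^ 2 = x ^ (p - 1 - 1) * x ^ p := by
    rw [sq, ← Real.rpow_add hx, ← Real.rpow_add hx]
    ring_nf
  rw [eq_div_iff (by positivity)]
  linear_combination (b ^ 2 * p * x ^ (p - 1 - 1) * x ^ p) * hqm - b ^ 2 * p ^ 2 * hX

lemma deriv2 (hp : 1 < p) {t : ℝ} (ht : 0 < L p u₀ v t) :
    deriv (deriv (gsol p u₀ v)) t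
      = B p u₀ v * p * (B p u₀ v * (p - 1) * L p u₀ v t ^ (p - 1 - 1)) := by
  have hS : IsOpen {s : ℝ | 0 < L p u₀ v s} :=
    isOpen_lt continuous_const continuous_L
  have hev : deriv (gsol p u₀ v) =ᶠ[nhds t] fun s => B p u₀ v * p * L p u₀ v s ^ (p - 1) := by
    filter_upwards [hS.mem_nhds ht] with s hs
    exact (hasDerivAt_gsol hp hs).deriv
  rw [hev.deriv_eq]
  exact (((hasDerivAt_L t).rpow_const (Or.inl (ne_of_gt ht))).const_mul (B p u₀ v * p)).deriv

lemma toIci {T' : ℝ} {f : ℝ → ℝ} {d : ℝ} {s : ℝ} (hs : s ∈ Ico (0:ℝ) T')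
    (hf : HasDerivWithinAt f d (Ico (0:ℝ) T') s) : HasDerivWithinAt f d (Ici s) s := by
  apply hf.mono_of_mem_nhdsWithin
  have h1 : Iio T' ∈ nhdsWithin s (Ici s) := mem_nhdsWithin_of_mem_nhds (Iio_mem_nhds hs.2)
  refine Filter.mem_of_superset (Filter.inter_mem h1 self_mem_nhdsWithin) ?_
  rintro x ⟨hx1, hx2⟩
  exact ⟨le_trans hs.1 hx2, hx1⟩

end Stmt7Aux

open Stmt7Aux

/-- Explicit solution and uniqueness for the pointwise geodesic ODE `g″ = (g′)²/(q·g)`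
with `g(0) = u₀ > 0`, `g′(0) = v`, on the maximal interval `[0,T)` with `T = ∞` for
`v ≥ 0` and `T = p·u₀/(−v)` for `v < 0`; if `v < 0` then `g(t) → 0` as `t → T`. -/
theorem stmt_7 (p q u₀ v : ℝ) (hp : 1 < p) (hpq : 1 / p + 1 / q = 1) (hu : 0 < u₀) :
    (∀ t : ℝ, 0 ≤ t → (v < 0 → t < p * u₀ / (-v)) → 0 < gsol p u₀ v t) ∧
    gsol p u₀ v 0 = u₀ ∧
    deriv (gsol p u₀ v) 0 = v ∧
    (∀ t : ℝ, 0 ≤ t → (v < 0 → t < p * u₀ / (-v)) →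
      deriv (deriv (gsol p u₀ v)) t = (deriv (gsol p u₀ v) t) ^ 2 / (q * gsol p u₀ v t)) ∧
    (∀ T' : ℝ, 0 < T' → ∀ h h' h'' : ℝ → ℝ,
      (∀ t ∈ Set.Ico (0 : ℝ) T', 0 < h t) →
      (∀ t ∈ Set.Ico (0 : ℝ) T', HasDerivWithinAt h (h' t) (Set.Ico 0 T') t) →
      (∀ t ∈ Set.Ico (0 : ℝ) T', HasDerivWithinAt h' (h'' t) (Set.Ico 0 T') t) →
      h 0 = u₀ → h' 0 = v →
      (∀ t ∈ Set.Ico (0 : ℝ) T', h'' t = (h' t) ^ 2 / (q * h t)) →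
      (∀ t ∈ Set.Ico (0 : ℝ) T', h t = gsol p u₀ v t) ∧ (v < 0 → T' ≤ p * u₀ / (-v))) ∧
    (v < 0 → Filter.Tendsto (gsol p u₀ v)
      (nhdsWithin (p * u₀ / (-v)) (Set.Iio (p * u₀ / (-v)))) (nhds 0)) := by
  have hpne : p ≠ 0 := by positivity
  have hL0 : 0 < L p u₀ v 0 := by rw [L_zero]; exact A_pos hu
  refine ⟨?_, ?_, ?_, ?_, ?_, ?_⟩
  · -- positivity
    intro t ht htv
    rw [gsol_eq]
    exact Real.rpow_pos_of_pos (L_pos hp hu ht htv) _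
  · -- initial value
    rw [gsol_eq]
    show L p u₀ v 0 ^ p = u₀
    rw [L_zero]
    exact A_pow hp hu
  · -- initial derivative
    rw [(hasDerivAt_gsol hp hL0).deriv, L_zero]
    exact BpA hp hu
  · -- the ODE
    intro t ht htv
    have hLt := L_pos hp hu ht htv
    rw [deriv2 hp hLt, (hasDerivAt_gsol hp hLt).deriv, gsol_eq]
    exact ode_alg hp hpq hLt
  · -- uniqueness
    intro T' hT' h h' h'' hpos hd hd' h00 h'0 hode
    have hqne := q_ne hp hpq
    set W : ℝ → ℝ := fun s => h s ^ (1/p) with hW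
    set W' : ℝ → ℝ := fun s => h' s * (1/p) * h s ^ (1/p - 1) with hW'
    have hdW : ∀ t ∈ Ico (0:ℝ) T', HasDerivWithinAt W (W' t) (Ico 0 T') t :=
      fun t ht => (hd t ht).rpow_const (Or.inl (hpos t ht).ne')
    have hdW' : ∀ t ∈ Ico (0:ℝ) T', HasDerivWithinAt W' 0 (Ico 0 T') t := by
      intro t ht
      have hx := hpos t ht
      have p1 : HasDerivWithinAt (fun s => h' s * (1/p)) (h'' t * (1/p)) (Ico (0:ℝ) T') t :=
        (hd' t ht).mul_const _
      have p2 : HasDerivWithinAt (fun s => h s ^ ((1:ℝ)/p - 1))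
          (h' t * (1/p - 1) * h t ^ (1/p - 1 - 1)) (Ico (0:ℝ) T') t :=
        (hd t ht).rpow_const (Or.inl hx.ne')
      have hprod := p1.mul p2
      have hsplit : h t ^ ((1:ℝ)/p - 1) = h t ^ ((1:ℝ)/p - 1 - 1) * h t := by
        rw [← Real.rpow_add_one hx.ne']
        congr 1
        ring
      have hkey : h'' t * (1/p) * h t ^ ((1:ℝ)/p - 1)
          + h' t * (1/p) * (h' t * (1/p - 1) * h t ^ ((1:ℝ)/p - 1 - 1)) = 0 := by
        rw [hode t ht, hsplit]
        have hxne : h t ≠ 0 := hx.ne'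
        generalize h t ^ ((1:ℝ)/p - 1 - 1) = X
        have hpi : p * p⁻¹ = 1 := mul_inv_cancel₀ hpne
        have hqi : q * q⁻¹ = 1 := mul_inv_cancel₀ hqne
        have hH : h t * (h t)⁻¹ = 1 := mul_inv_cancel₀ hxne
        linear_combination (h' t ^ 2 * X * p⁻¹ * q⁻¹) * hH + (h' t ^ 2 * X * p⁻¹) * hpq
      rw [hkey] at hprod
      exact hprod
    have hWconst : ∀ t ∈ Ico (0:ℝ) T', W' t = W' 0 := by
      intro t ht
      rcases eq_or_lt_of_le ht.1 with h0t | h0t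
      · rw [← h0t]
      · have hsub : Icc (0:ℝ) t ⊆ Ico 0 T' :=
          fun x hx => ⟨hx.1, lt_of_le_of_lt hx.2 ht.2⟩
        have hc : ContinuousOn W' (Icc 0 t) :=
          fun s hs => ((hdW' s (hsub hs)).continuousWithinAt).mono hsub
        have := constant_of_has_deriv_right_zero hc
          (fun s hs => toIci ⟨hs.1, lt_trans hs.2 ht.2⟩ (hdW' s ⟨hs.1, lt_trans hs.2 ht.2⟩))
        exact this t (right_mem_Icc.mpr ht.1)
    have hW'0 : W' 0 = v * (1/p) * u₀ ^ (1/p - 1) := by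
      simp only [hW', h00, h'0]
    have hWL : ∀ t ∈ Ico (0:ℝ) T', W t = L p u₀ v t := by
      intro t ht
      rcases eq_or_lt_of_le ht.1 with h0t | h0t
      · rw [← h0t, L_zero]
        simp only [hW, h00]
        rfl
      · have hsub : Icc (0:ℝ) t ⊆ Ico 0 T' :=
          fun x hx => ⟨hx.1, lt_of_le_of_lt hx.2 ht.2⟩
        have hmem' : ∀ s ∈ Ico (0:ℝ) t, s ∈ Ico (0:ℝ) T' :=
          fun s hs => ⟨hs.1, lt_trans hs.2 ht.2⟩
        have hLd : ∀ s ∈ Ico (0:ℝ) t, HasDerivWithinAt (L p u₀ v) (W' s) (Ici s) s := by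
          intro s hs
          have heq : W' s = B p u₀ v := by
            rw [hWconst s (hmem' s hs), hW'0]
            unfold B; ring
          rw [heq]
          exact (hasDerivAt_L s).hasDerivWithinAt
        have hWd : ∀ s ∈ Ico (0:ℝ) t, HasDerivWithinAt W (W' s) (Ici s) s :=
          fun s hs => toIci (hmem' s hs) (hdW s (hmem' s hs))
        have hcW : ContinuousOn W (Icc 0 t) :=
          fun s hs => ((hdW s (hsub hs)).continuousWithinAt).mono hsub
        have hcL : ContinuousOn (L p u₀ v) (Icc 0 t) := continuous_L.continuousOn
        have hi : W 0 = L p u₀ v 0 := by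
          rw [L_zero]; simp only [hW, h00]; rfl
        exact eq_of_has_deriv_right_eq hWd hLd hcW hcL hi t (right_mem_Icc.mpr ht.1)
    constructor
    · intro t ht
      rw [gsol_eq]
      show h t = L p u₀ v t ^ p
      rw [← hWL t ht]
      show h t = (h t ^ ((1:ℝ)/p)) ^ p
      rw [← Real.rpow_mul (hpos t ht).le, one_div, inv_mul_cancel₀ hpne, Real.rpow_one]
    · intro hv
      by_contra hc
      push_neg at hc
      have hT0 : 0 ≤ p * u₀ / (-v) := by
        apply div_nonneg (by positivity)
        linarith
      have hmem : p * u₀ / (-v) ∈ Ico (0:ℝ) T' := ⟨hT0, hc⟩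
      have h1 := hWL _ hmem
      have h2 := TB (v := v) hp hu hv
      have h3 : 0 < W (p * u₀ / (-v)) := Real.rpow_pos_of_pos (hpos _ hmem) _
      have h4 : L p u₀ v (p * u₀ / (-v)) = 0 := by
        unfold L; linarith
      rw [h4] at h1
      linarith
  · -- the limit
    intro hv
    rw [gsol_eq]
    have hcont : ContinuousAt (fun t => L p u₀ v t ^ p) (p * u₀ / (-v)) := by
      have h2 : ContinuousAt (fun x : ℝ => x ^ p) (L p u₀ v (p * u₀ / (-v))) :=
        Real.continuousAt_rpow_const _ _ (Or.inr (by linarith))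
      exact h2.comp continuous_L.continuousAt
    have h4 : L p u₀ v (p * u₀ / (-v)) = 0 := by
      have := TB (v := v) hp hu hv
      unfold L; linarith
    have hval : L p u₀ v (p * u₀ / (-v)) ^ p = 0 := by
      rw [h4]
      exact Real.zero_rpow hpne
    have := hcont.tendsto
    rw [hval] at this
    exact this.mono_left nhdsWithin_le_nhds
end

section
/- Let M be a compact smooth manifold, λ a finite Borel measure on M, and p ∈ (1, ∞). Then the closure in L^p(λ) of the set { f^{1/p} : f ∈ C^∞(M, ℝ), f(x) > 0 for all x ∈ M } equals { h ∈ L^p(λ) : h ≥ 0 λ-almost everywhere }. -/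
open MeasureTheory
open scoped Manifold ENNReal

set_option synthInstance.maxHeartbeats 1000000 in
set_option maxHeartbeats 1000000 in
/-- The metric completion of the space of smooth positive densities under the
`L^p`-Fisher–Rao distance, via the `p`-root transform: the closure in `L^p(λ)` of the set
of `p`-th roots of smooth positive functions on a compact smooth manifold `M` is the set
of almost-everywhere nonnegative elements of `L^p(λ)`. -/
theorem stmt_8 {E : Type*} [NormedAddCommGroup E] [NormedSpace ℝ E] [FiniteDimensional ℝ E]
    {H : Type*} [TopologicalSpace H] (IM : ModelWithCorners ℝ E H)
    {M : Type*} [TopologicalSpace M] [T2Space M] [ChartedSpace H M]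
    [IsManifold IM (⊤ : ℕ∞) M] [CompactSpace M]
    [MeasurableSpace M] [BorelSpace M]
    (lam : Measure M) [IsFiniteMeasure lam]
    (p : ℝ) (hp : 1 < p) [Fact (1 ≤ ENNReal.ofReal p)] :
    closure {h : Lp ℝ (ENNReal.ofReal p) lam |
        ∃ f : M → ℝ, ContMDiff IM (modelWithCornersSelf ℝ ℝ) (⊤ : ℕ∞) f ∧ (∀ x, 0 < f x) ∧
          ⇑h =ᵐ[lam] fun x => f x ^ (1 / p)}
      = {h : Lp ℝ (ENNReal.ofReal p) lam | ∀ᵐ x ∂lam, 0 ≤ h x} := by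
  have hp0 : (0 : ℝ) < p := one_pos.trans hp
  have hpne : p ≠ 0 := ne_of_gt hp0
  set q : ℝ≥0∞ := ENNReal.ofReal p with hqdef
  have hq_top : q ≠ ∞ := ENNReal.ofReal_ne_top
  haveI : TopologicalSpace.MetrizableSpace M := Manifold.metrizableSpace IM M
  apply Set.Subset.antisymm
  · -- closure of the set of p-roots of smooth positive functions is contained in
    -- the a.e. nonnegative functions, since the latter set is closed.
    refine closure_minimal ?_ ?_
    · rintro h ⟨f, hf, hfpos, hfe⟩
      filter_upwards [hfe] with x hx
      rw [hx]
      exact (Real.rpow_pos_of_pos (hfpos x) _).le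
    · have hset : {h : Lp ℝ q lam | ∀ᵐ x ∂lam, 0 ≤ h x}
          = (fun h : Lp ℝ q lam => Lp.negPart h) ⁻¹' {0} := by
        ext h
        simp only [Set.mem_setOf_eq, Set.mem_preimage, Set.mem_singleton_iff]
        constructor
        · intro hh
          apply Lp.ext
          filter_upwards [Lp.coeFn_negPart_eq_max h, Lp.coeFn_zero (E := ℝ) (p := q) (μ := lam),
            hh] with x hx h0 hhx
          rw [hx, h0]
          simp [max_eq_right, neg_nonpos.mpr hhx]
        · intro hh
          have h1 := Lp.coeFn_negPart_eq_max h
          rw [hh] at h1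
          filter_upwards [h1, Lp.coeFn_zero (E := ℝ) (p := q) (μ := lam)] with x hx h0
          have h2 : -h x ≤ max (-h x) 0 := le_max_left _ _
          rw [← hx, h0, Pi.zero_apply] at h2
          linarith
      rw [hset]
      exact IsClosed.preimage Lp.continuous_negPart isClosed_singleton
  · -- every a.e. nonnegative Lp function is in the closure
    intro h hh
    rw [Metric.mem_closure_iff]
    intro ε hε
    -- Step 1: approximate h by a continuous function
    have hdr : DenseRange (ContinuousMap.toLp q lam ℝ : C(M, ℝ) →L[ℝ] Lp ℝ q lam) :=
      ContinuousMap.toLp_denseRange ℝ lam ℝ hq_top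
    obtain ⟨u, hu⟩ := Metric.denseRange_iff.mp hdr h (ε / 3) (by positivity)
    set u' : Lp ℝ q lam := ContinuousMap.toLp q lam ℝ u with hu'def
    -- Step 2: the positive part of u, as a continuous function
    set up : C(M, ℝ) := ⟨fun x => max (u x) 0, u.continuous.max continuous_const⟩ with hupdef
    set v : Lp ℝ q lam := ContinuousMap.toLp q lam ℝ up with hvdef
    have hdist_hv : dist h v ≤ dist h u' := by
      rw [Lp.dist_def, Lp.dist_def]
      apply ENNReal.toReal_mono
      · rw [← eLpNorm_congr_ae (Lp.coeFn_sub h u')]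
        exact (Lp.eLpNorm_lt_top (h - u')).ne
      · apply eLpNorm_mono_ae
        have hvx' : ⇑v =ᵐ[lam] ⇑up := ContinuousMap.coeFn_toLp lam up
        have hux' : ⇑u' =ᵐ[lam] ⇑u := ContinuousMap.coeFn_toLp lam u
        filter_upwards [hh, hvx', hux'] with x hhx hvx hux
        simp only [Pi.sub_apply, Real.norm_eq_abs]
        rw [hvx, hux]
        calc |h x - up x| = |max (h x) 0 - max (u x) 0| := by
              rw [max_eq_left hhx]; rfl
          _ ≤ |h x - u x| := abs_max_sub_max_le_abs _ _ _
    have hupnonneg : ∀ x, 0 ≤ up x := fun x => le_max_right _ _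
    -- Step 3: approximate up + δ by a smooth positive function
    set T : ℝ := ((lam Set.univ) ^ q.toReal⁻¹).toReal with hTdef
    have hT0 : 0 ≤ T := ENNReal.toReal_nonneg
    set δ : ℝ := ε / 6 / (T + 1) with hδdef
    have hδ : 0 < δ := by positivity
    obtain ⟨g, hg⟩ := exists_contMDiffMap_forall_mem_convex_of_local_const IM (n := (⊤ : ℕ∞))
      (t := fun x => Metric.ball (up x + δ) δ) (fun x => convex_ball _ _)
      (by
        intro x
        refine ⟨up x + δ, ?_⟩
        have h1 : up ⁻¹' Metric.ball (up x) δ ∈ nhds x :=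
          up.continuous.continuousAt (Metric.ball_mem_nhds _ hδ)
        filter_upwards [h1] with y hy
        simp only [Metric.mem_ball, Real.dist_eq] at hy ⊢
        have : |up x - up y| < δ := by rwa [abs_sub_comm]
        calc |up x + δ - (up y + δ)| = |up x - up y| := by ring_nf
          _ < δ := this)
    have hgpos : ∀ x, 0 < g x := by
      intro x
      have := hg x
      simp only [Metric.mem_ball, Real.dist_eq] at this
      have h2 : g x - (up x + δ) > -δ := by
        have := abs_lt.mp this
        linarith [this.1]
      have := hupnonneg x
      linarith
    have hgbd : ∀ x, |g x - up x| ≤ 2 * δ := by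
      intro x
      have := hg x
      simp only [Metric.mem_ball, Real.dist_eq] at this
      have := abs_lt.mp this
      rw [abs_le]
      constructor <;> [linarith [this.1]; linarith [this.2]]
    set b : Lp ℝ q lam := ContinuousMap.toLp q lam ℝ ⟨⇑g, g.2.continuous⟩ with hbdef
    -- b is in the set
    have hb_mem : b ∈ {h : Lp ℝ q lam |
        ∃ f : M → ℝ, ContMDiff IM (modelWithCornersSelf ℝ ℝ) (⊤ : ℕ∞) f ∧ (∀ x, 0 < f x) ∧
          ⇑h =ᵐ[lam] fun x => f x ^ (1 / p)} := by
      refine ⟨fun x => g x ^ p, ?_, fun x => Real.rpow_pos_of_pos (hgpos x) p, ?_⟩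
      · intro x
        exact (Real.contDiffAt_rpow_const_of_ne (ne_of_gt (hgpos x))).contMDiffAt.comp x
          (g.2 x)
      · have hbx' : ⇑b =ᵐ[lam] ⇑g := ContinuousMap.coeFn_toLp lam (⟨⇑g, g.2.continuous⟩ : C(M, ℝ))
        filter_upwards [hbx'] with x hx
        rw [hx]
        show g x = (g x ^ p) ^ (1 / p)
        rw [← Real.rpow_mul (hgpos x).le, mul_one_div_cancel hpne, Real.rpow_one]
    -- Step 4: bound dist v b
    have hdist_vb : dist v b < ε / 3 := by
      have hbound : eLpNorm (⇑v - ⇑b) q lam ≤ lam Set.univ ^ q.toReal⁻¹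
          * ENNReal.ofReal (2 * δ) := by
        apply eLpNorm_le_of_ae_bound
        have hvx' : ⇑v =ᵐ[lam] ⇑up := ContinuousMap.coeFn_toLp lam up
        have hbx' : ⇑b =ᵐ[lam] ⇑g := ContinuousMap.coeFn_toLp lam (⟨⇑g, g.2.continuous⟩ : C(M, ℝ))
        filter_upwards [hvx', hbx'] with x hvx hbx
        simp only [Pi.sub_apply, Real.norm_eq_abs]
        rw [hvx, hbx, abs_sub_comm]
        exact hgbd x
      have hfin : lam Set.univ ^ q.toReal⁻¹ ≠ ∞ :=
        ENNReal.rpow_ne_top_of_nonneg (by positivity) (measure_ne_top lam _)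
      have h1 : dist v b ≤ T * (2 * δ) := by
        rw [Lp.dist_def]
        calc (eLpNorm (⇑v - ⇑b) q lam).toReal
            ≤ (lam Set.univ ^ q.toReal⁻¹ * ENNReal.ofReal (2 * δ)).toReal := by
              apply ENNReal.toReal_mono _ hbound
              exact ENNReal.mul_ne_top hfin ENNReal.ofReal_ne_top
          _ = T * (2 * δ) := by
              rw [ENNReal.toReal_mul, ENNReal.toReal_ofReal (by positivity : (0:ℝ) ≤ 2 * δ)]
      have h2 : T * (2 * δ) < ε / 3 := by
        have hT1 : (0 : ℝ) < T + 1 := by linarith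
        have : T * (2 * δ) = ε / 3 * (T / (T + 1)) := by
          rw [hδdef]; field_simp; ring
        rw [this]
        have : T / (T + 1) < 1 := (div_lt_one hT1).mpr (by linarith)
        nlinarith [hε]
      linarith
    refine ⟨b, hb_mem, ?_⟩
    calc dist h b ≤ dist h v + dist v b := dist_triangle _ _ _
      _ ≤ dist h u' + dist v b := by linarith
      _ < ε / 3 + ε / 3 := by
          have : dist h u' < ε / 3 := hu
          linarith
      _ < ε := by linarith
end

section
/- Let M be a compact metric space, μ a finite Borel measure on M with μ(M) > 0, and p ∈ (1, ∞). Let u, a, b ∈ C(M; ℝ) with u(x) ≠ 0 for all x ∈ M. Set A := ∫_M |u|^p dμ and I(φ, ψ) := ∫_M |u|^{p−2} φ ψ dμ. Then the function (r, s) ↦ (∫_M |u + r·a + s·b|^p dμ)^{2/p} is twice continuously differentiable on a neighborhood of (0, 0), and (1/2)·∂_r ∂_s (∫_M |u + r·a + s·b|^p dμ)^{2/p} |_{(0,0)} = (p−1)·A^{2/p − 1}·I(a, b) − (p−2)·A^{2/p − 2}·I(u, a)·I(u, b). -/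
open MeasureTheory

private lemma aux_rpow_succ {x : ℝ} (hx : x ≠ 0) (q r : ℝ) (h : r = q + 1) :
    x ^ q * x = x ^ r := by
  rw [h, Real.rpow_add_one hx]

private lemma aux_cont_rpow (q : ℝ) :
    ContinuousOn (fun t : ℝ => |t| ^ q) {t : ℝ | t ≠ 0} := fun t ht =>
  (((Real.continuousAt_rpow_const |t| q (Or.inl (abs_ne_zero.2 ht))).comp
    continuous_abs.continuousAt)).continuousWithinAt

private lemma aux_deriv_abs_rpow (p : ℝ) {t : ℝ} (ht : t ≠ 0) :
    HasDerivAt (fun s : ℝ => |s| ^ p) (p * (|t| ^ (p - 2) * t)) t := by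
  rcases ht.lt_or_gt with h | h
  · have h1 : HasDerivAt (fun s : ℝ => (-s) ^ p) (p * (-t) ^ (p - 1) * -1) t := by
      have := (Real.hasDerivAt_rpow_const (x := -t) (p := p)
        (Or.inl (by simpa using ht))).comp t (hasDerivAt_neg t)
      simpa [Function.comp_def] using this
    have h2 : (fun s : ℝ => |s| ^ p) =ᶠ[nhds t] fun s : ℝ => (-s) ^ p := by
      filter_upwards [Iio_mem_nhds h] with s hs
      rw [abs_of_neg hs]
    have h3 := h1.congr_of_eventuallyEq h2
    refine h3.congr_deriv ?_; symm
    rw [abs_of_neg h]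
    have key := aux_rpow_succ (x := -t) (by simpa using ht) (p - 2) (p - 1) (by ring)
    linear_combination (-p) * key
  · have h1 : HasDerivAt (fun s : ℝ => s ^ p) (p * t ^ (p - 1)) t :=
      Real.hasDerivAt_rpow_const (Or.inl ht)
    have h2 : (fun s : ℝ => |s| ^ p) =ᶠ[nhds t] fun s : ℝ => s ^ p := by
      filter_upwards [Ioi_mem_nhds h] with s hs
      rw [abs_of_pos hs]
    have h3 := h1.congr_of_eventuallyEq h2
    refine h3.congr_deriv ?_; symm
    rw [abs_of_pos h]
    have key := aux_rpow_succ ht (p - 2) (p - 1) (by ring)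
    linear_combination p * key

private lemma aux_deriv_signed (p : ℝ) {t : ℝ} (ht : t ≠ 0) :
    HasDerivAt (fun s : ℝ => |s| ^ (p - 2) * s) ((p - 1) * |t| ^ (p - 2)) t := by
  rcases ht.lt_or_gt with h | h
  · have h1 : HasDerivAt (fun s : ℝ => (-s) ^ (p - 2) * s)
        (((p - 2) * (-t) ^ (p - 2 - 1) * -1) * t + (-t) ^ (p - 2) * 1) t := by
      have hr : HasDerivAt (fun s : ℝ => (-s) ^ (p - 2)) ((p - 2) * (-t) ^ (p - 2 - 1) * -1) t := by
        have := (Real.hasDerivAt_rpow_const (x := -t) (p := p - 2)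
          (Or.inl (by simpa using ht))).comp t (hasDerivAt_neg t)
        simpa [Function.comp_def] using this
      exact hr.mul (hasDerivAt_id t)
    have h2 : (fun s : ℝ => |s| ^ (p - 2) * s) =ᶠ[nhds t] fun s : ℝ => (-s) ^ (p - 2) * s := by
      filter_upwards [Iio_mem_nhds h] with s hs
      rw [abs_of_neg hs]
    have h3 := h1.congr_of_eventuallyEq h2
    refine h3.congr_deriv ?_; symm
    rw [abs_of_neg h]
    have key := aux_rpow_succ (x := -t) (by simpa using ht) (p - 2 - 1) (p - 2) (by ring)
    linear_combination (2 - p) * key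
  · have h1 : HasDerivAt (fun s : ℝ => s ^ (p - 2) * s)
        (((p - 2) * t ^ (p - 2 - 1)) * t + t ^ (p - 2) * 1) t :=
      (Real.hasDerivAt_rpow_const (Or.inl ht)).mul (hasDerivAt_id t)
    have h2 : (fun s : ℝ => |s| ^ (p - 2) * s) =ᶠ[nhds t] fun s : ℝ => s ^ (p - 2) * s := by
      filter_upwards [Ioi_mem_nhds h] with s hs
      rw [abs_of_pos hs]
    have h3 := h1.congr_of_eventuallyEq h2
    refine h3.congr_deriv ?_; symm
    rw [abs_of_pos h]
    have key := aux_rpow_succ ht (p - 2 - 1) (p - 2) (by ring)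
    linear_combination (2 - p) * key

private lemma aux_integrable {M : Type*} [MetricSpace M] [CompactSpace M] [MeasurableSpace M]
    [BorelSpace M] (μ : Measure M) [IsFiniteMeasure μ] {E : Type*} [NormedAddCommGroup E]
    {h : M → E} (hh : Continuous h) : Integrable h μ :=
  hh.integrable_of_hasCompactSupport (HasCompactSupport.of_compactSpace h)

private lemma key {M : Type*} [MetricSpace M] [CompactSpace M] [MeasurableSpace M] [BorelSpace M]
    (μ : Measure M) [IsFiniteMeasure μ]
    (u a b g : M → ℝ) (hu : Continuous u) (ha : Continuous a) (hb : Continuous b)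
    (hg : Continuous g) (δ mh : ℝ) (hδ : 0 < δ) (hm : 0 < mh)
    (hw : ∀ rs : ℝ × ℝ, ‖rs‖ < 2 * δ → ∀ x, mh ≤ |u x + rs.1 * a x + rs.2 * b x|)
    (f f' : ℝ → ℝ) (hf : ∀ t, t ≠ 0 → HasDerivAt f (f' t) t)
    (hf' : ContinuousOn f' {t : ℝ | t ≠ 0})
    {rs₀ : ℝ × ℝ} (hrs₀ : rs₀ ∈ Metric.ball (0 : ℝ × ℝ) δ) :
    HasFDerivAt (fun rs : ℝ × ℝ => ∫ x, f (u x + rs.1 * a x + rs.2 * b x) * g x ∂μ)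
      ((∫ x, f' (u x + rs₀.1 * a x + rs₀.2 * b x) * g x * a x ∂μ) •
          ContinuousLinearMap.fst ℝ ℝ ℝ
        + (∫ x, f' (u x + rs₀.1 * a x + rs₀.2 * b x) * g x * b x ∂μ) •
          ContinuousLinearMap.snd ℝ ℝ ℝ) rs₀ := by
  classical
  have hrs₀' : ‖rs₀‖ < δ := by rwa [Metric.mem_ball, dist_zero_right] at hrs₀
  set l₁ := ContinuousLinearMap.fst ℝ ℝ ℝ with hl₁def
  set l₂ := ContinuousLinearMap.snd ℝ ℝ ℝ with hl₂def
  have hl₁ : ‖l₁‖ ≤ 1 := l₁.opNorm_le_bound zero_le_one fun z => by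
    simpa [hl₁def] using norm_fst_le z
  have hl₂ : ‖l₂‖ ≤ 1 := l₂.opNorm_le_bound zero_le_one fun z => by
    simpa [hl₂def] using norm_snd_le z
  obtain ⟨K, hK⟩ := isCompact_univ.exists_bound_of_continuousOn
    ((ha.abs.add (hb.abs.add (hg.abs.add hu.abs)))).continuousOn
  set C : ℝ := max K 0 + 1 with hCdef
  have hC : 0 < C := by positivity
  have habs : ∀ x, |a x| + (|b x| + (|g x| + |u x|)) ≤ C := by
    intro x
    have h1 := hK x trivial
    simp only [Real.norm_eq_abs, Pi.add_apply] at h1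
    have h2 := le_abs_self (|a x| + (|b x| + (|g x| + |u x|)))
    have h3 := le_max_left K 0
    simp only [hCdef]
    linarith
  have hCa : ∀ x, |a x| ≤ C := fun x => by
    have := habs x; have := abs_nonneg (b x); have := abs_nonneg (g x)
    have := abs_nonneg (u x); linarith
  have hCb : ∀ x, |b x| ≤ C := fun x => by
    have := habs x; have := abs_nonneg (a x); have := abs_nonneg (g x)
    have := abs_nonneg (u x); linarith
  have hCg : ∀ x, |g x| ≤ C := fun x => by
    have := habs x; have := abs_nonneg (a x); have := abs_nonneg (b x)
    have := abs_nonneg (u x); linarith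
  have hCu : ∀ x, |u x| ≤ C := fun x => by
    have := habs x; have := abs_nonneg (a x); have := abs_nonneg (b x)
    have := abs_nonneg (g x); linarith
  set W : ℝ := C + 2 * δ * C + 2 * δ * C with hWdef
  set S : Set ℝ := Set.Icc (-W) W ∩ {t : ℝ | mh ≤ |t|} with hSdef
  have hScompact : IsCompact S := isCompact_Icc.inter_right
    (isClosed_le continuous_const continuous_abs)
  have hSsub : S ⊆ {t : ℝ | t ≠ 0} := fun t ht => abs_pos.mp (lt_of_lt_of_le hm ht.2)
  have hfc : ContinuousOn f {t : ℝ | t ≠ 0} := fun t ht =>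
    ((hf t ht).continuousAt).continuousWithinAt
  obtain ⟨Cf', hCf'⟩ := hScompact.exists_bound_of_continuousOn (hf'.mono hSsub)
  set B : ℝ := max Cf' 0 with hBdef
  have hB0 : 0 ≤ B := le_max_right _ _
  have hB : ∀ t ∈ S, |f' t| ≤ B := fun t ht => le_trans
    (by rw [← Real.norm_eq_abs]; exact hCf' t ht) (le_max_left _ _)
  have hmem : ∀ rs : ℝ × ℝ, rs ∈ Metric.ball rs₀ δ → ∀ x,
      (u x + rs.1 * a x + rs.2 * b x) ∈ S := by
    intro rs hrs x
    have hn : ‖rs‖ < 2 * δ := by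
      have h1 : ‖rs - rs₀‖ < δ := by rwa [Metric.mem_ball, dist_eq_norm] at hrs
      calc ‖rs‖ = ‖rs - rs₀ + rs₀‖ := by rw [sub_add_cancel]
        _ ≤ ‖rs - rs₀‖ + ‖rs₀‖ := norm_add_le _ _
        _ < 2 * δ := by linarith
    refine ⟨?_, hw rs hn x⟩
    have h1 : |rs.1| ≤ ‖rs‖ := by rw [← Real.norm_eq_abs]; exact norm_fst_le rs
    have h2 : |rs.2| ≤ ‖rs‖ := by rw [← Real.norm_eq_abs]; exact norm_snd_le rs
    have e1 : |rs.1 * a x| ≤ 2 * δ * C := by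
      rw [abs_mul]
      exact mul_le_mul (by linarith) (hCa x) (abs_nonneg _) (by linarith [norm_nonneg rs])
    have e2 : |rs.2 * b x| ≤ 2 * δ * C := by
      rw [abs_mul]
      exact mul_le_mul (by linarith) (hCb x) (abs_nonneg _) (by linarith [norm_nonneg rs])
    have e3 : |u x + rs.1 * a x + rs.2 * b x| ≤ W := by
      calc |u x + rs.1 * a x + rs.2 * b x| ≤ |u x + rs.1 * a x| + |rs.2 * b x| := abs_add_le _ _
        _ ≤ |u x| + |rs.1 * a x| + |rs.2 * b x| := by linarith [abs_add_le (u x) (rs.1 * a x)]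
        _ ≤ W := by rw [hWdef]; linarith [hCu x]
    exact Set.mem_Icc.mpr (abs_le.mp e3)
  have hne : ∀ rs : ℝ × ℝ, rs ∈ Metric.ball rs₀ δ → ∀ x,
      (u x + rs.1 * a x + rs.2 * b x) ≠ 0 := fun rs hrs x => hSsub (hmem rs hrs x)
  have h00 : rs₀ ∈ Metric.ball rs₀ δ := Metric.mem_ball_self hδ
  have hwcont : ∀ rs : ℝ × ℝ, Continuous fun x => u x + rs.1 * a x + rs.2 * b x := fun rs =>
    (hu.add (continuous_const.mul ha)).add (continuous_const.mul hb)
  have hFcont : ∀ rs : ℝ × ℝ, rs ∈ Metric.ball rs₀ δ →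
      Continuous fun x => f (u x + rs.1 * a x + rs.2 * b x) * g x := fun rs hrs =>
    (hfc.comp_continuous (hwcont rs) (hne rs hrs)).mul hg
  have hF'cont : ∀ rs : ℝ × ℝ, rs ∈ Metric.ball rs₀ δ →
      Continuous fun x => f' (u x + rs.1 * a x + rs.2 * b x) := fun rs hrs =>
    hf'.comp_continuous (hwcont rs) (hne rs hrs)
  set F' : (ℝ × ℝ) → M → (ℝ × ℝ) →L[ℝ] ℝ := fun rs x =>
    (f' (u x + rs.1 * a x + rs.2 * b x) * g x) • (a x • l₁ + b x • l₂) with hF'def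
  have hmeas : ∀ᶠ rs in nhds rs₀, AEStronglyMeasurable
      (fun x => f (u x + rs.1 * a x + rs.2 * b x) * g x) μ := by
    filter_upwards [Metric.ball_mem_nhds rs₀ hδ] with rs hrs
    exact (hFcont rs hrs).aestronglyMeasurable
  have hint : Integrable (fun x => f (u x + rs₀.1 * a x + rs₀.2 * b x) * g x) μ :=
    aux_integrable μ (hFcont rs₀ h00)
  have hF'meas : AEStronglyMeasurable (F' rs₀) μ := by
    apply Continuous.aestronglyMeasurable
    exact ((hF'cont rs₀ h00).mul hg).smul
      ((ha.smul continuous_const).add (hb.smul continuous_const))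
  have hbound : ∀ᵐ x ∂μ, ∀ rs ∈ Metric.ball rs₀ δ, ‖F' rs x‖ ≤ B * C * (C + C) := by
    refine Filter.Eventually.of_forall fun x rs hrs => ?_
    simp only [hF'def]
    have e0 := norm_smul (f' (u x + rs.1 * a x + rs.2 * b x) * g x) (a x • l₁ + b x • l₂)
    rw [e0]
    have hb1 : ‖a x • l₁ + b x • l₂‖ ≤ C + C := by
      have h1 := norm_add_le (a x • l₁) (b x • l₂)
      have ea := norm_smul (a x) l₁
      have eb := norm_smul (b x) l₂
      rw [ea, eb, Real.norm_eq_abs, Real.norm_eq_abs] at h1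
      have t1 : |a x| * ‖l₁‖ ≤ C * 1 := mul_le_mul (hCa x) hl₁ (norm_nonneg _) hC.le
      have t2 : |b x| * ‖l₂‖ ≤ C * 1 := mul_le_mul (hCb x) hl₂ (norm_nonneg _) hC.le
      rw [mul_one] at t1 t2
      linarith
    have hb2 : ‖f' (u x + rs.1 * a x + rs.2 * b x) * g x‖ ≤ B * C := by
      rw [Real.norm_eq_abs, abs_mul]
      exact mul_le_mul (hB _ (hmem rs hrs x)) (hCg x) (abs_nonneg _) hB0
    exact mul_le_mul hb2 hb1 (norm_nonneg _) (by positivity)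
  have hdiff : ∀ᵐ x ∂μ, ∀ rs ∈ Metric.ball rs₀ δ,
      HasFDerivAt (fun rs : ℝ × ℝ => f (u x + rs.1 * a x + rs.2 * b x) * g x) (F' rs x) rs := by
    refine Filter.Eventually.of_forall fun x rs hrs => ?_
    have hwd : HasFDerivAt (fun rs : ℝ × ℝ => u x + rs.1 * a x + rs.2 * b x)
        (a x • l₁ + b x • l₂) rs := by
      have h1 : HasFDerivAt (fun rs : ℝ × ℝ => rs.1 * a x) (a x • l₁) rs :=
        hasFDerivAt_fst.mul_const (a x)
      have h2 : HasFDerivAt (fun rs : ℝ × ℝ => rs.2 * b x) (b x • l₂) rs :=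
        hasFDerivAt_snd.mul_const (b x)
      have h3 := ((hasFDerivAt_const (u x) rs).add h1).add h2
      rw [zero_add] at h3; exact h3
    have hcomp := (hf _ (hne rs hrs x)).comp_hasFDerivAt rs hwd
    have h4 := hcomp.mul_const (g x)
    have h5 : F' rs x = g x • ((f' (u x + rs.1 * a x + rs.2 * b x)) • (a x • l₁ + b x • l₂)) := by
      simp only [hF'def]; rw [smul_smul, mul_comm]
    rw [h5]
    exact h4
  have main := hasFDerivAt_integral_of_dominated_of_fderiv_le (Metric.ball_mem_nhds rs₀ hδ) hmeas hint hF'meas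
    hbound (integrable_const _) hdiff
  have hi1 : Integrable (fun x =>
      (f' (u x + rs₀.1 * a x + rs₀.2 * b x) * g x * a x) • l₁) μ :=
    (aux_integrable μ (((hF'cont rs₀ h00).mul hg).mul ha)).smul_const l₁
  have hi2 : Integrable (fun x =>
      (f' (u x + rs₀.1 * a x + rs₀.2 * b x) * g x * b x) • l₂) μ :=
    (aux_integrable μ (((hF'cont rs₀ h00).mul hg).mul hb)).smul_const l₂
  have heq : (∫ x, F' rs₀ x ∂μ)
      = (∫ x, f' (u x + rs₀.1 * a x + rs₀.2 * b x) * g x * a x ∂μ) • l₁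
        + (∫ x, f' (u x + rs₀.1 * a x + rs₀.2 * b x) * g x * b x ∂μ) • l₂ := by
    have e : ∀ x, F' rs₀ x
        = (f' (u x + rs₀.1 * a x + rs₀.2 * b x) * g x * a x) • l₁
          + (f' (u x + rs₀.1 * a x + rs₀.2 * b x) * g x * b x) • l₂ := fun x => by
      simp only [hF'def]; rw [smul_add, smul_smul, smul_smul]
    simp only [e]
    rw [integral_add hi1 hi2, integral_smul_const, integral_smul_const]
  rw [← heq]
  exact main

private lemma keyC {M : Type*} [MetricSpace M] [CompactSpace M] [MeasurableSpace M] [BorelSpace M]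
    (μ : Measure M) [IsFiniteMeasure μ]
    (u a b g₁ g₂ : M → ℝ) (hu : Continuous u) (ha : Continuous a) (hb : Continuous b)
    (hg₁ : Continuous g₁) (hg₂ : Continuous g₂) (δ mh : ℝ) (hδ : 0 < δ) (hm : 0 < mh)
    (hw : ∀ rs : ℝ × ℝ, ‖rs‖ < 2 * δ → ∀ x, mh ≤ |u x + rs.1 * a x + rs.2 * b x|)
    (h : ℝ → ℝ) (hh : ContinuousOn h {t : ℝ | t ≠ 0}) :
    ContinuousOn (fun rs : ℝ × ℝ => ∫ x, h (u x + rs.1 * a x + rs.2 * b x) * g₁ x * g₂ x ∂μ)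
      (Metric.ball (0 : ℝ × ℝ) δ) := by
  classical
  obtain ⟨K, hK⟩ := isCompact_univ.exists_bound_of_continuousOn
    ((ha.abs.add (hb.abs.add ((hg₁.abs.add hg₂.abs).add hu.abs)))).continuousOn
  set C : ℝ := max K 0 + 1 with hCdef
  have hC : 0 < C := by positivity
  have habs : ∀ x, |a x| + (|b x| + ((|g₁ x| + |g₂ x|) + |u x|)) ≤ C := by
    intro x
    have h1 := hK x trivial
    simp only [Real.norm_eq_abs, Pi.add_apply] at h1
    have h2 := le_abs_self (|a x| + (|b x| + ((|g₁ x| + |g₂ x|) + |u x|)))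
    have h3 := le_max_left K 0
    simp only [hCdef]
    linarith
  have pos : ∀ x : M, (0:ℝ) ≤ |a x| ∧ (0:ℝ) ≤ |b x| ∧ (0:ℝ) ≤ |g₁ x| ∧ (0:ℝ) ≤ |g₂ x|
      ∧ (0:ℝ) ≤ |u x| := fun x =>
    ⟨abs_nonneg _, abs_nonneg _, abs_nonneg _, abs_nonneg _, abs_nonneg _⟩
  have hCa : ∀ x, |a x| ≤ C := fun x => by have := habs x; obtain ⟨_,_,_,_,_⟩ := pos x; linarith
  have hCb : ∀ x, |b x| ≤ C := fun x => by have := habs x; obtain ⟨_,_,_,_,_⟩ := pos x; linarith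
  have hCg₁ : ∀ x, |g₁ x| ≤ C := fun x => by have := habs x; obtain ⟨_,_,_,_,_⟩ := pos x; linarith
  have hCg₂ : ∀ x, |g₂ x| ≤ C := fun x => by have := habs x; obtain ⟨_,_,_,_,_⟩ := pos x; linarith
  have hCu : ∀ x, |u x| ≤ C := fun x => by have := habs x; obtain ⟨_,_,_,_,_⟩ := pos x; linarith
  set W : ℝ := C + 2 * δ * C + 2 * δ * C with hWdef
  set S : Set ℝ := Set.Icc (-W) W ∩ {t : ℝ | mh ≤ |t|} with hSdef
  have hScompact : IsCompact S := isCompact_Icc.inter_right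
    (isClosed_le continuous_const continuous_abs)
  have hSsub : S ⊆ {t : ℝ | t ≠ 0} := fun t ht => abs_pos.mp (lt_of_lt_of_le hm ht.2)
  obtain ⟨Ch, hCh⟩ := hScompact.exists_bound_of_continuousOn (hh.mono hSsub)
  set B : ℝ := max Ch 0 with hBdef
  have hB0 : 0 ≤ B := le_max_right _ _
  have hB : ∀ t ∈ S, |h t| ≤ B := fun t ht => le_trans
    (by rw [← Real.norm_eq_abs]; exact hCh t ht) (le_max_left _ _)
  have hmem : ∀ rs : ℝ × ℝ, rs ∈ Metric.ball (0 : ℝ × ℝ) δ → ∀ x,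
      (u x + rs.1 * a x + rs.2 * b x) ∈ S := by
    intro rs hrs x
    have hn : ‖rs‖ < 2 * δ := by
      rw [Metric.mem_ball, dist_zero_right] at hrs; linarith
    refine ⟨?_, hw rs hn x⟩
    have h1 : |rs.1| ≤ ‖rs‖ := by rw [← Real.norm_eq_abs]; exact norm_fst_le rs
    have h2 : |rs.2| ≤ ‖rs‖ := by rw [← Real.norm_eq_abs]; exact norm_snd_le rs
    have e1 : |rs.1 * a x| ≤ 2 * δ * C := by
      rw [abs_mul]
      exact mul_le_mul (by linarith) (hCa x) (abs_nonneg _) (by linarith [norm_nonneg rs])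
    have e2 : |rs.2 * b x| ≤ 2 * δ * C := by
      rw [abs_mul]
      exact mul_le_mul (by linarith) (hCb x) (abs_nonneg _) (by linarith [norm_nonneg rs])
    have e3 : |u x + rs.1 * a x + rs.2 * b x| ≤ W := by
      calc |u x + rs.1 * a x + rs.2 * b x| ≤ |u x + rs.1 * a x| + |rs.2 * b x| := abs_add_le _ _
        _ ≤ |u x| + |rs.1 * a x| + |rs.2 * b x| := by linarith [abs_add_le (u x) (rs.1 * a x)]
        _ ≤ W := by rw [hWdef]; linarith [hCu x]
    exact Set.mem_Icc.mpr (abs_le.mp e3)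
  have hne : ∀ rs : ℝ × ℝ, rs ∈ Metric.ball (0 : ℝ × ℝ) δ → ∀ x,
      (u x + rs.1 * a x + rs.2 * b x) ≠ 0 := fun rs hrs x => hSsub (hmem rs hrs x)
  have hwcont : ∀ rs : ℝ × ℝ, Continuous fun x => u x + rs.1 * a x + rs.2 * b x := fun rs =>
    (hu.add (continuous_const.mul ha)).add (continuous_const.mul hb)
  intro rs₀ hrs₀
  apply ContinuousAt.continuousWithinAt
  apply continuousAt_of_dominated (bound := fun _ => B * C * C)
  · filter_upwards [Metric.isOpen_ball.eventually_mem hrs₀] with rs hrs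
    exact (((hh.comp_continuous (hwcont rs) (hne rs hrs)).mul hg₁).mul hg₂).aestronglyMeasurable
  · filter_upwards [Metric.isOpen_ball.eventually_mem hrs₀] with rs hrs
    refine Filter.Eventually.of_forall fun x => ?_
    rw [Real.norm_eq_abs, abs_mul, abs_mul]
    have t1 : |h (u x + rs.1 * a x + rs.2 * b x)| * |g₁ x| ≤ B * C :=
      mul_le_mul (hB _ (hmem rs hrs x)) (hCg₁ x) (abs_nonneg _) hB0
    exact mul_le_mul t1 (hCg₂ x) (abs_nonneg _) (by positivity)
  · exact integrable_const _
  · refine Filter.Eventually.of_forall fun x => ?_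
    have hwAt : ContinuousAt (fun rs : ℝ × ℝ => u x + rs.1 * a x + rs.2 * b x) rs₀ :=
      (((continuous_const.add (continuous_fst.mul continuous_const)).add
        (continuous_snd.mul continuous_const))).continuousAt
    have hhAt : ContinuousAt h (u x + rs₀.1 * a x + rs₀.2 * b x) :=
      hh.continuousAt (isOpen_ne.mem_nhds (hne rs₀ hrs₀ x))
    exact ((ContinuousAt.comp (f := fun rs : ℝ × ℝ => u x + rs.1 * a x + rs.2 * b x)
      hhAt hwAt).mul continuousAt_const).mul continuousAt_const


set_option maxHeartbeats 1000000

/-- The Hessian of the squared `L^p`-Fisher–Rao metric: the map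
`(r,s) ↦ (∫ |u + r·a + s·b|^p dμ)^{2/p}` is `C²` near `(0,0)` and one half of its mixed
second derivative at the origin equals
`(p−1)·A^{2/p−1}·I(a,b) − (p−2)·A^{2/p−2}·I(u,a)·I(u,b)`. -/
theorem stmt_9 {M : Type*} [MetricSpace M] [CompactSpace M] [MeasurableSpace M] [BorelSpace M]
    (μ : Measure M) [IsFiniteMeasure μ] (hμ : 0 < μ Set.univ)
    (p : ℝ) (hp : 1 < p)
    (u a b : M → ℝ) (hu : Continuous u) (ha : Continuous a) (hb : Continuous b)
    (hu0 : ∀ x, u x ≠ 0) :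
    (∃ U ∈ nhds ((0 : ℝ), (0 : ℝ)), ContDiffOn ℝ 2
        (fun rs : ℝ × ℝ =>
          (∫ x, |u x + rs.1 * a x + rs.2 * b x| ^ p ∂μ) ^ (2 / p)) U) ∧
    (1 / 2) * deriv (fun r => deriv (fun s =>
          (∫ x, |u x + r * a x + s * b x| ^ p ∂μ) ^ (2 / p)) 0) 0
      = (p - 1) * (∫ x, |u x| ^ p ∂μ) ^ (2 / p - 1)
          * (∫ x, |u x| ^ (p - 2) * a x * b x ∂μ)
        - (p - 2) * (∫ x, |u x| ^ p ∂μ) ^ (2 / p - 2)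
          * (∫ x, |u x| ^ (p - 2) * u x * a x ∂μ)
          * (∫ x, |u x| ^ (p - 2) * u x * b x ∂μ) := by
  classical
  have hp0 : (0:ℝ) < p := lt_trans one_pos hp
  have hne : Nonempty M := by
    by_contra h
    rw [not_nonempty_iff] at h
    have h2 : μ Set.univ = 0 := by
      rw [Set.univ_eq_empty_iff.mpr h]
      exact measure_empty
    exact absurd h2 hμ.ne'
  obtain ⟨x₀, -, hx₀'⟩ := isCompact_univ.exists_isMinOn Set.univ_nonempty hu.abs.continuousOn
  have hx₀ : ∀ x, x ∈ Set.univ → |u x₀| ≤ |u x| := fun x hx => hx₀' hx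
  set m : ℝ := |u x₀| with hmdef
  have hm : 0 < m := abs_pos.mpr (hu0 x₀)
  have hm2 : 0 < m / 2 := by linarith
  obtain ⟨K, hK⟩ := isCompact_univ.exists_bound_of_continuousOn (ha.abs.add hb.abs).continuousOn
  have hK' : ∀ x, |a x| + |b x| ≤ K := fun x => by
    have h1 := hK x trivial
    rw [Real.norm_eq_abs] at h1
    exact le_trans (le_abs_self _) h1
  have hK0 : 0 ≤ K := le_trans (by positivity) (hK' x₀)
  set δ : ℝ := m / (8 * (K + 1)) with hδdef
  have hδ : 0 < δ := by positivity
  have hδm : δ * (8 * (K + 1)) = m := div_mul_cancel₀ m (by positivity)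
  have hw : ∀ rs : ℝ × ℝ, ‖rs‖ < 2 * δ → ∀ x, m / 2 ≤ |u x + rs.1 * a x + rs.2 * b x| := by
    intro rs hrs x
    have h1 : |rs.1| ≤ ‖rs‖ := by rw [← Real.norm_eq_abs]; exact norm_fst_le rs
    have h2 : |rs.2| ≤ ‖rs‖ := by rw [← Real.norm_eq_abs]; exact norm_snd_le rs
    have ha0 := abs_nonneg (a x)
    have hb0 := abs_nonneg (b x)
    have hn0 := norm_nonneg rs
    have e1 : |rs.1 * a x + rs.2 * b x| ≤ 2 * δ * K := by
      have t0 : |rs.1 * a x + rs.2 * b x| ≤ |rs.1| * |a x| + |rs.2| * |b x| := by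
        calc |rs.1 * a x + rs.2 * b x| ≤ |rs.1 * a x| + |rs.2 * b x| := abs_add_le _ _
          _ = |rs.1| * |a x| + |rs.2| * |b x| := by rw [abs_mul, abs_mul]
      have t1 : |rs.1| * |a x| ≤ (2*δ) * |a x| := by nlinarith
      have t2 : |rs.2| * |b x| ≤ (2*δ) * |b x| := by nlinarith
      have t3 : (2*δ) * |a x| + (2*δ) * |b x| ≤ 2 * δ * K := by nlinarith [hK' x]
      linarith
    have e3 : 2 * δ * K ≤ m / 2 := by nlinarith [hδ.le, hK0]
    have e4 : m ≤ |u x| := hx₀ x trivial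
    have e5 := abs_sub_abs_le_abs_sub (u x) (-(rs.1 * a x + rs.2 * b x))
    rw [abs_neg, sub_neg_eq_add] at e5
    have e6 : u x + (rs.1 * a x + rs.2 * b x) = u x + rs.1 * a x + rs.2 * b x := by ring
    rw [e6] at e5
    linarith
  set l₁ := ContinuousLinearMap.fst ℝ ℝ ℝ with hl₁def
  set l₂ := ContinuousLinearMap.snd ℝ ℝ ℝ with hl₂def
  have hball : IsOpen (Metric.ball (0:ℝ×ℝ) δ) := Metric.isOpen_ball
  have hd₀ : ∀ t : ℝ, t ≠ 0 → HasDerivAt (fun t : ℝ => |t| ^ p) (p * (|t| ^ (p-2) * t)) t :=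
    fun t ht => aux_deriv_abs_rpow p ht
  have hd₁ : ∀ t : ℝ, t ≠ 0 → HasDerivAt (fun t : ℝ => p * (|t| ^ (p-2) * t))
      (p * ((p-1) * |t| ^ (p-2))) t := fun t ht => (aux_deriv_signed p ht).const_mul p
  have hc₁ : ContinuousOn (fun t : ℝ => p * (|t| ^ (p-2) * t)) {t : ℝ | t ≠ 0} :=
    continuousOn_const.mul ((aux_cont_rpow (p-2)).mul continuousOn_id)
  have hc₂ : ContinuousOn (fun t : ℝ => p * ((p-1) * |t| ^ (p-2))) {t : ℝ | t ≠ 0} :=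
    continuousOn_const.mul (continuousOn_const.mul (aux_cont_rpow (p-2)))
  have kF : ∀ rs₀ ∈ Metric.ball (0:ℝ×ℝ) δ, HasFDerivAt
      (fun rs : ℝ × ℝ => ∫ x, |u x + rs.1 * a x + rs.2 * b x| ^ p ∂μ)
      ((∫ x, p * (|u x + rs₀.1 * a x + rs₀.2 * b x| ^ (p-2)
          * (u x + rs₀.1 * a x + rs₀.2 * b x)) * a x ∂μ) • l₁
        + (∫ x, p * (|u x + rs₀.1 * a x + rs₀.2 * b x| ^ (p-2)
          * (u x + rs₀.1 * a x + rs₀.2 * b x)) * b x ∂μ) • l₂) rs₀ := by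
    intro rs₀ h
    have := key μ u a b (fun _ => 1) hu ha hb continuous_const δ (m/2) hδ hm2 hw
      (fun t => |t| ^ p) (fun t => p * (|t| ^ (p-2) * t)) hd₀ hc₁ h
    simpa using this
  have kA : ∀ rs₀ ∈ Metric.ball (0:ℝ×ℝ) δ, HasFDerivAt
      (fun rs : ℝ × ℝ => ∫ x, p * (|u x + rs.1 * a x + rs.2 * b x| ^ (p-2)
          * (u x + rs.1 * a x + rs.2 * b x)) * a x ∂μ)
      ((∫ x, p * ((p-1) * |u x + rs₀.1 * a x + rs₀.2 * b x| ^ (p-2)) * a x * a x ∂μ) • l₁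
        + (∫ x, p * ((p-1) * |u x + rs₀.1 * a x + rs₀.2 * b x| ^ (p-2)) * a x * b x ∂μ) • l₂)
      rs₀ := fun rs₀ h =>
    key μ u a b a hu ha hb ha δ (m/2) hδ hm2 hw
      (fun t => p * (|t| ^ (p-2) * t)) (fun t => p * ((p-1) * |t| ^ (p-2))) hd₁ hc₂ h
  have kB : ∀ rs₀ ∈ Metric.ball (0:ℝ×ℝ) δ, HasFDerivAt
      (fun rs : ℝ × ℝ => ∫ x, p * (|u x + rs.1 * a x + rs.2 * b x| ^ (p-2)
          * (u x + rs.1 * a x + rs.2 * b x)) * b x ∂μ)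
      ((∫ x, p * ((p-1) * |u x + rs₀.1 * a x + rs₀.2 * b x| ^ (p-2)) * b x * a x ∂μ) • l₁
        + (∫ x, p * ((p-1) * |u x + rs₀.1 * a x + rs₀.2 * b x| ^ (p-2)) * b x * b x ∂μ) • l₂)
      rs₀ := fun rs₀ h =>
    key μ u a b b hu ha hb hb δ (m/2) hδ hm2 hw
      (fun t => p * (|t| ^ (p-2) * t)) (fun t => p * ((p-1) * |t| ^ (p-2))) hd₁ hc₂ h
  have cAA := keyC μ u a b a a hu ha hb ha ha δ (m/2) hδ hm2 hw
      (fun t => p * ((p-1) * |t| ^ (p-2))) hc₂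
  have cAB := keyC μ u a b a b hu ha hb ha hb δ (m/2) hδ hm2 hw
      (fun t => p * ((p-1) * |t| ^ (p-2))) hc₂
  have cBA := keyC μ u a b b a hu ha hb hb ha δ (m/2) hδ hm2 hw
      (fun t => p * ((p-1) * |t| ^ (p-2))) hc₂
  have cBB := keyC μ u a b b b hu ha hb hb hb δ (m/2) hδ hm2 hw
      (fun t => p * ((p-1) * |t| ^ (p-2))) hc₂
  -- positivity of the integral
  have hFpos : ∀ rs : ℝ × ℝ, rs ∈ Metric.ball (0:ℝ×ℝ) δ →
      0 < ∫ x, |u x + rs.1 * a x + rs.2 * b x| ^ p ∂μ := by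
    intro rs hrs
    have hball' : ‖rs‖ < 2 * δ := by
      rw [Metric.mem_ball, dist_zero_right] at hrs; linarith
    have hcont : Continuous fun x => |u x + rs.1 * a x + rs.2 * b x| ^ p :=
      (((hu.add (continuous_const.mul ha)).add (continuous_const.mul hb)).abs).rpow_const
        (fun x => Or.inr hp0.le)
    have hint := aux_integrable μ hcont
    have hlow : (fun _ : M => ((m/2) ^ p : ℝ)) ≤ fun x => |u x + rs.1 * a x + rs.2 * b x| ^ p :=
      fun x => Real.rpow_le_rpow (by linarith) (hw rs hball' x) hp0.le
    have hmono := integral_mono (integrable_const _) hint hlow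
    rw [integral_const, smul_eq_mul] at hmono
    have hμ' : 0 < μ.real Set.univ := ENNReal.toReal_pos hμ.ne' (measure_ne_top μ _)
    have hpow : (0:ℝ) < (m/2) ^ p := Real.rpow_pos_of_pos hm2 p
    nlinarith
  -- C¹ smoothness of the two coefficient functions
  have hc1C : ContDiffOn ℝ 1
      (fun rs : ℝ × ℝ => ∫ x, p * (|u x + rs.1 * a x + rs.2 * b x| ^ (p-2)
        * (u x + rs.1 * a x + rs.2 * b x)) * a x ∂μ) (Metric.ball (0:ℝ×ℝ) δ) := by
    rw [show (1 : WithTop ℕ∞) = (0:ℕ) + 1 by norm_num,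
      contDiffOn_succ_iff_fderiv_of_isOpen hball]
    refine ⟨fun rs hrs => (kA rs hrs).differentiableAt.differentiableWithinAt,
      by simp, ?_⟩
    exact contDiffOn_zero.mpr (ContinuousOn.congr (f := fun rs : ℝ × ℝ =>
      (∫ x, p * ((p-1) * |u x + rs.1 * a x + rs.2 * b x| ^ (p-2)) * a x * a x ∂μ) • l₁
        + (∫ x, p * ((p-1) * |u x + rs.1 * a x + rs.2 * b x| ^ (p-2)) * a x * b x ∂μ) • l₂)
      ((cAA.smul continuousOn_const).add (cAB.smul continuousOn_const))
      (fun rs hrs => (kA rs hrs).fderiv))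
  have hc2C : ContDiffOn ℝ 1
      (fun rs : ℝ × ℝ => ∫ x, p * (|u x + rs.1 * a x + rs.2 * b x| ^ (p-2)
        * (u x + rs.1 * a x + rs.2 * b x)) * b x ∂μ) (Metric.ball (0:ℝ×ℝ) δ) := by
    rw [show (1 : WithTop ℕ∞) = (0:ℕ) + 1 by norm_num,
      contDiffOn_succ_iff_fderiv_of_isOpen hball]
    refine ⟨fun rs hrs => (kB rs hrs).differentiableAt.differentiableWithinAt,
      by simp, ?_⟩
    exact contDiffOn_zero.mpr (ContinuousOn.congr (f := fun rs : ℝ × ℝ =>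
      (∫ x, p * ((p-1) * |u x + rs.1 * a x + rs.2 * b x| ^ (p-2)) * b x * a x ∂μ) • l₁
        + (∫ x, p * ((p-1) * |u x + rs.1 * a x + rs.2 * b x| ^ (p-2)) * b x * b x ∂μ) • l₂)
      ((cBA.smul continuousOn_const).add (cBB.smul continuousOn_const))
      (fun rs hrs => (kB rs hrs).fderiv))
  have hC2F : ContDiffOn ℝ 2
      (fun rs : ℝ × ℝ => ∫ x, |u x + rs.1 * a x + rs.2 * b x| ^ p ∂μ)
      (Metric.ball (0:ℝ×ℝ) δ) := by
    rw [show (2 : WithTop ℕ∞) = (1:ℕ) + 1 by norm_num,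
      contDiffOn_succ_iff_fderiv_of_isOpen hball]
    refine ⟨fun rs hrs => (kF rs hrs).differentiableAt.differentiableWithinAt,
      by simp, ?_⟩
    exact ((hc1C.smul contDiffOn_const).add (hc2C.smul contDiffOn_const)).congr
      (fun rs hrs => (kF rs hrs).fderiv)
  constructor
  · exact ⟨Metric.ball (0:ℝ×ℝ) δ, Metric.ball_mem_nhds _ hδ,
      hC2F.rpow_const_of_ne (fun rs hrs => (hFpos rs hrs).ne')⟩
  -- second part : the mixed derivative
  have hm00 : ((0:ℝ), (0:ℝ)) ∈ Metric.ball (0:ℝ×ℝ) δ := Metric.mem_ball_self hδ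
  have hinner : ∀ r : ℝ, |r| < δ →
      deriv (fun s => (∫ x, |u x + r * a x + s * b x| ^ p ∂μ) ^ (2 / p)) 0
        = (∫ x, p * (|u x + r * a x| ^ (p-2) * (u x + r * a x)) * b x ∂μ) * (2 / p)
          * (∫ x, |u x + r * a x| ^ p ∂μ) ^ (2 / p - 1) := by
    intro r hr
    have hmem_r : ((r, (0:ℝ)) : ℝ × ℝ) ∈ Metric.ball (0:ℝ×ℝ) δ := by
      rw [Metric.mem_ball, dist_zero_right]
      have : ‖((r, (0:ℝ)) : ℝ × ℝ)‖ = |r| := by simp [Prod.norm_def]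
      rw [this]; exact hr
    have h1 : HasDerivAt (fun s => ∫ x, |u x + r * a x + s * b x| ^ p ∂μ)
        (∫ x, p * (|u x + r * a x| ^ (p-2) * (u x + r * a x)) * b x ∂μ) 0 := by
      have := (kF (r, 0) hmem_r).comp_hasDerivAt 0
        ((hasDerivAt_const 0 r).prodMk (hasDerivAt_id 0))
      simpa [hl₁def, hl₂def, Function.comp_def] using this
    have hA0 : (0:ℝ) < ∫ x, |u x + r * a x| ^ p ∂μ := by
      have := hFpos (r, 0) hmem_r
      simpa using this
    have hA0' : (∫ x, |u x + r * a x + 0 * b x| ^ p ∂μ) ≠ 0 := by simpa using hA0.ne'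
    have h2 := h1.rpow_const (p := 2 / p) (Or.inl hA0')
    simpa using h2.deriv
  have hout : (fun r => deriv (fun s =>
        (∫ x, |u x + r * a x + s * b x| ^ p ∂μ) ^ (2 / p)) 0)
      =ᶠ[nhds (0:ℝ)] (fun r =>
        (∫ x, p * (|u x + r * a x| ^ (p-2) * (u x + r * a x)) * b x ∂μ) * (2 / p)
          * (∫ x, |u x + r * a x| ^ p ∂μ) ^ (2 / p - 1)) := by
    filter_upwards [Metric.ball_mem_nhds (0:ℝ) hδ] with r hr
    exact hinner r (by simpa [Real.dist_eq] using hr)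
  rw [hout.deriv_eq]
  have hline : HasDerivAt (fun r : ℝ => ((r, (0:ℝ)) : ℝ × ℝ)) (((1:ℝ), (0:ℝ)) : ℝ × ℝ) 0 :=
    (hasDerivAt_id 0).prodMk (hasDerivAt_const 0 0)
  have hA : HasDerivAt (fun r => ∫ x, |u x + r * a x| ^ p ∂μ)
      (∫ x, p * (|u x| ^ (p-2) * u x) * a x ∂μ) 0 := by
    have := HasFDerivAt.comp_hasDerivAt (f := fun r : ℝ => ((r, (0:ℝ)) : ℝ × ℝ)) 0 (kF ((0:ℝ), (0:ℝ)) hm00) hline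
    simpa [hl₁def, hl₂def, Function.comp_def] using this
  have hB : HasDerivAt (fun r => ∫ x, p * (|u x + r * a x| ^ (p-2) * (u x + r * a x)) * b x ∂μ)
      (∫ x, p * ((p-1) * |u x| ^ (p-2)) * b x * a x ∂μ) 0 := by
    have := HasFDerivAt.comp_hasDerivAt (f := fun r : ℝ => ((r, (0:ℝ)) : ℝ × ℝ)) 0 (kB ((0:ℝ), (0:ℝ)) hm00) hline
    simpa [hl₁def, hl₂def, Function.comp_def] using this
  have hApos : (0:ℝ) < ∫ x, |u x| ^ p ∂μ := by
    have := hFpos ((0:ℝ), (0:ℝ)) hm00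
    simpa using this
  have hAne : (∫ x, |u x + 0 * a x| ^ p ∂μ) ≠ 0 := by simpa using hApos.ne'
  have hAr := hA.rpow_const (p := 2 / p - 1) (Or.inl hAne)
  have hprod := (hB.mul_const (2 / p)).mul hAr
  rw [HasDerivAt.deriv (f := fun r => (∫ x, p * (|u x + r * a x| ^ (p-2) * (u x + r * a x)) * b x ∂μ) * (2 / p) * (∫ x, |u x + r * a x| ^ p ∂μ) ^ (2 / p - 1)) hprod]
  simp only [zero_mul, add_zero]
  rw [show 2 / p - 1 - 1 = 2 / p - 2 by ring]
  have eA : (∫ x, p * (|u x| ^ (p-2) * u x) * a x ∂μ)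
      = p * ∫ x, |u x| ^ (p-2) * u x * a x ∂μ := by
    rw [← integral_const_mul]; congr 1; funext x; ring
  have eB : (∫ x, p * (|u x| ^ (p-2) * u x) * b x ∂μ)
      = p * ∫ x, |u x| ^ (p-2) * u x * b x ∂μ := by
    rw [← integral_const_mul]; congr 1; funext x; ring
  have eC : (∫ x, p * ((p-1) * |u x| ^ (p-2)) * b x * a x ∂μ)
      = (p * (p-1)) * ∫ x, |u x| ^ (p-2) * a x * b x ∂μ := by
    rw [← integral_const_mul]; congr 1; funext x; ring
  rw [eA, eB, eC]
  have hpne : p ≠ 0 := hp0.ne'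
  field_simp
  ring
end

section
/- Let M be a compact metric space, μ a finite Borel measure on M, and p ∈ (1, ∞). Let u, a ∈ C(M; ℝ) with u(x) ≠ 0 for all x ∈ M, and assume a is not equal to 0 μ-almost everywhere. Set A := ∫_M |u|^p dμ and I(φ, ψ) := ∫_M |u|^{p−2} φ ψ dμ. Then (p−1)·A^{2/p − 1}·I(a, a) − (p−2)·A^{2/p − 2}·I(u, a)² > 0. -/
open MeasureTheory

/-- Positive definiteness of the Hessian of the squared `L^p`-Fisher–Rao metric at a
nowhere-vanishing direction `u`, evaluated at a perturbation `a` that is not a.e. zero. -/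
theorem stmt_10 {M : Type*} [MetricSpace M] [CompactSpace M] [MeasurableSpace M] [BorelSpace M]
    (μ : Measure M) [IsFiniteMeasure μ] (p : ℝ) (hp : 1 < p)
    (u a : M → ℝ) (hu : Continuous u) (ha : Continuous a)
    (hu0 : ∀ x, u x ≠ 0) (ha0 : ¬ a =ᵐ[μ] 0) :
    0 < (p - 1) * (∫ x, |u x| ^ p ∂μ) ^ (2 / p - 1)
          * (∫ x, |u x| ^ (p - 2) * a x * a x ∂μ)
        - (p - 2) * (∫ x, |u x| ^ p ∂μ) ^ (2 / p - 2)
          * (∫ x, |u x| ^ (p - 2) * u x * a x ∂μ) ^ 2 := by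
  have hμ : μ ≠ 0 := by
    intro h
    exact ha0 (by simp [h, Filter.EventuallyEq])
  have habs : ∀ x, 0 < |u x| := fun x => abs_pos.mpr (hu0 x)
  -- continuity of the weight
  have hw : Continuous fun x => |u x| ^ (p - 2) :=
    hu.abs.rpow_const fun x => Or.inl (abs_ne_zero.mpr (hu0 x))
  have hup : Continuous fun x => |u x| ^ p :=
    hu.abs.rpow_const fun x => Or.inl (abs_ne_zero.mpr (hu0 x))
  have integ : ∀ f : M → ℝ, Continuous f → Integrable f μ := fun f hf =>
    hf.integrable_of_hasCompactSupport (isClosed_tsupport f).isCompact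
  set A := ∫ x, |u x| ^ p ∂μ with hAdef
  set J := ∫ x, |u x| ^ (p - 2) * a x * a x ∂μ with hJdef
  set K := ∫ x, |u x| ^ (p - 2) * u x * a x ∂μ with hKdef
  have hiA : Integrable (fun x => |u x| ^ p) μ := integ _ hup
  have hiJ : Integrable (fun x => |u x| ^ (p - 2) * a x * a x) μ :=
    integ _ ((hw.mul ha).mul ha)
  have hiK : Integrable (fun x => |u x| ^ (p - 2) * u x * a x) μ :=
    integ _ ((hw.mul hu).mul ha)
  -- key pointwise identity: |u|^(p-2) * u * u = |u|^p
  have hkey : ∀ x, |u x| ^ (p - 2) * u x * u x = |u x| ^ p := fun x => by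
    have h2 : |u x| ^ (p - 2) * |u x| ^ (2 : ℝ) = |u x| ^ p := by
      rw [← Real.rpow_add (habs x)]; ring_nf
    have : u x * u x = |u x| ^ (2 : ℝ) := by
      rw [Real.rpow_two, sq_abs, sq]
    rw [mul_assoc, this, h2]
  -- positivity of A
  have hA : 0 < A := by
    rw [hAdef, MeasureTheory.integral_pos_iff_support_of_nonneg
      (fun x => Real.rpow_nonneg (abs_nonneg _) _) hiA]
    have : Function.support (fun x => |u x| ^ p) = Set.univ := by
      ext x
      simp [Function.support, Real.rpow_pos_of_pos (habs x) p |>.ne']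
    rw [this]
    simpa using Measure.measure_univ_pos.mpr hμ
  -- positivity of J
  have hJ : 0 < J := by
    rw [hJdef, MeasureTheory.integral_pos_iff_support_of_nonneg
      (fun x => by
        show (0:ℝ) ≤ _
        rw [mul_assoc]
        exact mul_nonneg (Real.rpow_nonneg (abs_nonneg _) _) (mul_self_nonneg _)) hiJ]
    have hsupp : Function.support (fun x => |u x| ^ (p - 2) * a x * a x) =
        {x | a x ≠ 0} := by
      ext x
      have hwp : 0 < |u x| ^ (p - 2) := Real.rpow_pos_of_pos (habs x) _
      simp only [Function.support, Set.mem_setOf_eq, ne_eq, mul_eq_zero]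
      constructor
      · intro h ha'; exact h (Or.inr ha')
      · intro h hc
        rcases hc with (h1 | h1) | h1
        · exact hwp.ne' h1
        · exact h h1
        · exact h h1
    rw [hsupp]
    rw [Filter.EventuallyEq, ae_iff] at ha0
    simpa [pos_iff_ne_zero] using ha0
  -- Cauchy–Schwarz: K^2 ≤ A * J
  have hCS : K ^ 2 ≤ A * J := by
    have hnn : 0 ≤ ∫ x, |u x| ^ (p - 2) * (J * u x - K * a x) ^ 2 ∂μ := by
      apply integral_nonneg
      intro x
      exact mul_nonneg (Real.rpow_nonneg (abs_nonneg _) _) (sq_nonneg _)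
    have hexp : (fun x => |u x| ^ (p - 2) * (J * u x - K * a x) ^ 2) =
        fun x => J ^ 2 * (|u x| ^ p) - (2 * J * K) * (|u x| ^ (p - 2) * u x * a x)
          + K ^ 2 * (|u x| ^ (p - 2) * a x * a x) := by
      funext x
      rw [← hkey x]
      ring
    rw [hexp] at hnn
    have hint1 : Integrable
        (fun x => J ^ 2 * (|u x| ^ p) - (2 * J * K) * (|u x| ^ (p - 2) * u x * a x)) μ :=
      integ _ ((continuous_const.mul hup).sub (continuous_const.mul ((hw.mul hu).mul ha)))
    rw [integral_add hint1 (hiJ.const_mul _),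
        integral_sub (hiA.const_mul _) (hiK.const_mul _),
        integral_const_mul, integral_const_mul, integral_const_mul] at hnn
    rw [← hAdef, ← hJdef, ← hKdef] at hnn
    have : 0 ≤ J * (A * J - K ^ 2) := by nlinarith
    nlinarith
  -- powers of A
  have hA1 : (0:ℝ) < A ^ (2 / p - 1) := Real.rpow_pos_of_pos hA _
  have hA2 : (0:ℝ) < A ^ (2 / p - 2) := Real.rpow_pos_of_pos hA _
  have hAeq : A ^ (2 / p - 1) = A ^ (2 / p - 2) * A := by
    rw [← Real.rpow_add_one hA.ne' (2 / p - 2)]; ring_nf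
  rcases le_or_gt p 2 with h2 | h2
  · have h1 : 0 < (p - 1) * A ^ (2 / p - 1) * J :=
      mul_pos (mul_pos (by linarith) hA1) hJ
    nlinarith [mul_nonneg hA2.le (sq_nonneg K)]
  · have hK2 : (p - 2) * A ^ (2 / p - 2) * K ^ 2 ≤ (p - 2) * A ^ (2 / p - 2) * (A * J) := by
      exact mul_le_mul_of_nonneg_left hCS (mul_nonneg (by linarith) hA2.le)
    have : (p - 2) * A ^ (2 / p - 2) * (A * J) = (p - 2) * A ^ (2 / p - 1) * J := by
      rw [hAeq]; ring
    nlinarith [mul_pos hA1 hJ]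
end

section
/- Let M be a compact metric space, λ a finite Borel measure on M, and p ∈ (1, ∞). Let f : [0,1] × M → (0, ∞) be continuous with continuous partial derivative ∂_t f, and let δ : [0,1] × M → ℝ be continuous with continuous partial derivative ∂_t δ. For positive h define the p-energy E_p(h) = (1/p)·∫_0^1 ∫_M |∂_t h/h|^p h dλ dt. Then ε ↦ E_p(f + ε·δ) is defined for all sufficiently small |ε| and is differentiable at ε = 0, with (d/dε) E_p(f + ε·δ) |_{ε=0} = ∫_0^1 ∫_M ( |∂_t f/f|^{p−2}·(∂_t f/f)·∂_t δ − ((p−1)/p)·|∂_t f/f|^p·δ ) dλ dt, with the convention |0|^{p−2}·0 = 0. -/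
open MeasureTheory

lemma abs_rpow_mul_le' {p : ℝ} (hp : 1 < p) (y : ℝ) :
    |(|y| ^ (p - 2) * y)| ≤ |y| ^ (p - 1) := by
  rcases eq_or_ne y 0 with rfl | hy
  · simp [Real.rpow_nonneg]
  · have habs : |y| ≠ 0 := abs_ne_zero.2 hy
    rw [abs_mul, abs_of_nonneg (Real.rpow_nonneg (abs_nonneg y) _)]
    rw [show p - 1 = (p - 2) + 1 by ring, Real.rpow_add_one habs]

lemma cont_aux {p : ℝ} (hp : 1 < p) : Continuous (fun y : ℝ => |y| ^ (p - 2) * y) := by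
  rw [continuous_iff_continuousAt]
  intro y
  rcases eq_or_ne y 0 with rfl | hy
  · have h0 : |(0:ℝ)| ^ (p - 2) * 0 = 0 := mul_zero _
    rw [ContinuousAt, h0]
    apply squeeze_zero_norm (abs_rpow_mul_le' hp)
    have hc : Continuous (fun y : ℝ => |y| ^ (p - 1)) :=
      (Real.continuous_rpow_const (by linarith)).comp continuous_abs
    have := hc.continuousAt (x := 0)
    rw [ContinuousAt, abs_zero, Real.zero_rpow (sub_ne_zero.mpr hp.ne')] at this
    exact this
  · exact (((Real.continuousAt_rpow_const _ _ (Or.inl (abs_ne_zero.2 hy))).comp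
      continuous_abs.continuousAt).mul continuousAt_id)

lemma key_sq {p : ℝ} (hp : 1 < p) (y : ℝ) : |y| ^ (p - 2) * y * y = |y| ^ p := by
  rcases eq_or_ne y 0 with rfl | hy
  · simp [Real.zero_rpow (show p ≠ 0 by positivity)]
  · have habs : (0:ℝ) < |y| := abs_pos.2 hy
    have h2 : y * y = |y| * |y| := by
      rcases abs_cases y with ⟨h, _⟩ | ⟨h, _⟩ <;> rw [h] <;> ring
    rw [mul_assoc, h2, ← mul_assoc, ← Real.rpow_add_one habs.ne', ← Real.rpow_add_one habs.ne']
    congr 1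
    ring

lemma pt_val {p : ℝ} (hp : 1 < p) (u v b a : ℝ) (hv : v ≠ 0) :
    (1 / p) * (p * (|u / v| ^ (p - 2) * (u / v))
          * ((b * v - u * a) / v ^ 2) * v + |u / v| ^ p * a)
    = |u / v| ^ (p - 2) * (u / v) * b - (p - 1) / p * |u / v| ^ p * a := by
  have hp0 : p ≠ 0 := by positivity
  set Q := u / v with hQ
  set X := |Q| ^ (p - 2) * Q with hX
  set Y := |Q| ^ p with hY
  have h1 : (b * v - u * a) / v ^ 2 * v = b - Q * a := by
    rw [hQ]; field_simp
  have h2 : X * Q = Y := key_sq hp Q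
  calc (1 / p) * (p * X * ((b * v - u * a) / v ^ 2) * v + Y * a)
      = X * ((b * v - u * a) / v ^ 2 * v) + (1 / p) * Y * a := by
        field_simp
    _ = X * (b - Q * a) + (1 / p) * Y * a := by rw [h1]
    _ = X * b - X * Q * a + (1 / p) * Y * a := by ring
    _ = X * b - Y * a + (1 / p) * Y * a := by rw [h2]
    _ = X * b - (p - 1) / p * Y * a := by field_simp; ring

lemma pt_deriv {p : ℝ} (hp : 1 < p) (u v b a ε : ℝ) (hv : v + ε * a ≠ 0) :
    HasDerivAt (fun e : ℝ => |(u + e * b) / (v + e * a)| ^ p * (v + e * a))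
      (p * (|(u + ε * b) / (v + ε * a)| ^ (p - 2) * ((u + ε * b) / (v + ε * a)))
          * ((b * (v + ε * a) - (u + ε * b) * a) / (v + ε * a) ^ 2) * (v + ε * a)
        + |(u + ε * b) / (v + ε * a)| ^ p * a) ε := by
  have h1 : HasDerivAt (fun e : ℝ => u + e * b) b ε := by
    simpa [mul_comm] using (hasDerivAt_id ε).const_mul b |>.const_add u
  have h2 : HasDerivAt (fun e : ℝ => v + e * a) a ε := by
    simpa [mul_comm] using (hasDerivAt_id ε).const_mul a |>.const_add v
  have hq : HasDerivAt (fun e : ℝ => (u + e * b) / (v + e * a))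
      ((b * (v + ε * a) - (u + ε * b) * a) / (v + ε * a) ^ 2) ε := h1.div h2 hv
  have habs := hasDerivAt_abs_rpow ((u + ε * b) / (v + ε * a)) hp
  have hcomp := (habs.comp ε hq)
  have := hcomp.mul h2
  convert this using 1
  case e'_4 => rfl
  case e'_5 => rfl
  case e'_8 => rfl
  simp only [Function.comp_apply]
  ring

lemma est {p c C u v b a ε : ℝ} (hp : 1 < p) (hc : 0 < c) (hC : 1 ≤ C)
    (hv : c ≤ v) (hvC : |v| ≤ C) (hu : |u| ≤ C) (ha : |a| ≤ C) (hb : |b| ≤ C)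
    (hε1 : |ε| ≤ 1) (hε2 : |ε| ≤ c / (2 * C)) :
    c / 2 ≤ v + ε * a ∧
    |p * (|(u + ε * b) / (v + ε * a)| ^ (p - 2) * ((u + ε * b) / (v + ε * a)))
        * ((b * (v + ε * a) - (u + ε * b) * a) / (v + ε * a) ^ 2) * (v + ε * a)
      + |(u + ε * b) / (v + ε * a)| ^ p * a|
      ≤ p * ((2 * C) / (c / 2)) ^ (p - 1) * ((4 * C ^ 2) / ((c / 2) ^ 2)) * (2 * C)
        + ((2 * C) / (c / 2)) ^ p * C ∧
    |(|(u + ε * b) / (v + ε * a)| ^ p * (v + ε * a))| ≤ ((2 * C) / (c / 2)) ^ p * (2 * C) := by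
  have hCpos : (0:ℝ) < C := lt_of_lt_of_le one_pos hC
  have hcC : c ≤ C := le_trans (hv.trans (le_abs_self v)) hvC
  have hεa : |ε * a| ≤ c / 2 := by
    rw [abs_mul]
    calc |ε| * |a| ≤ (c / (2 * C)) * C :=
          mul_le_mul hε2 ha (abs_nonneg _) (by positivity)
      _ = c / 2 := by field_simp
  have hw : c / 2 ≤ v + ε * a := by nlinarith [neg_abs_le (ε * a)]
  have hwpos : 0 < v + ε * a := lt_of_lt_of_le (by positivity) hw
  have hwC : |v + ε * a| ≤ 2 * C := by
    calc |v + ε * a| ≤ |v| + |ε * a| := abs_add_le _ _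
      _ ≤ 2 * C := by nlinarith
  have hU : |u + ε * b| ≤ 2 * C := by
    calc |u + ε * b| ≤ |u| + |ε| * |b| := by rw [← abs_mul]; exact abs_add_le _ _
      _ ≤ C + 1 * C := by
          have := mul_le_mul hε1 hb (abs_nonneg _) zero_le_one
          linarith
      _ = 2 * C := by ring
  set w := v + ε * a with hwdef
  set U := u + ε * b with hUdef
  have hQ : |U / w| ≤ (2 * C) / (c / 2) := by
    rw [abs_div, abs_of_pos hwpos]
    exact div_le_div₀ (by positivity) hU (by positivity) hw
  have hQ0 : (0:ℝ) ≤ (2 * C) / (c / 2) := by positivity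
  have hq' : |(b * w - U * a) / w ^ 2| ≤ (4 * C ^ 2) / ((c / 2) ^ 2) := by
    rw [abs_div, abs_of_pos (pow_pos hwpos 2)]
    have hnum : |b * w - U * a| ≤ 4 * C ^ 2 := by
      calc |b * w - U * a| ≤ |b * w| + |U * a| := abs_sub _ _
        _ = |b| * |w| + |U| * |a| := by rw [abs_mul, abs_mul]
        _ ≤ C * (2 * C) + (2 * C) * C := by
            have h1 := mul_le_mul hb hwC (abs_nonneg _) (le_of_lt hCpos)
            have h2 := mul_le_mul hU ha (abs_nonneg _) (by positivity)
            linarith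
        _ = 4 * C ^ 2 := by ring
    exact div_le_div₀ (by positivity) hnum (by positivity)
      (by nlinarith [sq_abs w, abs_of_pos hwpos])
  refine ⟨hw, ?_, ?_⟩
  · have hX : |(|U / w| ^ (p - 2) * (U / w))| ≤ ((2 * C) / (c / 2)) ^ (p - 1) :=
      (abs_rpow_mul_le' hp _).trans
        (Real.rpow_le_rpow (abs_nonneg _) hQ (by linarith))
    have hYp : |U / w| ^ p ≤ ((2 * C) / (c / 2)) ^ p :=
      Real.rpow_le_rpow (abs_nonneg _) hQ (by linarith)
    have e1 : |p * (|U / w| ^ (p - 2) * (U / w)) * ((b * w - U * a) / w ^ 2) * w|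
        = p * |(|U / w| ^ (p - 2) * (U / w))| * |(b * w - U * a) / w ^ 2| * |w| := by
      rw [abs_mul, abs_mul, abs_mul, abs_of_pos (by linarith : (0:ℝ) < p)]
    have e2 : |(|U / w| ^ p * a)| = |U / w| ^ p * |a| := by
      rw [abs_mul, abs_of_nonneg (Real.rpow_nonneg (abs_nonneg _) p)]
    calc |p * (|U / w| ^ (p - 2) * (U / w)) * ((b * w - U * a) / w ^ 2) * w
          + |U / w| ^ p * a|
        ≤ |p * (|U / w| ^ (p - 2) * (U / w)) * ((b * w - U * a) / w ^ 2) * w|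
          + |(|U / w| ^ p * a)| := abs_add_le _ _
      _ = p * |(|U / w| ^ (p - 2) * (U / w))| * |(b * w - U * a) / w ^ 2| * |w|
          + |U / w| ^ p * |a| := by rw [e1, e2]
      _ ≤ p * ((2 * C) / (c / 2)) ^ (p - 1) * ((4 * C ^ 2) / ((c / 2) ^ 2)) * (2 * C)
          + ((2 * C) / (c / 2)) ^ p * C := by
          gcongr
  · rw [abs_mul, abs_of_nonneg (Real.rpow_nonneg (abs_nonneg _) p)]
    have hYp : |U / w| ^ p ≤ ((2 * C) / (c / 2)) ^ p :=
      Real.rpow_le_rpow (abs_nonneg _) hQ (by linarith)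
    have := mul_le_mul hYp hwC (abs_nonneg _) (Real.rpow_nonneg hQ0 p)
    linarith

/-- First variation of the `p`-energy `E_p(h) = (1/p)·∫₀¹∫ |∂_t h/h|^p h dλ dt` of the
`L^p`-Fisher–Rao metric along a path of positive densities `f` in the direction `δ`:
`ε ↦ E_p(f + ε·δ)` is defined for small `|ε|` and differentiable at `0`, with derivative
`∫₀¹∫ (|∂_t f/f|^{p−2}(∂_t f/f)·∂_t δ − ((p−1)/p)·|∂_t f/f|^p·δ) dλ dt`. -/
theorem stmt_13 {M : Type*} [MetricSpace M] [CompactSpace M] [MeasurableSpace M] [BorelSpace M]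
    (lam : Measure M) [IsFiniteMeasure lam] (p : ℝ) (hp : 1 < p)
    (f f' δ δ' : ℝ → M → ℝ)
    (hf_cont : ContinuousOn (fun q : ℝ × M => f q.1 q.2) (Set.Icc 0 1 ×ˢ Set.univ))
    (hf_pos : ∀ t ∈ Set.Icc (0 : ℝ) 1, ∀ x, 0 < f t x)
    (hf'_cont : ContinuousOn (fun q : ℝ × M => f' q.1 q.2) (Set.Icc 0 1 ×ˢ Set.univ))
    (hf_deriv : ∀ x, ∀ t ∈ Set.Icc (0 : ℝ) 1,
      HasDerivWithinAt (fun s => f s x) (f' t x) (Set.Icc 0 1) t)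
    (hδ_cont : ContinuousOn (fun q : ℝ × M => δ q.1 q.2) (Set.Icc 0 1 ×ˢ Set.univ))
    (hδ'_cont : ContinuousOn (fun q : ℝ × M => δ' q.1 q.2) (Set.Icc 0 1 ×ˢ Set.univ))
    (hδ_deriv : ∀ x, ∀ t ∈ Set.Icc (0 : ℝ) 1,
      HasDerivWithinAt (fun s => δ s x) (δ' t x) (Set.Icc 0 1) t) :
    (∃ ε₀ > (0 : ℝ), ∀ ε : ℝ, |ε| < ε₀ →
      ∀ t ∈ Set.Icc (0 : ℝ) 1, ∀ x, 0 < f t x + ε * δ t x) ∧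
    HasDerivAt (fun ε : ℝ => (1 / p) * ∫ t in (0 : ℝ)..1, ∫ x,
        |(f' t x + ε * δ' t x) / (f t x + ε * δ t x)| ^ p * (f t x + ε * δ t x) ∂lam)
      (∫ t in (0 : ℝ)..1, ∫ x,
        (|f' t x / f t x| ^ (p - 2) * (f' t x / f t x) * δ' t x
          - ((p - 1) / p) * |f' t x / f t x| ^ p * δ t x) ∂lam) 0 := by
  rcases isEmpty_or_nonempty M with hM | hM
  · constructor
    · exact ⟨1, one_pos, fun ε _ t _ x => isEmptyElim x⟩
    · have hz : lam = 0 := lam.eq_zero_of_isEmpty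
      simp only [hz, integral_zero_measure, intervalIntegral.integral_zero, mul_zero]
      exact hasDerivAt_const 0 0
  -- Nonempty case
  have hK : IsCompact (Set.Icc (0:ℝ) 1 ×ˢ (Set.univ : Set M)) :=
    isCompact_Icc.prod isCompact_univ
  have hKne : (Set.Icc (0:ℝ) 1 ×ˢ (Set.univ : Set M)).Nonempty :=
    ⟨(0, Classical.arbitrary M), Set.mk_mem_prod (Set.left_mem_Icc.2 zero_le_one) (Set.mem_univ _)⟩
  obtain ⟨q0, hq0, hq0min⟩ := hK.exists_isMinOn hKne hf_cont
  set c := f q0.1 q0.2 with hcdef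
  have hc : 0 < c := hf_pos q0.1 hq0.1 q0.2
  have hmin : ∀ t ∈ Set.Icc (0:ℝ) 1, ∀ x : M, c ≤ f t x := fun t ht x =>
    hq0min (Set.mk_mem_prod ht (Set.mem_univ x))
  obtain ⟨C1, hC1⟩ := hK.exists_bound_of_continuousOn hf_cont
  obtain ⟨C2, hC2⟩ := hK.exists_bound_of_continuousOn hf'_cont
  obtain ⟨C3, hC3⟩ := hK.exists_bound_of_continuousOn hδ_cont
  obtain ⟨C4, hC4⟩ := hK.exists_bound_of_continuousOn hδ'_cont
  set C := |C1| + |C2| + |C3| + |C4| + 1 with hCdef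
  have habs1 := abs_nonneg C1
  have habs2 := abs_nonneg C2
  have habs3 := abs_nonneg C3
  have habs4 := abs_nonneg C4
  have hC : 1 ≤ C := by rw [hCdef]; linarith
  have hCpos : (0:ℝ) < C := by linarith
  have hC1' : ∀ t ∈ Set.Icc (0:ℝ) 1, ∀ x : M, |f t x| ≤ C := fun t ht x => by
    have := hC1 (t, x) (Set.mk_mem_prod ht (Set.mem_univ x))
    rw [Real.norm_eq_abs] at this
    have h2 := le_abs_self C1
    rw [hCdef]; linarith
  have hC2' : ∀ t ∈ Set.Icc (0:ℝ) 1, ∀ x : M, |f' t x| ≤ C := fun t ht x => by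
    have := hC2 (t, x) (Set.mk_mem_prod ht (Set.mem_univ x))
    rw [Real.norm_eq_abs] at this
    have h2 := le_abs_self C2
    rw [hCdef]; linarith
  have hC3' : ∀ t ∈ Set.Icc (0:ℝ) 1, ∀ x : M, |δ t x| ≤ C := fun t ht x => by
    have := hC3 (t, x) (Set.mk_mem_prod ht (Set.mem_univ x))
    rw [Real.norm_eq_abs] at this
    have h2 := le_abs_self C3
    rw [hCdef]; linarith
  have hC4' : ∀ t ∈ Set.Icc (0:ℝ) 1, ∀ x : M, |δ' t x| ≤ C := fun t ht x => by
    have := hC4 (t, x) (Set.mk_mem_prod ht (Set.mem_univ x))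
    rw [Real.norm_eq_abs] at this
    have h2 := le_abs_self C4
    rw [hCdef]; linarith
  set ε₀ := min 1 (c / (2 * C)) with hε₀def
  have hε₀pos : 0 < ε₀ := lt_min one_pos (by positivity)
  have hε₀1 : ε₀ ≤ 1 := min_le_left _ _
  have hε₀2 : ε₀ ≤ c / (2 * C) := min_le_right _ _
  have hEST : ∀ ε : ℝ, |ε| < ε₀ → ∀ t ∈ Set.Icc (0:ℝ) 1, ∀ x : M,
      c / 2 ≤ f t x + ε * δ t x ∧
      |p * (|(f' t x + ε * δ' t x) / (f t x + ε * δ t x)| ^ (p - 2)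
            * ((f' t x + ε * δ' t x) / (f t x + ε * δ t x)))
          * ((δ' t x * (f t x + ε * δ t x) - (f' t x + ε * δ' t x) * δ t x)
              / (f t x + ε * δ t x) ^ 2) * (f t x + ε * δ t x)
        + |(f' t x + ε * δ' t x) / (f t x + ε * δ t x)| ^ p * δ t x|
        ≤ p * ((2 * C) / (c / 2)) ^ (p - 1) * ((4 * C ^ 2) / ((c / 2) ^ 2)) * (2 * C)
          + ((2 * C) / (c / 2)) ^ p * C ∧
      |(|(f' t x + ε * δ' t x) / (f t x + ε * δ t x)| ^ p * (f t x + ε * δ t x))|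
        ≤ ((2 * C) / (c / 2)) ^ p * (2 * C) := fun ε hε t ht x =>
    est hp hc hC (hmin t ht x) (hC1' t ht x) (hC2' t ht x) (hC3' t ht x) (hC4' t ht x)
      (hε.le.trans hε₀1) (hε.le.trans hε₀2)
  constructor
  · exact ⟨ε₀, hε₀pos, fun ε hε t ht x =>
      lt_of_lt_of_le (by positivity) ((hEST ε hε t ht x).1)⟩
  -- measure-theoretic setup
  haveI hfin : IsFiniteMeasure (volume.restrict (Set.Ioc (0:ℝ) 1)) := by
    constructor
    rw [Measure.restrict_apply_univ]
    simp [Real.volume_Ioc]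
  set μ : Measure (ℝ × M) := (volume.restrict (Set.Ioc (0:ℝ) 1)).prod lam with hμdef
  have hμ : μ = (volume.prod lam).restrict (Set.Ioc (0:ℝ) 1 ×ˢ (Set.univ : Set M)) := by
    rw [hμdef, ← Measure.prod_restrict, Measure.restrict_univ]
  have hS : MeasurableSet (Set.Ioc (0:ℝ) 1 ×ˢ (Set.univ : Set M)) :=
    measurableSet_Ioc.prod MeasurableSet.univ
  have hsub : (Set.Ioc (0:ℝ) 1 ×ˢ (Set.univ : Set M)) ⊆ Set.Icc (0:ℝ) 1 ×ˢ (Set.univ : Set M) :=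
    Set.prod_mono Set.Ioc_subset_Icc_self subset_rfl
  have hfm : AEMeasurable (fun q : ℝ × M => f q.1 q.2) μ := by
    rw [hμ]; exact ((hf_cont.mono hsub).aestronglyMeasurable hS).aemeasurable
  have hf'm : AEMeasurable (fun q : ℝ × M => f' q.1 q.2) μ := by
    rw [hμ]; exact ((hf'_cont.mono hsub).aestronglyMeasurable hS).aemeasurable
  have hδm : AEMeasurable (fun q : ℝ × M => δ q.1 q.2) μ := by
    rw [hμ]; exact ((hδ_cont.mono hsub).aestronglyMeasurable hS).aemeasurable
  have hδ'm : AEMeasurable (fun q : ℝ × M => δ' q.1 q.2) μ := by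
    rw [hμ]; exact ((hδ'_cont.mono hsub).aestronglyMeasurable hS).aemeasurable
  have hWm : ∀ ε : ℝ, AEMeasurable (fun q : ℝ × M => f q.1 q.2 + ε * δ q.1 q.2) μ :=
    fun ε => hfm.add (hδm.const_mul ε)
  have hUm : ∀ ε : ℝ, AEMeasurable (fun q : ℝ × M => f' q.1 q.2 + ε * δ' q.1 q.2) μ :=
    fun ε => hf'm.add (hδ'm.const_mul ε)
  have hQm : ∀ ε : ℝ, AEMeasurable (fun q : ℝ × M =>
      (f' q.1 q.2 + ε * δ' q.1 q.2) / (f q.1 q.2 + ε * δ q.1 q.2)) μ :=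
    fun ε => (hUm ε).div (hWm ε)
  have habsC : Continuous (fun y : ℝ => |y| ^ p) :=
    (Real.continuous_rpow_const (by linarith)).comp continuous_abs
  have hFmeas : ∀ ε : ℝ, AEStronglyMeasurable (fun q : ℝ × M =>
      |(f' q.1 q.2 + ε * δ' q.1 q.2) / (f q.1 q.2 + ε * δ q.1 q.2)| ^ p
        * (f q.1 q.2 + ε * δ q.1 q.2)) μ := fun ε =>
    (((habsC.measurable.comp_aemeasurable (hQm ε)).mul (hWm ε))).aestronglyMeasurable
  have hF'meas0 : AEStronglyMeasurable (fun q : ℝ × M =>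
      p * (|(f' q.1 q.2 + (0:ℝ) * δ' q.1 q.2) / (f q.1 q.2 + (0:ℝ) * δ q.1 q.2)| ^ (p - 2)
          * ((f' q.1 q.2 + (0:ℝ) * δ' q.1 q.2) / (f q.1 q.2 + (0:ℝ) * δ q.1 q.2)))
        * ((δ' q.1 q.2 * (f q.1 q.2 + (0:ℝ) * δ q.1 q.2)
            - (f' q.1 q.2 + (0:ℝ) * δ' q.1 q.2) * δ q.1 q.2)
              / (f q.1 q.2 + (0:ℝ) * δ q.1 q.2) ^ 2)
        * (f q.1 q.2 + (0:ℝ) * δ q.1 q.2)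
      + |(f' q.1 q.2 + (0:ℝ) * δ' q.1 q.2) / (f q.1 q.2 + (0:ℝ) * δ q.1 q.2)| ^ p
          * δ q.1 q.2) μ := by
    have h1 : AEMeasurable (fun q : ℝ × M =>
        |(f' q.1 q.2 + (0:ℝ) * δ' q.1 q.2) / (f q.1 q.2 + (0:ℝ) * δ q.1 q.2)| ^ (p - 2)
          * ((f' q.1 q.2 + (0:ℝ) * δ' q.1 q.2) / (f q.1 q.2 + (0:ℝ) * δ q.1 q.2))) μ :=
      (cont_aux hp).measurable.comp_aemeasurable (hQm 0)
    have h2 : AEMeasurable (fun q : ℝ × M =>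
        (δ' q.1 q.2 * (f q.1 q.2 + (0:ℝ) * δ q.1 q.2)
            - (f' q.1 q.2 + (0:ℝ) * δ' q.1 q.2) * δ q.1 q.2)
          / (f q.1 q.2 + (0:ℝ) * δ q.1 q.2) ^ 2) μ :=
      ((hδ'm.mul (hWm 0)).sub ((hUm 0).mul hδm)).div ((hWm 0).pow_const 2)
    have h3 : AEMeasurable (fun q : ℝ × M =>
        |(f' q.1 q.2 + (0:ℝ) * δ' q.1 q.2) / (f q.1 q.2 + (0:ℝ) * δ q.1 q.2)| ^ p) μ :=
      habsC.measurable.comp_aemeasurable (hQm 0)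
    exact ((((aemeasurable_const.mul h1).mul h2).mul (hWm 0)).add
      (h3.mul hδm)).aestronglyMeasurable
  have hFint : ∀ ε ∈ Metric.ball (0:ℝ) ε₀, Integrable (fun q : ℝ × M =>
      |(f' q.1 q.2 + ε * δ' q.1 q.2) / (f q.1 q.2 + ε * δ q.1 q.2)| ^ p
        * (f q.1 q.2 + ε * δ q.1 q.2)) μ := by
    intro ε hε
    have hεn : |ε| < ε₀ := by simpa [Real.norm_eq_abs] using mem_ball_zero_iff.1 hε
    refine Integrable.mono' (integrable_const (((2 * C) / (c / 2)) ^ p * (2 * C)))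
      (hFmeas ε) ?_
    rw [hμ]
    refine (ae_restrict_iff' hS).2 (Filter.Eventually.of_forall fun q hq => ?_)
    have ht : q.1 ∈ Set.Icc (0:ℝ) 1 := Set.Ioc_subset_Icc_self hq.1
    rw [Real.norm_eq_abs]
    exact (hEST ε hεn q.1 ht q.2).2.2
  have h_bound : ∀ᵐ q ∂μ, ∀ ε ∈ Metric.ball (0:ℝ) ε₀,
      ‖p * (|(f' q.1 q.2 + ε * δ' q.1 q.2) / (f q.1 q.2 + ε * δ q.1 q.2)| ^ (p - 2)
            * ((f' q.1 q.2 + ε * δ' q.1 q.2) / (f q.1 q.2 + ε * δ q.1 q.2)))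
          * ((δ' q.1 q.2 * (f q.1 q.2 + ε * δ q.1 q.2)
              - (f' q.1 q.2 + ε * δ' q.1 q.2) * δ q.1 q.2)
                / (f q.1 q.2 + ε * δ q.1 q.2) ^ 2)
          * (f q.1 q.2 + ε * δ q.1 q.2)
        + |(f' q.1 q.2 + ε * δ' q.1 q.2) / (f q.1 q.2 + ε * δ q.1 q.2)| ^ p * δ q.1 q.2‖
      ≤ p * ((2 * C) / (c / 2)) ^ (p - 1) * ((4 * C ^ 2) / ((c / 2) ^ 2)) * (2 * C)
        + ((2 * C) / (c / 2)) ^ p * C := by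
    rw [hμ]
    refine (ae_restrict_iff' hS).2 (Filter.Eventually.of_forall fun q hq => ?_)
    intro ε hε
    have hεn : |ε| < ε₀ := by simpa [Real.norm_eq_abs] using mem_ball_zero_iff.1 hε
    have ht : q.1 ∈ Set.Icc (0:ℝ) 1 := Set.Ioc_subset_Icc_self hq.1
    rw [Real.norm_eq_abs]
    exact (hEST ε hεn q.1 ht q.2).2.1
  have h_diff : ∀ᵐ q ∂μ, ∀ ε ∈ Metric.ball (0:ℝ) ε₀,
      HasDerivAt (fun e : ℝ =>
        |(f' q.1 q.2 + e * δ' q.1 q.2) / (f q.1 q.2 + e * δ q.1 q.2)| ^ p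
          * (f q.1 q.2 + e * δ q.1 q.2))
        (p * (|(f' q.1 q.2 + ε * δ' q.1 q.2) / (f q.1 q.2 + ε * δ q.1 q.2)| ^ (p - 2)
            * ((f' q.1 q.2 + ε * δ' q.1 q.2) / (f q.1 q.2 + ε * δ q.1 q.2)))
          * ((δ' q.1 q.2 * (f q.1 q.2 + ε * δ q.1 q.2)
              - (f' q.1 q.2 + ε * δ' q.1 q.2) * δ q.1 q.2)
                / (f q.1 q.2 + ε * δ q.1 q.2) ^ 2)
          * (f q.1 q.2 + ε * δ q.1 q.2)
        + |(f' q.1 q.2 + ε * δ' q.1 q.2) / (f q.1 q.2 + ε * δ q.1 q.2)| ^ p * δ q.1 q.2) ε := by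
    rw [hμ]
    refine (ae_restrict_iff' hS).2 (Filter.Eventually.of_forall fun q hq => ?_)
    intro ε hε
    have hεn : |ε| < ε₀ := by simpa [Real.norm_eq_abs] using mem_ball_zero_iff.1 hε
    have ht : q.1 ∈ Set.Icc (0:ℝ) 1 := Set.Ioc_subset_Icc_self hq.1
    have hw : c / 2 ≤ f q.1 q.2 + ε * δ q.1 q.2 := (hEST ε hεn q.1 ht q.2).1
    exact pt_deriv hp (f' q.1 q.2) (f q.1 q.2) (δ' q.1 q.2) (δ q.1 q.2) ε
      (lt_of_lt_of_le (by positivity) hw).ne'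
  obtain ⟨hF'int, hderiv⟩ :=
    hasDerivAt_integral_of_dominated_loc_of_deriv_le (μ := μ) (x₀ := (0:ℝ))
      (Metric.ball_mem_nhds (0:ℝ) hε₀pos) (Filter.Eventually.of_forall hFmeas)
      (hFint 0 (Metric.mem_ball_self hε₀pos)) hF'meas0 h_bound (integrable_const _) h_diff
  have hd2 := HasDerivAt.const_mul (1 / p : ℝ) hderiv
  have heq : (fun ε : ℝ => (1 / p) * ∫ t in (0:ℝ)..1, ∫ x,
        |(f' t x + ε * δ' t x) / (f t x + ε * δ t x)| ^ p * (f t x + ε * δ t x) ∂lam)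
      =ᶠ[nhds (0:ℝ)] (fun ε : ℝ => (1 / p) * ∫ q, (fun q : ℝ × M =>
        |(f' q.1 q.2 + ε * δ' q.1 q.2) / (f q.1 q.2 + ε * δ q.1 q.2)| ^ p
          * (f q.1 q.2 + ε * δ q.1 q.2)) q ∂μ) := by
    filter_upwards [Metric.ball_mem_nhds (0:ℝ) hε₀pos] with ε hε
    have hi := hFint ε hε
    rw [intervalIntegral.integral_of_le zero_le_one]
    congr 1
    exact integral_integral hi
  have hfinal := hd2.congr_of_eventuallyEq heq
  have hswap : (∫ t in Set.Ioc (0:ℝ) 1, ∫ x,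
      (p * (|(f' t x + (0:ℝ) * δ' t x) / (f t x + (0:ℝ) * δ t x)| ^ (p - 2)
          * ((f' t x + (0:ℝ) * δ' t x) / (f t x + (0:ℝ) * δ t x)))
        * ((δ' t x * (f t x + (0:ℝ) * δ t x) - (f' t x + (0:ℝ) * δ' t x) * δ t x)
              / (f t x + (0:ℝ) * δ t x) ^ 2)
        * (f t x + (0:ℝ) * δ t x)
      + |(f' t x + (0:ℝ) * δ' t x) / (f t x + (0:ℝ) * δ t x)| ^ p * δ t x) ∂lam)
      = ∫ q : ℝ × M,
      (p * (|(f' q.1 q.2 + (0:ℝ) * δ' q.1 q.2) / (f q.1 q.2 + (0:ℝ) * δ q.1 q.2)| ^ (p - 2)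
          * ((f' q.1 q.2 + (0:ℝ) * δ' q.1 q.2) / (f q.1 q.2 + (0:ℝ) * δ q.1 q.2)))
        * ((δ' q.1 q.2 * (f q.1 q.2 + (0:ℝ) * δ q.1 q.2)
            - (f' q.1 q.2 + (0:ℝ) * δ' q.1 q.2) * δ q.1 q.2)
              / (f q.1 q.2 + (0:ℝ) * δ q.1 q.2) ^ 2)
        * (f q.1 q.2 + (0:ℝ) * δ q.1 q.2)
      + |(f' q.1 q.2 + (0:ℝ) * δ' q.1 q.2) / (f q.1 q.2 + (0:ℝ) * δ q.1 q.2)| ^ p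
          * δ q.1 q.2) ∂μ := integral_integral hF'int
  convert hfinal using 1
  case e'_4 => rfl
  case e'_5 => rfl
  show _ = (1 / p) * ∫ q : ℝ × M,
      (p * (|(f' q.1 q.2 + (0:ℝ) * δ' q.1 q.2) / (f q.1 q.2 + (0:ℝ) * δ q.1 q.2)| ^ (p - 2)
          * ((f' q.1 q.2 + (0:ℝ) * δ' q.1 q.2) / (f q.1 q.2 + (0:ℝ) * δ q.1 q.2)))
        * ((δ' q.1 q.2 * (f q.1 q.2 + (0:ℝ) * δ q.1 q.2)
            - (f' q.1 q.2 + (0:ℝ) * δ' q.1 q.2) * δ q.1 q.2)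
              / (f q.1 q.2 + (0:ℝ) * δ q.1 q.2) ^ 2)
        * (f q.1 q.2 + (0:ℝ) * δ q.1 q.2)
      + |(f' q.1 q.2 + (0:ℝ) * δ' q.1 q.2) / (f q.1 q.2 + (0:ℝ) * δ q.1 q.2)| ^ p
          * δ q.1 q.2) ∂μ
  rw [← hswap]
  rw [intervalIntegral.integral_of_le zero_le_one, ← integral_const_mul]
  refine setIntegral_congr_fun measurableSet_Ioc (fun t ht => ?_)
  rw [← integral_const_mul]
  refine integral_congr_ae (Filter.Eventually.of_forall fun x => ?_)
  have hvpos := hf_pos t (Set.Ioc_subset_Icc_self ht) x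
  have hv := pt_val hp (f' t x) (f t x) (δ' t x) (δ t x) hvpos.ne'
  simp only [zero_mul, add_zero]
  exact hv.symm
end

section
/- Let T ∈ (0, ∞] and let τ : [0, T) → ℝ be twice differentiable with τ(0) = 0 and τ′(0) = 1. Suppose there is a function k : [0, T) → ℝ with k(t) ≥ 0 for all t, such that k(t) = 0 if and only if τ(t) = 0, and τ″(t)·τ(t) = 2·k(t)·τ′(t)² for all t ∈ [0, T). Then τ′(t) ≥ 1 for all t ∈ [0, T) and τ(t) > t for all t ∈ (0, T). Consequently, if M is a compact topological space and ξ : M → ℝ is continuous with m := −min_M ξ > 0, then every t ∈ (0, T) for which 1 + τ(t)·ξ(x) > 0 for all x ∈ M satisfies t < 1/m. -/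
open scoped ENNReal
open Set Filter Topology

lemma stmt_16_core (S : Set ℝ) (h0S : (0:ℝ) ∈ S)
    (hSnn : ∀ t ∈ S, 0 ≤ t)
    (hIcc : ∀ t ∈ S, Set.Icc 0 t ⊆ S)
    (hnhds : ∀ t ∈ S, 0 < t → S ∈ 𝓝 t)
    (τ τ' τ'' k : ℝ → ℝ)
    (hd1 : ∀ t ∈ S, HasDerivWithinAt τ (τ' t) S t)
    (hd2 : ∀ t ∈ S, HasDerivWithinAt τ' (τ'' t) S t)
    (h0 : τ 0 = 0) (h1 : τ' 0 = 1)
    (hk0 : ∀ t ∈ S, 0 ≤ k t)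
    (hkz : ∀ t ∈ S, (k t = 0 ↔ τ t = 0))
    (hODE : ∀ t ∈ S, τ'' t * τ t = 2 * k t * (τ' t) ^ 2) :
    (∀ t ∈ S, 1 ≤ τ' t) ∧ (∀ t ∈ S, 0 < t → t < τ t) := by
  have hAt1 : ∀ t ∈ S, 0 < t → HasDerivAt τ (τ' t) t := fun t ht h0t =>
    (hd1 t ht).hasDerivAt (hnhds t ht h0t)
  have hAt2 : ∀ t ∈ S, 0 < t → HasDerivAt τ' (τ'' t) t := fun t ht h0t =>
    (hd2 t ht).hasDerivAt (hnhds t ht h0t)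
  have hcτ : ContinuousOn τ S := fun t ht => (hd1 t ht).continuousWithinAt
  have hcτ' : ContinuousOn τ' S := fun t ht => (hd2 t ht).continuousWithinAt
  -- monotonicity of τ' on [0,b] when τ > 0 on (0,b)
  have mono_step : ∀ b ∈ S, 0 < b → (∀ s ∈ Set.Ioo 0 b, 0 < τ s) →
      MonotoneOn τ' (Set.Icc 0 b) := by
    intro b hb hb0 hposb
    have hsub : Set.Icc 0 b ⊆ S := hIcc b hb
    apply monotoneOn_of_deriv_nonneg (convex_Icc 0 b) (hcτ'.mono hsub)
    · intro x hx
      rw [interior_Icc] at hx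
      exact ((hAt2 x (hsub ⟨hx.1.le, hx.2.le⟩) hx.1).differentiableAt).differentiableWithinAt
    · intro x hx
      rw [interior_Icc] at hx
      have hxS : x ∈ S := hsub ⟨hx.1.le, hx.2.le⟩
      rw [(hAt2 x hxS hx.1).deriv]
      have hO := hODE x hxS
      have hk := hk0 x hxS
      nlinarith [hposb x hx, sq_nonneg (τ' x)]
  -- lower bound via mean value theorem
  have lb_step : ∀ a b C : ℝ, 0 ≤ a → a ∈ S → b ∈ S → a ≤ b →
      (∀ x ∈ Set.Ioo a b, C ≤ τ' x) → C * (b - a) ≤ τ b - τ a := by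
    intro a b C ha0 ha hb hab hC
    have hsub : Set.Icc a b ⊆ S := fun x hx => hIcc b hb ⟨ha0.trans hx.1, hx.2⟩
    refine Convex.mul_sub_le_image_sub_of_le_deriv (convex_Icc a b) (hcτ.mono hsub) ?_ ?_
      a (Set.left_mem_Icc.2 hab) b (Set.right_mem_Icc.2 hab) hab
    · intro x hx; rw [interior_Icc] at hx
      exact ((hAt1 x (hsub ⟨hx.1.le, hx.2.le⟩)
        (ha0.trans_lt hx.1)).differentiableAt).differentiableWithinAt
    · intro x hx; rw [interior_Icc] at hx
      rw [(hAt1 x (hsub ⟨hx.1.le, hx.2.le⟩) (ha0.trans_lt hx.1)).deriv]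
      exact hC x hx
  -- near zero, τ t > t/2
  have heps : ∃ ε > 0, ∀ t ∈ S, 0 < t → t < ε → t / 2 < τ t := by
    have h := hasDerivWithinAt_iff_tendsto_slope.1 (hd1 0 h0S)
    rw [h1] at h
    have hev : ∀ᶠ t in 𝓝[S \ {0}] 0, (1/2 : ℝ) < slope τ 0 t :=
      h.eventually (eventually_gt_nhds (by norm_num))
    rw [eventually_nhdsWithin_iff, Metric.eventually_nhds_iff] at hev
    obtain ⟨ε, hε, hball⟩ := hev
    refine ⟨ε, hε, fun t ht h0t htε => ?_⟩
    have hdist : dist t (0:ℝ) < ε := by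
      rw [Real.dist_eq, sub_zero, abs_of_pos h0t]; exact htε
    have hmem : t ∈ S \ {0} := ⟨ht, by simp [h0t.ne']⟩
    have hs := hball hdist hmem
    rw [slope_def_field, h0, sub_zero, sub_zero, lt_div_iff₀ h0t] at hs
    linarith
  obtain ⟨ε, hε, hsmall⟩ := heps
  -- positivity of τ on S ∩ (0,∞)
  have hpos : ∀ t ∈ S, 0 < t → 0 < τ t := by
    by_contra hcon
    push_neg at hcon
    obtain ⟨t₀, ht₀S, ht₀, hτt₀⟩ := hcon
    have hεt₀ : ε ≤ t₀ := by
      by_contra hh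
      push_neg at hh
      have := hsmall t₀ ht₀S ht₀ hh
      linarith
    set Z := Set.Icc ε t₀ ∩ τ ⁻¹' Set.Iic 0 with hZdef
    have hZsub : Set.Icc ε t₀ ⊆ S := fun x hx => hIcc t₀ ht₀S ⟨hε.le.trans hx.1, hx.2⟩
    have hZcl : IsClosed Z :=
      (hcτ.mono hZsub).preimage_isClosed_of_isClosed isClosed_Icc isClosed_Iic
    have hZne : t₀ ∈ Z := ⟨⟨hεt₀, le_refl _⟩, hτt₀⟩
    have hZbdd : BddBelow Z := ⟨ε, fun x hx => hx.1.1⟩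
    set c := sInf Z with hcdef
    have hcZ : c ∈ Z := hZcl.csInf_mem ⟨t₀, hZne⟩ hZbdd
    have hεc : ε ≤ c := hcZ.1.1
    have hcS : c ∈ S := hZsub hcZ.1
    have hc0 : 0 < c := hε.trans_le hεc
    have hposc : ∀ s ∈ Set.Ioo 0 c, 0 < τ s := by
      intro s hs
      have hsS : s ∈ S := hIcc c hcS ⟨hs.1.le, hs.2.le⟩
      rcases lt_or_ge s ε with hlt | hge
      · have := hsmall s hsS hs.1 hlt; linarith [hs.1]
      · by_contra hns
        push_neg at hns
        have hsZ : s ∈ Z := ⟨⟨hge, hs.2.le.trans hcZ.1.2⟩, hns⟩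
        exact absurd (csInf_le hZbdd hsZ) (not_le.2 hs.2)
    have hmono := mono_step c hcS hc0 hposc
    have hτ'ge : ∀ x ∈ Set.Ioo 0 c, (1:ℝ) ≤ τ' x := by
      intro x hx
      have := hmono (Set.left_mem_Icc.2 hc0.le) ⟨hx.1.le, hx.2.le⟩ hx.1.le
      rwa [h1] at this
    have hlb := lb_step 0 c 1 le_rfl h0S hcS hc0.le hτ'ge
    rw [h0] at hlb
    have hcle : τ c ≤ 0 := hcZ.2
    linarith
  -- τ' ≥ 1 on S
  have hge1 : ∀ t ∈ S, 1 ≤ τ' t := by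
    intro t ht
    rcases (hSnn t ht).eq_or_lt with h | h
    · rw [← h, h1]
    · have hmono := mono_step t ht h
        (fun s hs => hpos s (hIcc t ht ⟨hs.1.le, hs.2.le⟩) hs.1)
      have := hmono (Set.left_mem_Icc.2 h.le) (Set.right_mem_Icc.2 h.le) h.le
      rwa [h1] at this
  -- τ t ≥ t on S
  have hge : ∀ t ∈ S, t ≤ τ t := by
    intro t ht
    have := lb_step 0 t 1 le_rfl h0S ht (hSnn t ht)
      (fun x hx => hge1 x (hIcc t ht ⟨hx.1.le, hx.2.le⟩))
    rw [h0] at this; linarith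
  refine ⟨hge1, fun t ht h0t => ?_⟩
  have hsub : Set.Icc 0 t ⊆ S := hIcc t ht
  -- strict monotonicity of τ' on [t/2, t]
  have hsm : StrictMonoOn τ' (Set.Icc (t/2) t) := by
    apply strictMonoOn_of_deriv_pos (convex_Icc _ _)
      (hcτ'.mono (fun x hx => hsub ⟨by linarith [hx.1], hx.2⟩))
    intro x hx
    rw [interior_Icc] at hx
    have hx0 : 0 < x := lt_trans (by linarith) hx.1
    have hxS : x ∈ S := hsub ⟨hx0.le, hx.2.le⟩
    rw [(hAt2 x hxS hx0).deriv]
    have hτx : 0 < τ x := hpos x hxS hx0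
    have hkx : 0 < k x :=
      lt_of_le_of_ne (hk0 x hxS) (fun h => hτx.ne' ((hkz x hxS).1 h.symm))
    have hODEx := hODE x hxS
    have hτ'x := hge1 x hxS
    have ht'p : 0 < τ' x := lt_of_lt_of_le one_pos hτ'x
    have hp : 0 < 2 * k x * τ' x ^ 2 := mul_pos (mul_pos two_pos hkx) (pow_pos ht'p 2)
    nlinarith [hp, hODEx, hτx]
  have hc1 : (1:ℝ) < τ' (3*t/4) := by
    have h2 := hsm (⟨le_refl _, by linarith⟩ : t/2 ∈ Set.Icc (t/2) t)
      (⟨by linarith, by linarith⟩ : 3*t/4 ∈ Set.Icc (t/2) t) (by linarith)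
    have := hge1 (t/2) (hsub ⟨by linarith, by linarith⟩)
    linarith
  have hcS : 3*t/4 ∈ S := hsub ⟨by linarith, by linarith⟩
  have hmono := mono_step t ht h0t
    (fun s hs => hpos s (hsub ⟨hs.1.le, hs.2.le⟩) hs.1)
  have hlb := lb_step (3*t/4) t (τ' (3*t/4)) (by linarith) hcS ht (by linarith)
    (fun x hx => hmono ⟨by linarith, by linarith⟩ ⟨by linarith [hx.1], hx.2.le⟩ hx.1.le)
  have hτc := hge (3*t/4) hcS
  nlinarith [hc1, hlb, hτc]

/-- Growth of solutions of the reparametrization ODE `τ″·τ = 2·k·(τ′)²` with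
`k ≥ 0` vanishing exactly where `τ` does, `τ(0) = 0`, `τ′(0) = 1`: one gets `τ′ ≥ 1` and
`τ(t) > t`. Consequently, geodesics leave the positive part of the sphere in time `< 1/m`
where `m = −min ξ > 0`. -/
theorem stmt_16 (T : ℝ≥0∞) (hT : 0 < T)
    (S : Set ℝ) (hS : S = {t : ℝ | 0 ≤ t ∧ ENNReal.ofReal t < T})
    (τ τ' τ'' k : ℝ → ℝ)
    (hd1 : ∀ t ∈ S, HasDerivWithinAt τ (τ' t) S t)
    (hd2 : ∀ t ∈ S, HasDerivWithinAt τ' (τ'' t) S t)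
    (h0 : τ 0 = 0) (h1 : τ' 0 = 1)
    (hk0 : ∀ t ∈ S, 0 ≤ k t)
    (hkz : ∀ t ∈ S, (k t = 0 ↔ τ t = 0))
    (hODE : ∀ t ∈ S, τ'' t * τ t = 2 * k t * (τ' t) ^ 2) :
    (∀ t ∈ S, 1 ≤ τ' t) ∧
    (∀ t ∈ S, 0 < t → t < τ t) ∧
    (∀ (M : Type) [TopologicalSpace M] [CompactSpace M] (ξ : M → ℝ), Continuous ξ →
      ∀ m : ℝ, 0 < m → IsGLB (Set.range ξ) (-m) →
        ∀ t ∈ S, 0 < t → (∀ x, 0 < 1 + τ t * ξ x) → t < 1 / m) := by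
  have hSnn : ∀ t ∈ S, 0 ≤ t := by intro t ht; rw [hS] at ht; exact ht.1
  have h0S : (0:ℝ) ∈ S := by rw [hS]; exact ⟨le_refl _, by simpa using hT⟩
  have hIcc : ∀ t ∈ S, Set.Icc 0 t ⊆ S := by
    intro t ht s hs
    rw [hS] at ht ⊢
    exact ⟨hs.1, lt_of_le_of_lt (ENNReal.ofReal_le_ofReal hs.2) ht.2⟩
  have hnhds : ∀ t ∈ S, 0 < t → S ∈ 𝓝 t := by
    intro t ht h0t
    rw [hS] at ht
    rcases eq_top_or_lt_top T with htop | hlt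
    · have hsub : Set.Ioi (0:ℝ) ⊆ S := by
        intro s hs; rw [hS]; exact ⟨le_of_lt hs, htop ▸ ENNReal.ofReal_lt_top⟩
      exact Filter.mem_of_superset (Ioi_mem_nhds h0t) hsub
    · have htT : t < T.toReal := (ENNReal.ofReal_lt_iff_lt_toReal ht.1 hlt.ne).1 ht.2
      have hsub : Set.Ioo (0:ℝ) T.toReal ⊆ S := by
        intro s hs; rw [hS]
        exact ⟨hs.1.le, (ENNReal.ofReal_lt_iff_lt_toReal hs.1.le hlt.ne).2 hs.2⟩
      exact Filter.mem_of_superset (Ioo_mem_nhds h0t htT) hsub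
  obtain ⟨hge1, hgt⟩ :=
    stmt_16_core S h0S hSnn hIcc hnhds τ τ' τ'' k hd1 hd2 h0 h1 hk0 hkz hODE
  refine ⟨hge1, hgt, ?_⟩
  intro M _ _ ξ hξ m hm hglb t ht h0t hposx
  have hne : Nonempty M := by
    by_contra hempty
    rw [not_nonempty_iff] at hempty
    have hr : Set.range ξ = ∅ := Set.range_eq_empty ξ
    rw [hr] at hglb
    have h1' : (-m + 1) ≤ -m := hglb.2 (fun x hx => absurd hx (Set.notMem_empty x))
    linarith
  haveI := hne
  obtain ⟨x₀, -, hx₀'⟩ :=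
    isCompact_univ.exists_isMinOn Set.univ_nonempty hξ.continuousOn
  have hx₀ : ∀ y, ξ x₀ ≤ ξ y := fun y => hx₀' (Set.mem_univ y)
  have hmin : ξ x₀ = -m := by
    refine le_antisymm (hglb.2 ?_) (hglb.1 ⟨x₀, rfl⟩)
    rintro y ⟨x, rfl⟩
    exact hx₀ x
  have h := hposx x₀
  rw [hmin] at h
  have hτ : τ t < 1 / m := by
    rw [lt_div_iff₀ hm]; nlinarith
  exact lt_trans (hgt t ht h0t) hτ
end
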